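/- arXiv:2007.12754 — 10 statements merged into one kernel-verified Lean document; each statement's English description precedes it below -/
import Mathlib

section
/- Let A ∈ ℝ^{n×n} be SPD, M ∈ ℝ^{n×n} nonsingular with M + Mᵀ − A SPD, P ∈ ℝ^{n×n_c} of full column rank, A_c := PᵀAP, and B_c ∈ ℝ^{n_c×n_c} SPD. Define M̄ := M(M+Mᵀ−A)^{-1}Mᵀ, M̃ := Mᵀ(M+Mᵀ−A)^{-1}M, and let B_ITG be the SPD matrix defined by B_ITG^{-1} = M̄^{-1} + (I−M^{-T}A)P B_c^{-1} Pᵀ(I−AM^{-1}). Then B_ITG = A + (I−AM^{-T}) M̃ (I − P(PᵀM̃P + B_c − A_c)^{-1} Pᵀ M̃)(I − M^{-1}A). -/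
open Matrix

theorem stmt_0 {n nc : ℕ} (hnc : nc < n)
    (A M : Matrix (Fin n) (Fin n) ℝ)
    (P : Matrix (Fin n) (Fin nc) ℝ)
    (Bc : Matrix (Fin nc) (Fin nc) ℝ)
    (hA : A.PosDef) (hM : IsUnit M.det)
    (hMMA : (M + Mᵀ - A).PosDef)
    (hP : P.rank = nc)
    (hBc : Bc.PosDef)
    (Mbar Mtil : Matrix (Fin n) (Fin n) ℝ)
    (hMbar : Mbar = M * (M + Mᵀ - A)⁻¹ * Mᵀ)
    (hMtil : Mtil = Mᵀ * (M + Mᵀ - A)⁻¹ * M)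
    (Ac : Matrix (Fin nc) (Fin nc) ℝ) (hAc : Ac = Pᵀ * A * P)
    (BITG : Matrix (Fin n) (Fin n) ℝ) (hBITG : BITG.PosDef)
    (hBITGinv : BITG⁻¹ = Mbar⁻¹ + (1 - Mᵀ⁻¹ * A) * P * Bc⁻¹ * Pᵀ * (1 - A * M⁻¹)) :
    BITG = A + (1 - A * Mᵀ⁻¹) * Mtil *
      (1 - P * (Pᵀ * Mtil * P + Bc - Ac)⁻¹ * Pᵀ * Mtil) * (1 - M⁻¹ * A) := by
  have hAt : Aᵀ = A := by
    rw [← conjTranspose_eq_transpose_of_trivial]; exact hA.1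
  -- abstract atoms
  set Mt := Mᵀ with hMtdef
  set N := M⁻¹ with hNdef
  set Nt := Mt⁻¹ with hNtdef
  set X := M + Mt - A with hXdef
  set Y := X⁻¹ with hYdef
  set C := Bc⁻¹ with hCdef
  set Q := Mt - A with hQdef
  set R0 := M - A with hR0def
  -- basic unit facts
  have hXd : IsUnit X.det := isUnit_iff_ne_zero.mpr hMMA.det_pos.ne'
  have hXY : X * Y = 1 := by rw [hYdef]; exact mul_nonsing_inv _ hXd
  have hYX : Y * X = 1 := by rw [hYdef]; exact nonsing_inv_mul _ hXd
  have hMN : M * N = 1 := by rw [hNdef]; exact mul_nonsing_inv _ hM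
  have hNM : N * M = 1 := by rw [hNdef]; exact nonsing_inv_mul _ hM
  have hMtd : IsUnit Mt.det := by rw [hMtdef, det_transpose]; exact hM
  have hMtNt : Mt * Nt = 1 := by rw [hNtdef]; exact mul_nonsing_inv _ hMtd
  have hNtMt : Nt * Mt = 1 := by rw [hNtdef]; exact nonsing_inv_mul _ hMtd
  have hBcd : IsUnit Bc.det := isUnit_iff_ne_zero.mpr hBc.det_pos.ne'
  have hBC : Bc * C = 1 := by rw [hCdef]; exact mul_nonsing_inv _ hBcd
  have hCB : C * Bc = 1 := by rw [hCdef]; exact nonsing_inv_mul _ hBcd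
  -- cancel lemmas
  have cXY : ∀ Z : Matrix (Fin n) (Fin n) ℝ, X * (Y * Z) = Z := fun Z => by
    rw [← mul_assoc, hXY, one_mul]
  have cYX : ∀ Z : Matrix (Fin n) (Fin n) ℝ, Y * (X * Z) = Z := fun Z => by
    rw [← mul_assoc, hYX, one_mul]
  have cMN : ∀ Z : Matrix (Fin n) (Fin n) ℝ, M * (N * Z) = Z := fun Z => by
    rw [← mul_assoc, hMN, one_mul]
  have cNM : ∀ Z : Matrix (Fin n) (Fin n) ℝ, N * (M * Z) = Z := fun Z => by
    rw [← mul_assoc, hNM, one_mul]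
  have cMtNt : ∀ Z : Matrix (Fin n) (Fin n) ℝ, Mt * (Nt * Z) = Z := fun Z => by
    rw [← mul_assoc, hMtNt, one_mul]
  have cNtMt : ∀ Z : Matrix (Fin n) (Fin n) ℝ, Nt * (Mt * Z) = Z := fun Z => by
    rw [← mul_assoc, hNtMt, one_mul]
  -- normalized definitions
  have hMbar' : Mbar = M * (Y * Mt) := by rw [hMbar, mul_assoc]
  have hMtil' : Mtil = Mt * (Y * M) := by rw [hMtil, mul_assoc]
  -- decompositions
  have eM : M = X - Q := by rw [hXdef, hQdef]; abel
  have eMt : Mt = X - R0 := by rw [hXdef, hR0def]; abel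
  have eQ : Q = X - M := by rw [hQdef, hXdef]; abel
  have eR0 : R0 = X - Mt := by rw [hR0def, hXdef]; abel
  -- key commutation identities
  have I1 : M * (Y * Q) = Q * (Y * M) := by
    rw [eM]
    simp only [sub_mul, mul_sub, mul_one, one_mul, cXY, cYX, hXY, hYX, mul_assoc]
  have I2 : R0 * (Y * Mt) = Mt * (Y * R0) := by
    rw [eMt]
    simp only [sub_mul, mul_sub, mul_one, one_mul, cXY, cYX, hXY, hYX, mul_assoc]
  have I3 : Q * (Y * R0) = M * (Y * Mt) - A := by
    rw [eQ, eR0]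
    simp only [sub_mul, mul_sub, mul_one, one_mul, cXY, cYX, hXY, hYX]
    rw [hXdef]; abel
  have I4 : R0 * (Y * Q) = Mtil - A := by
    rw [eR0, eQ, hMtil']
    simp only [sub_mul, mul_sub, mul_one, one_mul, cXY, cYX, hXY, hYX]
    rw [hXdef]; abel
  -- inverse of Mbar
  have I5 : Mbar⁻¹ = Nt * (X * N) := by
    refine inv_eq_right_inv ?_
    rw [hMbar']
    simp only [mul_assoc]
    rw [cMtNt, cYX, hMN]
  -- smoother identities
  have I6 : (1 - A * Nt) * Mtil = M * (Y * Q) := by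
    rw [hMtil', I1, hQdef]
    simp only [sub_mul, mul_sub, one_mul, mul_assoc, cNtMt]
  have I7 : Mtil * (1 - N * A) = Mt * (Y * R0) := by
    rw [hMtil', hR0def]
    simp only [sub_mul, mul_sub, mul_one, mul_assoc, cMN]
  have I8 : (1 - A * N) * Mbar = Mt * (Y * R0) := by
    rw [hMbar', ← I2, hR0def]
    simp only [sub_mul, mul_sub, one_mul, mul_assoc, cNM]
  have I9 : (Nt * (X * N)) * (M * (Y * Q)) = 1 - Nt * A := by
    simp only [mul_assoc]
    rw [cNM, cXY, hQdef, mul_sub Nt Mt A, hNtMt]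
  have I10 : (1 - A * N) * (M * (Y * Q)) = Mtil - A := by
    rw [← I4, hR0def]
    simp only [sub_mul, mul_sub, one_mul, mul_assoc, cNM]
  -- positive definiteness of the coarse matrix S
  have hSpd : (Pᵀ * Mtil * P + Bc - Ac).PosDef := by
    have hsplit : Pᵀ * Mtil * P + Bc - Ac = Pᵀ * (Mtil - A) * P + Bc := by
      rw [hAc, Matrix.mul_sub, Matrix.sub_mul]; abel
    have hQt : Qᵀ = R0 := by
      rw [hQdef, hR0def, transpose_sub, hMtdef, transpose_transpose, hAt]
    have hform : Pᵀ * (Mtil - A) * P = (Q * P)ᵀ * Y * (Q * P) := by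
      rw [← I4, transpose_mul, hQt]
      simp only [Matrix.mul_assoc]
    have hpsd : (Pᵀ * (Mtil - A) * P).PosSemidef := by
      rw [hform]
      have h1 : Y.PosDef := by rw [hYdef]; exact hMMA.inv
      have h2 := h1.posSemidef.conjTranspose_mul_mul_same (Q * P)
      rwa [conjTranspose_eq_transpose_of_trivial] at h2
    rw [hsplit]
    exact Matrix.PosDef.posSemidef_add hpsd hBc
  set S := Pᵀ * Mtil * P + Bc - Ac with hSdef
  set T := S⁻¹ with hTdef
  have hSd : IsUnit S.det := isUnit_iff_ne_zero.mpr hSpd.det_pos.ne'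
  have hST : S * T = 1 := by rw [hTdef]; exact mul_nonsing_inv _ hSd
  have cST : ∀ Z : Matrix (Fin nc) (Fin n) ℝ, S * (T * Z) = Z := fun Z => by
    rw [← Matrix.mul_assoc, hST, Matrix.one_mul]
  have cCB' : ∀ Z : Matrix (Fin nc) (Fin n) ℝ, C * (Bc * Z) = Z := fun Z => by
    rw [← Matrix.mul_assoc, hCB, Matrix.one_mul]
  have cCS : ∀ Z : Matrix (Fin nc) (Fin n) ℝ, C * (S * (T * Z)) = C * Z := fun Z => by
    rw [cST]
  have I11 : Pᵀ * (Mtil - A) * P = S - Bc := by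
    rw [hSdef, hAc, Matrix.mul_sub, Matrix.sub_mul]; abel
  -- an auxiliary product identity
  have I12 : M * (Y * Q) * (1 - N * A) = Mbar - A := by
    calc M * (Y * Q) * (1 - N * A) = Q * (Y * M) * (1 - N * A) := by rw [I1]
      _ = Q * (Y * R0) := by
          rw [hR0def]
          simp only [sub_mul, mul_sub, mul_one, mul_assoc, cMN]
      _ = Mbar - A := by rw [I3, hMbar']
  have I13 : (1 - A * Nt) * Mtil * (1 - N * A) = Mbar - A := by rw [I6]; exact I12
  -- rewrite the right-hand side
  set K := P * (T * (Pᵀ * (Mt * (Y * R0)))) with hKdef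
  have s1 : (1 - P * T * Pᵀ * Mtil) * (1 - N * A) = (1 - N * A) - K := by
    rw [hKdef, ← I7, Matrix.sub_mul, one_mul]
    simp only [Matrix.mul_assoc]
  have hRHS : A + (1 - A * Nt) * Mtil * (1 - P * T * Pᵀ * Mtil) * (1 - N * A)
      = Mbar - M * (Y * Q) * K := by
    calc A + (1 - A * Nt) * Mtil * (1 - P * T * Pᵀ * Mtil) * (1 - N * A)
        = A + (1 - A * Nt) * Mtil * ((1 - P * T * Pᵀ * Mtil) * (1 - N * A)) := by
          rw [mul_assoc]
      _ = A + (1 - A * Nt) * Mtil * ((1 - N * A) - K) := by rw [s1]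
      _ = A + ((1 - A * Nt) * Mtil * (1 - N * A) - (1 - A * Nt) * Mtil * K) := by
          rw [mul_sub]
      _ = Mbar - M * (Y * Q) * K := by rw [I13, I6]; abel
  -- the main inverse computation
  have main : BITG⁻¹ * (A + (1 - A * Nt) * Mtil * (1 - P * T * Pᵀ * Mtil) * (1 - N * A)) = 1 := by
    rw [hRHS, hBITGinv, I5]
    rw [add_mul]
    rw [mul_sub (Nt * (X * N)) Mbar (M * (Y * Q) * K)]
    rw [mul_sub ((1 - Nt * A) * P * C * Pᵀ * (1 - A * N)) Mbar (M * (Y * Q) * K)]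
    have h1 : Nt * (X * N) * Mbar = 1 := by
      rw [hMbar']
      simp only [mul_assoc]
      rw [cNM, cXY, hNtMt]
    have h2 : Nt * (X * N) * (M * (Y * Q) * K) = (1 - Nt * A) * K := by
      rw [← mul_assoc, I9]
    have h3 : (1 - Nt * A) * P * C * Pᵀ * (1 - A * N) * Mbar
        = (1 - Nt * A) * P * C * Pᵀ * (Mt * (Y * R0)) := by
      rw [mul_assoc _ (1 - A * N) Mbar, I8]
    have h4 : (1 - Nt * A) * P * C * Pᵀ * (1 - A * N) * (M * (Y * Q) * K)
        = (1 - Nt * A) * P * C * Pᵀ * ((Mtil - A) * K) := by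
      rw [mul_assoc _ (1 - A * N) _, ← mul_assoc (1 - A * N) _ K, I10]
    rw [h1, h2, h3, h4]
    -- now simplify the last term
    have h6 : Pᵀ * ((Mtil - A) * K) = (S - Bc) * (T * (Pᵀ * (Mt * (Y * R0)))) := by
      rw [hKdef, ← I11]
      simp only [Matrix.mul_assoc]
    have h5 : (1 - Nt * A) * P * C * Pᵀ * ((Mtil - A) * K)
        = (1 - Nt * A) * P * C * Pᵀ * (Mt * (Y * R0)) - (1 - Nt * A) * K := by
      calc (1 - Nt * A) * P * C * Pᵀ * ((Mtil - A) * K)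
          = (1 - Nt * A) * P * (C * (Pᵀ * ((Mtil - A) * K))) := by
            simp only [Matrix.mul_assoc]
        _ = (1 - Nt * A) * P * (C * ((S - Bc) * (T * (Pᵀ * (Mt * (Y * R0)))))) := by
            rw [h6]
        _ = (1 - Nt * A) * P * (C * (Pᵀ * (Mt * (Y * R0))))
            - (1 - Nt * A) * P * (T * (Pᵀ * (Mt * (Y * R0)))) := by
            rw [Matrix.sub_mul S Bc (T * (Pᵀ * (Mt * (Y * R0)))), cST,
              Matrix.mul_sub C (Pᵀ * (Mt * (Y * R0))) (Bc * (T * (Pᵀ * (Mt * (Y * R0))))),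
              cCB',
              Matrix.mul_sub ((1 - Nt * A) * P) (C * (Pᵀ * (Mt * (Y * R0)))) (T * (Pᵀ * (Mt * (Y * R0))))]
        _ = (1 - Nt * A) * P * C * Pᵀ * (Mt * (Y * R0)) - (1 - Nt * A) * K := by
            rw [hKdef]
            simp only [Matrix.mul_assoc]
    rw [h5]
    abel
  have hBd : IsUnit BITG.det := isUnit_iff_ne_zero.mpr hBITG.det_pos.ne'
  have hfin := inv_eq_right_inv main
  rwa [nonsing_inv_nonsing_inv _ hBd] at hfin
end

section
/- Let A ∈ ℝ^{n×n} be SPD, M ∈ ℝ^{n×n} nonsingular with M + Mᵀ − A SPD, and P ∈ ℝ^{n×n_c} of full column rank. With M̄ := M(M+Mᵀ−A)^{-1}Mᵀ, M̃ := Mᵀ(M+Mᵀ−A)^{-1}M, A_c := PᵀAP, Π_M̃ := P(PᵀM̃P)^{-1}PᵀM̃, and B_TG the SPD matrix defined by B_TG^{-1} = M̄^{-1} + (I−M^{-T}A)P A_c^{-1} Pᵀ(I−AM^{-1}), it holds that B_TG = A + (I−AM^{-T}) M̃ (I − Π_M̃)(I − M^{-1}A). -/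
open Matrix

section Aux

lemma aux_inj_of_rank {n nc : ℕ} (P : Matrix (Fin n) (Fin nc) ℝ) (hP : P.rank = nc) :
    Function.Injective P.mulVec := by
  have hadd := LinearMap.finrank_range_add_finrank_ker P.mulVecLin
  rw [Matrix.rank] at hP
  have hd : Module.finrank ℝ (Fin nc → ℝ) = nc := by simp
  have hker : Module.finrank ℝ (LinearMap.ker P.mulVecLin) = 0 := by omega
  have : LinearMap.ker P.mulVecLin = ⊥ := Submodule.finrank_eq_zero.mp hker
  have hinj := LinearMap.ker_eq_bot.mp this
  exact hinj

lemma aux_posDef_conj {n nc : ℕ} {Q : Matrix (Fin n) (Fin n) ℝ} (hQ : Q.PosDef)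
    (P : Matrix (Fin n) (Fin nc) ℝ) (hPinj : Function.Injective P.mulVec) :
    (Pᵀ * Q * P).PosDef := by
  have hsemi := hQ.posSemidef.conjTranspose_mul_mul_same P
  rw [conjTranspose_eq_transpose_of_trivial] at hsemi
  refine PosDef.of_dotProduct_mulVec_pos hsemi.isHermitian (fun x hx => ?_)
  have hx' : P *ᵥ x ≠ 0 := by
    intro h; exact hx (hPinj (by simpa using h))
  have h2 := hQ.dotProduct_mulVec_pos hx'
  have key : (star x) ⬝ᵥ ((Pᵀ * Q * P) *ᵥ x) = star (P *ᵥ x) ⬝ᵥ (Q *ᵥ (P *ᵥ x)) := by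
    simp [← mulVec_mulVec, dotProduct_mulVec, vecMul_transpose, star_mulVec]
  rw [key]; exact h2

lemma key_cancel {n nc : ℕ} (Mb Mbi W Wt E Et Mtil A : Matrix (Fin n) (Fin n) ℝ)
    (P : Matrix (Fin n) (Fin nc) ℝ) (Si Aci : Matrix (Fin nc) (Fin nc) ℝ)
    (h1 : Mb * Mbi = 1) (h2 : Mb * E = W) (h3 : Wt * Mbi = Et)
    (h4 : Wt * E = Mtil - A)
    (h5 : Si * (Pᵀ * Mtil * P) = 1)
    (h6 : Pᵀ * A * P * Aci = 1) :
    (Mb - W * P * Si * Pᵀ * Wt) * (Mbi + E * P * Aci * Pᵀ * Et) = 1 := by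
  have l2 : ∀ X : Matrix (Fin n) (Fin n) ℝ, Mb * (E * X) = W * X := by
    intro X; rw [← Matrix.mul_assoc, h2]
  have l4 : ∀ X : Matrix (Fin n) (Fin n) ℝ, Wt * (E * X) = Mtil * X - A * X := by
    intro X; rw [← Matrix.mul_assoc, h4, Matrix.sub_mul]
  have l5 : ∀ X : Matrix (Fin nc) (Fin n) ℝ, Si * (Pᵀ * (Mtil * (P * X))) = X := by
    intro X
    calc Si * (Pᵀ * (Mtil * (P * X))) = (Si * (Pᵀ * Mtil * P)) * X := by
          simp only [Matrix.mul_assoc]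
      _ = X := by rw [h5, Matrix.one_mul]
  have l6 : ∀ X : Matrix (Fin nc) (Fin n) ℝ, Pᵀ * (A * (P * (Aci * X))) = X := by
    intro X
    calc Pᵀ * (A * (P * (Aci * X))) = (Pᵀ * A * P * Aci) * X := by
          simp only [Matrix.mul_assoc]
      _ = X := by rw [h6, Matrix.one_mul]
  simp only [Matrix.sub_mul, Matrix.mul_add, Matrix.mul_sub, Matrix.add_mul,
    Matrix.mul_assoc, h1, h3, l2, l4, l5, l6]
  abel

end Aux

theorem stmt_1 {n nc : ℕ} (hnc : nc < n)
    (A M : Matrix (Fin n) (Fin n) ℝ)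
    (P : Matrix (Fin n) (Fin nc) ℝ)
    (hA : A.PosDef) (hM : IsUnit M.det)
    (hMMA : (M + Mᵀ - A).PosDef)
    (hP : P.rank = nc)
    (Mbar Mtil : Matrix (Fin n) (Fin n) ℝ)
    (hMbar : Mbar = M * (M + Mᵀ - A)⁻¹ * Mᵀ)
    (hMtil : Mtil = Mᵀ * (M + Mᵀ - A)⁻¹ * M)
    (Ac : Matrix (Fin nc) (Fin nc) ℝ) (hAc : Ac = Pᵀ * A * P)
    (Pi : Matrix (Fin n) (Fin n) ℝ) (hPi : Pi = P * (Pᵀ * Mtil * P)⁻¹ * Pᵀ * Mtil)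
    (BTG : Matrix (Fin n) (Fin n) ℝ) (hBTG : BTG.PosDef)
    (hBTGinv : BTG⁻¹ = Mbar⁻¹ + (1 - Mᵀ⁻¹ * A) * P * Ac⁻¹ * Pᵀ * (1 - A * M⁻¹)) :
    BTG = A + (1 - A * Mᵀ⁻¹) * Mtil * (1 - Pi) * (1 - M⁻¹ * A) := by
  -- setup
  set N := M + Mᵀ - A with hNdef
  set T := N⁻¹ with hTdef
  have hNdet : IsUnit N.det := hMMA.det_pos.ne'.isUnit
  have hMTdet : IsUnit Mᵀ.det := by rw [Matrix.det_transpose]; exact hM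
  have hPinj := aux_inj_of_rank P hP
  have hA2 : A = M + Mᵀ - N := by rw [hNdef]; abel
  -- cancellation lemmas
  have cM1 : ∀ X : Matrix (Fin n) (Fin n) ℝ, M * (M⁻¹ * X) = X := by
    intro X; rw [← Matrix.mul_assoc, Matrix.mul_nonsing_inv _ hM, Matrix.one_mul]
  have cM2 : ∀ X : Matrix (Fin n) (Fin n) ℝ, M⁻¹ * (M * X) = X := by
    intro X; rw [← Matrix.mul_assoc, Matrix.nonsing_inv_mul _ hM, Matrix.one_mul]
  have cM3 : M * M⁻¹ = 1 := Matrix.mul_nonsing_inv _ hM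
  have cM4 : M⁻¹ * M = 1 := Matrix.nonsing_inv_mul _ hM
  have cMT1 : ∀ X : Matrix (Fin n) (Fin n) ℝ, Mᵀ * (Mᵀ⁻¹ * X) = X := by
    intro X; rw [← Matrix.mul_assoc, Matrix.mul_nonsing_inv _ hMTdet, Matrix.one_mul]
  have cMT2 : ∀ X : Matrix (Fin n) (Fin n) ℝ, Mᵀ⁻¹ * (Mᵀ * X) = X := by
    intro X; rw [← Matrix.mul_assoc, Matrix.nonsing_inv_mul _ hMTdet, Matrix.one_mul]
  have cMT3 : Mᵀ * Mᵀ⁻¹ = 1 := Matrix.mul_nonsing_inv _ hMTdet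
  have cMT4 : Mᵀ⁻¹ * Mᵀ = 1 := Matrix.nonsing_inv_mul _ hMTdet
  have cN3 : N * T = 1 := Matrix.mul_nonsing_inv _ hNdet
  have cN4 : T * N = 1 := Matrix.nonsing_inv_mul _ hNdet
  have cN1 : ∀ X : Matrix (Fin n) (Fin n) ℝ, N * (T * X) = X := by
    intro X; rw [← Matrix.mul_assoc, cN3, Matrix.one_mul]
  have cN2 : ∀ X : Matrix (Fin n) (Fin n) ℝ, T * (N * X) = X := by
    intro X; rw [← Matrix.mul_assoc, cN4, Matrix.one_mul]
  -- PosDef facts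
  have hMunit : IsUnit M := (Matrix.isUnit_iff_isUnit_det M).2 hM
  have hMtilPD : Mtil.PosDef := by
    rw [hMtil]
    exact aux_posDef_conj hMMA.inv M (Matrix.mulVec_injective_iff_isUnit.mpr hMunit)
  have hSPD : (Pᵀ * Mtil * P).PosDef := aux_posDef_conj hMtilPD P hPinj
  have hAcPD : Ac.PosDef := by rw [hAc]; exact aux_posDef_conj hA P hPinj
  have hSdet : IsUnit (Pᵀ * Mtil * P).det := hSPD.det_pos.ne'.isUnit
  have hAcdet : IsUnit Ac.det := hAcPD.det_pos.ne'.isUnit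
  -- Mbar inverse
  have hTdet : IsUnit T.det := by
    rw [hTdef]; exact N.isUnit_nonsing_inv_det hNdet
  have hMbarDet : IsUnit Mbar.det := by
    rw [hMbar, Matrix.det_mul, Matrix.det_mul]
    exact (hM.mul hTdet).mul hMTdet
  have hMbarInv : Mbar⁻¹ = Mᵀ⁻¹ * N * M⁻¹ := by
    apply Matrix.inv_eq_right_inv
    rw [hMbar]
    simp only [Matrix.mul_sub, Matrix.sub_mul, Matrix.mul_add, Matrix.add_mul,
      Matrix.mul_one, Matrix.one_mul, Matrix.mul_assoc,
      cM1, cM2, cM3, cM4, cMT1, cMT2, cMT3, cMT4, cN1, cN2, cN3, cN4]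
  -- key identities
  have h1 : Mbar * Mbar⁻¹ = 1 := Matrix.mul_nonsing_inv _ hMbarDet
  have h2 : Mbar * (1 - Mᵀ⁻¹ * A) = (1 - A * Mᵀ⁻¹) * Mtil := by
    rw [hMbar, hMtil, hA2]
    simp only [Matrix.mul_sub, Matrix.sub_mul, Matrix.mul_add, Matrix.add_mul,
      Matrix.mul_one, Matrix.one_mul, Matrix.mul_assoc,
      cM1, cM2, cM3, cM4, cMT1, cMT2, cMT3, cMT4, cN1, cN2, cN3, cN4]
    abel
  have h3 : (Mtil * (1 - M⁻¹ * A)) * Mbar⁻¹ = 1 - A * M⁻¹ := by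
    rw [hMbarInv, hMtil, hA2]
    simp only [Matrix.mul_sub, Matrix.sub_mul, Matrix.mul_add, Matrix.add_mul,
      Matrix.mul_one, Matrix.one_mul, Matrix.mul_assoc,
      cM1, cM2, cM3, cM4, cMT1, cMT2, cMT3, cMT4, cN1, cN2, cN3, cN4]
    abel
  have h4 : (Mtil * (1 - M⁻¹ * A)) * (1 - Mᵀ⁻¹ * A) = Mtil - A := by
    rw [hMtil, hA2]
    simp only [Matrix.mul_sub, Matrix.sub_mul, Matrix.mul_add, Matrix.add_mul,
      Matrix.mul_one, Matrix.one_mul, Matrix.mul_assoc,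
      cM1, cM2, cM3, cM4, cMT1, cMT2, cMT3, cMT4, cN1, cN2, cN3, cN4]
    abel
  have h5 : (Pᵀ * Mtil * P)⁻¹ * (Pᵀ * Mtil * P) = 1 := Matrix.nonsing_inv_mul _ hSdet
  have h6 : Pᵀ * A * P * Ac⁻¹ = 1 := by
    rw [← hAc]; exact Matrix.mul_nonsing_inv _ hAcdet
  -- rewrite the RHS in the factored form
  have hX : A + (1 - A * Mᵀ⁻¹) * Mtil * (1 - Pi) * (1 - M⁻¹ * A) =
      Mbar - ((1 - A * Mᵀ⁻¹) * Mtil) * P * (Pᵀ * Mtil * P)⁻¹ * Pᵀ *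
        (Mtil * (1 - M⁻¹ * A)) := by
    rw [hPi, hMbar, hMtil, hA2]
    simp only [Matrix.mul_sub, Matrix.sub_mul, Matrix.mul_add, Matrix.add_mul,
      Matrix.mul_one, Matrix.one_mul, Matrix.mul_assoc,
      cM1, cM2, cM3, cM4, cMT1, cMT2, cMT3, cMT4, cN1, cN2, cN3, cN4]
    abel
  have hkey := key_cancel Mbar Mbar⁻¹ ((1 - A * Mᵀ⁻¹) * Mtil) (Mtil * (1 - M⁻¹ * A))
    (1 - Mᵀ⁻¹ * A) (1 - A * M⁻¹) Mtil A P (Pᵀ * Mtil * P)⁻¹ Ac⁻¹ h1 h2 h3 h4 h5 h6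
  have hXB : (A + (1 - A * Mᵀ⁻¹) * Mtil * (1 - Pi) * (1 - M⁻¹ * A)) * BTG⁻¹ = 1 := by
    rw [hX, hBTGinv]; exact hkey
  have hBdet : IsUnit BTG.det := hBTG.det_pos.ne'.isUnit
  calc BTG = 1 * BTG := (Matrix.one_mul _).symm
    _ = (A + (1 - A * Mᵀ⁻¹) * Mtil * (1 - Pi) * (1 - M⁻¹ * A)) * BTG⁻¹ * BTG := by
        rw [hXB]
    _ = (A + (1 - A * Mᵀ⁻¹) * Mtil * (1 - Pi) * (1 - M⁻¹ * A)) * (BTG⁻¹ * BTG) :=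
        Matrix.mul_assoc _ _ _
    _ = A + (1 - A * Mᵀ⁻¹) * Mtil * (1 - Pi) * (1 - M⁻¹ * A) := by
        rw [Matrix.nonsing_inv_mul _ hBdet, Matrix.mul_one]
end

section
/- Let A ∈ ℝ^{n×n} be SPD, M ∈ ℝ^{n×n} nonsingular with M + Mᵀ − A SPD, and P ∈ ℝ^{n×n_c} of full column rank. Set M̃ := Mᵀ(M+Mᵀ−A)^{-1}M, Π_M̃ := P(PᵀM̃P)^{-1}PᵀM̃, and K_TG := max_{v≠0} ‖(I−Π_M̃)v‖²_M̃ / ‖v‖²_A. Then λ_min(B_TG^{-1}A) = 1/K_TG, where B_TG is the exact two-grid preconditioner with B_TG^{-1} = M̄^{-1} + (I−M^{-T}A)P(PᵀAP)^{-1}Pᵀ(I−AM^{-1}) and M̄ := M(M+Mᵀ−A)^{-1}Mᵀ. Equivalently, K_TG = λ_max(A^{-1}B_TG). -/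
open Matrix

/-- Energy norm induced by a matrix `G`: `‖v‖_G = ⟨G v, v⟩^{1/2}`. -/
noncomputable def enorm {m : Type*} [Fintype m] (G : Matrix m m ℝ) (v : m → ℝ) : ℝ :=
  Real.sqrt (v ⬝ᵥ (G *ᵥ v))

section Tools
variable {n nc : ℕ}

lemma aux_ev_iff_det (X : Matrix (Fin n) (Fin n) ℝ) (μ : ℝ) :
    (∃ v : Fin n → ℝ, v ≠ 0 ∧ X *ᵥ v = μ • v) ↔ (μ • (1 : Matrix (Fin n) (Fin n) ℝ) - X).det = 0 := by
  rw [← Matrix.exists_mulVec_eq_zero_iff]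
  constructor
  · rintro ⟨v, hv, h⟩
    exact ⟨v, hv, by rw [sub_mulVec, smul_mulVec, one_mulVec, h, sub_self]⟩
  · rintro ⟨v, hv, h⟩
    refine ⟨v, hv, ?_⟩
    rw [sub_mulVec, smul_mulVec, one_mulVec, sub_eq_zero] at h
    exact h.symm

lemma aux_spec (X : Matrix (Fin n) (Fin n) ℝ) (μ : ℝ) :
    μ ∈ spectrum ℝ X ↔ ∃ v : Fin n → ℝ, v ≠ 0 ∧ X *ᵥ v = μ • v := by
  rw [spectrum.mem_iff, aux_ev_iff_det, Algebra.algebraMap_eq_smul_one,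
    Matrix.isUnit_iff_isUnit_det, isUnit_iff_ne_zero, not_ne_iff]

lemma aux_flip {U V : Matrix (Fin n) (Fin n) ℝ} {μ : ℝ} (hμ : μ ≠ 0)
    (h : ∃ v : Fin n → ℝ, v ≠ 0 ∧ (U * V) *ᵥ v = μ • v) :
    ∃ v : Fin n → ℝ, v ≠ 0 ∧ (V * U) *ᵥ v = μ • v := by
  obtain ⟨v, hv, h⟩ := h
  refine ⟨V *ᵥ v, fun h0 => ?_, ?_⟩
  · rw [← Matrix.mulVec_mulVec, h0, mulVec_zero] at h
    exact hv (by simpa [smul_eq_zero, hμ] using h.symm)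
  · rw [Matrix.mulVec_mulVec, mul_assoc, ← Matrix.mulVec_mulVec, h, Matrix.mulVec_smul]

lemma aux_transpose_ev {X : Matrix (Fin n) (Fin n) ℝ} {μ : ℝ}
    (h : ∃ v : Fin n → ℝ, v ≠ 0 ∧ X *ᵥ v = μ • v) :
    ∃ v : Fin n → ℝ, v ≠ 0 ∧ Xᵀ *ᵥ v = μ • v := by
  rw [aux_ev_iff_det] at h ⊢
  rw [← Matrix.det_transpose, transpose_sub, transpose_smul, transpose_one] at h
  exact h

lemma aux_qf_pos {X : Matrix (Fin n) (Fin n) ℝ} (hX : X.PosDef) {v : Fin n → ℝ} (hv : v ≠ 0) :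
    0 < v ⬝ᵥ X *ᵥ v := by
  simpa using (Matrix.posDef_iff_dotProduct_mulVec.mp hX).2 hv

lemma aux_qf_nonneg {X : Matrix (Fin n) (Fin n) ℝ} (hX : X.PosSemidef) (v : Fin n → ℝ) :
    0 ≤ v ⬝ᵥ X *ᵥ v := by
  simpa using (Matrix.posSemidef_iff_dotProduct_mulVec.mp hX).2 v

lemma aux_conj_dot (C G : Matrix (Fin n) (Fin n) ℝ) (v : Fin n → ℝ) :
    v ⬝ᵥ (Cᵀ * G * C) *ᵥ v = (C *ᵥ v) ⬝ᵥ G *ᵥ (C *ᵥ v) := by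
  rw [← Matrix.mulVec_mulVec, ← Matrix.mulVec_mulVec, Matrix.dotProduct_mulVec v,
    Matrix.vecMul_transpose]

lemma aux_conj_dot' (C : Matrix (Fin n) (Fin nc) ℝ) (G : Matrix (Fin n) (Fin n) ℝ)
    (v : Fin nc → ℝ) :
    v ⬝ᵥ (Cᵀ * G * C) *ᵥ v = (C *ᵥ v) ⬝ᵥ G *ᵥ (C *ᵥ v) := by
  rw [← Matrix.mulVec_mulVec, ← Matrix.mulVec_mulVec, Matrix.dotProduct_mulVec v,
    Matrix.vecMul_transpose]

lemma aux_posdef_conj {G : Matrix (Fin n) (Fin n) ℝ} (hG : G.PosDef)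
    {C : Matrix (Fin n) (Fin n) ℝ} (hC : IsUnit C.det) : (Cᵀ * G * C).PosDef := by
  have hGt : Gᵀ = G := by
    rw [← Matrix.conjTranspose_eq_transpose_of_trivial]; exact hG.1.eq
  refine Matrix.posDef_iff_dotProduct_mulVec.mpr ⟨?_, fun v hv => ?_⟩
  · have : (Cᵀ * G * C)ᵀ = Cᵀ * G * C := by
      rw [transpose_mul, transpose_mul, transpose_transpose, hGt, mul_assoc]
    simpa [Matrix.IsHermitian, Matrix.conjTranspose_eq_transpose_of_trivial] using this
  · have hCv : C *ᵥ v ≠ 0 := by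
      intro h0
      exact hv (Matrix.mulVec_injective_iff_isUnit.mpr (Matrix.isUnit_iff_isUnit_det C |>.mpr hC)
        |>.eq_iff.mp (by simpa using h0))
    simpa [aux_conj_dot] using aux_qf_pos hG hCv

lemma aux_P_inj {P : Matrix (Fin n) (Fin nc) ℝ} (hP : P.rank = nc) :
    ∀ x : Fin nc → ℝ, x ≠ 0 → P *ᵥ x ≠ 0 := by
  have h := P.rank_eq_finrank_range_toLin (Pi.basisFun ℝ (Fin n)) (Pi.basisFun ℝ (Fin nc))
  intro x hx h0
  have hker : LinearMap.ker P.mulVecLin = ⊥ := by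
    have hrn := LinearMap.finrank_range_add_finrank_ker P.mulVecLin
    rw [show LinearMap.range P.mulVecLin = LinearMap.range (Matrix.toLin
      (Pi.basisFun ℝ (Fin nc)) (Pi.basisFun ℝ (Fin n)) P) by
        rw [Matrix.toLin_eq_toLin']; rfl] at hrn
    rw [← h, hP] at hrn
    have : Module.finrank ℝ (Fin nc → ℝ) = nc := by simp
    rw [this] at hrn
    have hk0 : Module.finrank ℝ (LinearMap.ker P.mulVecLin) = 0 := by omega
    exact Submodule.finrank_eq_zero.mp hk0
  have : x ∈ LinearMap.ker P.mulVecLin := by simpa [Matrix.mulVecLin] using h0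
  rw [hker] at this
  exact hx (by simpa using this)

lemma aux_small_ker (hnc : nc < n) (W : Matrix (Fin nc) (Fin n) ℝ) :
    ∃ v : Fin n → ℝ, v ≠ 0 ∧ W *ᵥ v = 0 := by
  have : ¬ Function.Injective W.mulVecLin := by
    intro hinj
    have := LinearMap.finrank_le_finrank_of_injective hinj
    simp at this
    omega
  obtain ⟨x, y, hxy, hne⟩ := Function.not_injective_iff.mp this
  refine ⟨x - y, sub_ne_zero.mpr hne, ?_⟩
  have : W.mulVecLin (x - y) = 0 := by rw [map_sub, hxy, sub_self]
  simpa [Matrix.mulVecLin] using this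

lemma aux_psd_kernel {G : Matrix (Fin n) (Fin n) ℝ} (hG : G.PosSemidef) {v : Fin n → ℝ}
    (h : v ⬝ᵥ G *ᵥ v = 0) : G *ᵥ v = 0 :=
  (hG.dotProduct_mulVec_zero_iff v).mp (by simpa using h)

lemma aux_posdef_conj' {G : Matrix (Fin n) (Fin n) ℝ} (hG : G.PosDef)
    {P : Matrix (Fin n) (Fin nc) ℝ} (hP : P.rank = nc) : (Pᵀ * G * P).PosDef := by
  have hGt : Gᵀ = G := by
    rw [← Matrix.conjTranspose_eq_transpose_of_trivial]; exact hG.1.eq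
  refine Matrix.posDef_iff_dotProduct_mulVec.mpr ⟨?_, fun v hv => ?_⟩
  · have : (Pᵀ * G * P)ᵀ = Pᵀ * G * P := by
      rw [transpose_mul, transpose_mul, transpose_transpose, hGt, Matrix.mul_assoc]
    simpa [Matrix.IsHermitian, Matrix.conjTranspose_eq_transpose_of_trivial] using this
  · have := (Matrix.posDef_iff_dotProduct_mulVec.mp hG).2 (aux_P_inj hP v hv)
    simpa [aux_conj_dot'] using this

end Tools

set_option maxHeartbeats 2000000 in
theorem stmt_3 {n nc : ℕ} (hnc : nc < n)
    (A M : Matrix (Fin n) (Fin n) ℝ)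
    (P : Matrix (Fin n) (Fin nc) ℝ)
    (hA : A.PosDef) (hM : IsUnit M.det)
    (hMMA : (M + Mᵀ - A).PosDef)
    (hP : P.rank = nc)
    (Mbar Mtil : Matrix (Fin n) (Fin n) ℝ)
    (hMbar : Mbar = M * (M + Mᵀ - A)⁻¹ * Mᵀ)
    (hMtil : Mtil = Mᵀ * (M + Mᵀ - A)⁻¹ * M)
    (Pi : Matrix (Fin n) (Fin n) ℝ) (hPi : Pi = P * (Pᵀ * Mtil * P)⁻¹ * Pᵀ * Mtil)
    (KTG : ℝ)
    (hK : IsGreatest {r : ℝ | ∃ v : Fin n → ℝ, v ≠ 0 ∧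
        r = (enorm Mtil ((1 - Pi) *ᵥ v)) ^ 2 / (enorm A v) ^ 2} KTG)
    (BTG : Matrix (Fin n) (Fin n) ℝ) (hBTG : BTG.PosDef)
    (hBTGinv : BTG⁻¹ = Mbar⁻¹ + (1 - Mᵀ⁻¹ * A) * P * (Pᵀ * A * P)⁻¹ * Pᵀ * (1 - A * M⁻¹)) :
    IsLeast (spectrum ℝ (BTG⁻¹ * A)) (1 / KTG) ∧
      IsGreatest (spectrum ℝ (A⁻¹ * BTG)) KTG := by
  -- Setup
  set N := M + Mᵀ - A with hNdef
  -- determinant units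
  have hdA : IsUnit A.det := hA.det_pos.ne'.isUnit
  have hdN : IsUnit N.det := hMMA.det_pos.ne'.isUnit
  have hdM : IsUnit M.det := hM
  have hdMT : IsUnit Mᵀ.det := by rwa [Matrix.det_transpose]
  -- basic inverse cancellation
  have hAl : A⁻¹ * A = 1 := Matrix.nonsing_inv_mul A hdA
  have hAr : A * A⁻¹ = 1 := Matrix.mul_nonsing_inv A hdA
  have hNl : N⁻¹ * N = 1 := Matrix.nonsing_inv_mul N hdN
  have hNr : N * N⁻¹ = 1 := Matrix.mul_nonsing_inv N hdN
  have hMl : M⁻¹ * M = 1 := Matrix.nonsing_inv_mul M hdM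
  have hMr : M * M⁻¹ = 1 := Matrix.mul_nonsing_inv M hdM
  have hMTl : Mᵀ⁻¹ * Mᵀ = 1 := Matrix.nonsing_inv_mul Mᵀ hdMT
  have hMTr : Mᵀ * Mᵀ⁻¹ = 1 := Matrix.mul_nonsing_inv Mᵀ hdMT
  -- symmetry facts
  have hAt : Aᵀ = A := by
    rw [← Matrix.conjTranspose_eq_transpose_of_trivial]; exact hA.1.eq
  have hNt : Nᵀ = N := by
    rw [← Matrix.conjTranspose_eq_transpose_of_trivial]; exact hMMA.1.eq
  have hMit : (M⁻¹)ᵀ = Mᵀ⁻¹ := Matrix.transpose_nonsing_inv M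
  -- PosDef of Mtil, Mbar
  have hMtilPD : Mtil.PosDef := by
    rw [hMtil]; exact aux_posdef_conj hMMA.inv hdM
  have hMbarPD : Mbar.PosDef := by
    rw [hMbar]
    have := aux_posdef_conj (C := Mᵀ) hMMA.inv hdMT
    rwa [transpose_transpose] at this
  have hdMtil : IsUnit Mtil.det := hMtilPD.det_pos.ne'.isUnit
  have hdMbar : IsUnit Mbar.det := hMbarPD.det_pos.ne'.isUnit
  have hMtill : Mtil⁻¹ * Mtil = 1 := Matrix.nonsing_inv_mul Mtil hdMtil
  have hMtilr : Mtil * Mtil⁻¹ = 1 := Matrix.mul_nonsing_inv Mtil hdMtil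
  have hMtilt : Mtilᵀ = Mtil := by
    rw [← Matrix.conjTranspose_eq_transpose_of_trivial]; exact hMtilPD.1.eq
  have hMbart : Mbarᵀ = Mbar := by
    rw [← Matrix.conjTranspose_eq_transpose_of_trivial]; exact hMbarPD.1.eq
  -- Gram matrices
  set GM := Pᵀ * Mtil * P with hGMdef
  set GA := Pᵀ * A * P with hGAdef
  have hGMPD : GM.PosDef := aux_posdef_conj' hMtilPD hP
  have hGAPD : GA.PosDef := aux_posdef_conj' hA hP
  have hdGM : IsUnit GM.det := hGMPD.det_pos.ne'.isUnit
  have hdGA : IsUnit GA.det := hGAPD.det_pos.ne'.isUnit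
  have hGMl : GM⁻¹ * GM = 1 := Matrix.nonsing_inv_mul GM hdGM
  have hGMr : GM * GM⁻¹ = 1 := Matrix.mul_nonsing_inv GM hdGM
  have hGAl : GA⁻¹ * GA = 1 := Matrix.nonsing_inv_mul GA hdGA
  have hGAr : GA * GA⁻¹ = 1 := Matrix.mul_nonsing_inv GA hdGA
  have hGMt : GMᵀ = GM := by
    rw [← Matrix.conjTranspose_eq_transpose_of_trivial]; exact hGMPD.1.eq
  have hGMit : (GM⁻¹)ᵀ = GM⁻¹ := by rw [Matrix.transpose_nonsing_inv, hGMt]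
  -- inverse formulas
  have hMbarinv : Mbar⁻¹ = Mᵀ⁻¹ * N * M⁻¹ := by
    rw [hMbar, Matrix.mul_inv_rev, Matrix.mul_inv_rev,
      Matrix.nonsing_inv_nonsing_inv N hdN, Matrix.mul_assoc]
  have hMtilinv : Mtil⁻¹ = M⁻¹ * N * Mᵀ⁻¹ := by
    rw [hMtil, Matrix.mul_inv_rev, Matrix.mul_inv_rev,
      Matrix.nonsing_inv_nonsing_inv N hdN, Matrix.mul_assoc]
  -- assoc-right cancellation lemmas
  have cAl : ∀ {k : ℕ} (Y : Matrix (Fin n) (Fin k) ℝ), A⁻¹ * (A * Y) = Y := fun Y => by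
    rw [← Matrix.mul_assoc, hAl, Matrix.one_mul]
  have cAr : ∀ {k : ℕ} (Y : Matrix (Fin n) (Fin k) ℝ), A * (A⁻¹ * Y) = Y := fun Y => by
    rw [← Matrix.mul_assoc, hAr, Matrix.one_mul]
  have cNl : ∀ {k : ℕ} (Y : Matrix (Fin n) (Fin k) ℝ), N⁻¹ * (N * Y) = Y := fun Y => by
    rw [← Matrix.mul_assoc, hNl, Matrix.one_mul]
  have cNr : ∀ {k : ℕ} (Y : Matrix (Fin n) (Fin k) ℝ), N * (N⁻¹ * Y) = Y := fun Y => by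
    rw [← Matrix.mul_assoc, hNr, Matrix.one_mul]
  have cMl : ∀ {k : ℕ} (Y : Matrix (Fin n) (Fin k) ℝ), M⁻¹ * (M * Y) = Y := fun Y => by
    rw [← Matrix.mul_assoc, hMl, Matrix.one_mul]
  have cMr : ∀ {k : ℕ} (Y : Matrix (Fin n) (Fin k) ℝ), M * (M⁻¹ * Y) = Y := fun Y => by
    rw [← Matrix.mul_assoc, hMr, Matrix.one_mul]
  have cMTl : ∀ {k : ℕ} (Y : Matrix (Fin n) (Fin k) ℝ), Mᵀ⁻¹ * (Mᵀ * Y) = Y := fun Y => by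
    rw [← Matrix.mul_assoc, hMTl, Matrix.one_mul]
  have cMTr : ∀ {k : ℕ} (Y : Matrix (Fin n) (Fin k) ℝ), Mᵀ * (Mᵀ⁻¹ * Y) = Y := fun Y => by
    rw [← Matrix.mul_assoc, hMTr, Matrix.one_mul]
  have cMtilr : ∀ {k : ℕ} (Y : Matrix (Fin n) (Fin k) ℝ), Mtil * (Mtil⁻¹ * Y) = Y := fun Y => by
    rw [← Matrix.mul_assoc, hMtilr, Matrix.one_mul]
  have cGMl : ∀ {k : ℕ} (Y : Matrix (Fin nc) (Fin k) ℝ), GM⁻¹ * (GM * Y) = Y := fun Y => by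
    rw [← Matrix.mul_assoc, hGMl, Matrix.one_mul]
  have cGAl : ∀ {k : ℕ} (Y : Matrix (Fin nc) (Fin k) ℝ), GA⁻¹ * (GA * Y) = Y := fun Y => by
    rw [← Matrix.mul_assoc, hGAl, Matrix.one_mul]
  have cGAr : ∀ {k : ℕ} (Y : Matrix (Fin nc) (Fin k) ℝ), GA * (GA⁻¹ * Y) = Y := fun Y => by
    rw [← Matrix.mul_assoc, hGAr, Matrix.one_mul]
  have hGM' : ∀ {k : ℕ} (Y : Matrix (Fin nc) (Fin k) ℝ), Pᵀ * (Mtil * (P * Y)) = GM * Y := by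
    intro k Y
    rw [hGMdef, Matrix.mul_assoc, Matrix.mul_assoc]
  have hGA' : ∀ {k : ℕ} (Y : Matrix (Fin nc) (Fin k) ℝ), Pᵀ * (A * (P * Y)) = GA * Y := by
    intro k Y
    rw [hGAdef, Matrix.mul_assoc, Matrix.mul_assoc]
  -- the smoothers
  set L : Matrix (Fin n) (Fin n) ℝ := 1 - Mᵀ⁻¹ * A with hLdef
  set Rt : Matrix (Fin n) (Fin n) ℝ := 1 - A * M⁻¹ with hRtdef
  set Lt : Matrix (Fin n) (Fin n) ℝ := 1 - M⁻¹ * A with hLtdef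
  set Ltt : Matrix (Fin n) (Fin n) ℝ := 1 - A * Mᵀ⁻¹ with hLttdef
  have hLtrans : Lᵀ = Rt := by
    rw [hLdef, hRtdef, transpose_sub, transpose_one, transpose_mul, hAt,
      Matrix.transpose_nonsing_inv, transpose_transpose]
  have hLttrans : Ltᵀ = Ltt := by
    rw [hLtdef, hLttdef, transpose_sub, transpose_one, transpose_mul, hAt, hMit]
  -- projection algebra
  set T : Matrix (Fin n) (Fin n) ℝ := 1 - Pi with hTdef
  set X1 : Matrix (Fin n) (Fin n) ℝ := Tᵀ * Mtil * T with hX1def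
  have hPiP : Pi * P = P := by
    rw [hPi]
    simp only [Matrix.mul_assoc]
    rw [show Pᵀ * (Mtil * P) = GM from by rw [hGMdef, Matrix.mul_assoc], hGMl, Matrix.mul_one]
  have hPiPi : Pi * Pi = Pi := by
    conv_lhs => rw [hPi]
    simp only [Matrix.mul_assoc]
    rw [hGM' (GM⁻¹ * (Pᵀ * Mtil)), cGMl, ← Matrix.mul_assoc, ← Matrix.mul_assoc, ← hPi]
  have hPit : Piᵀ = Mtil * (P * (GM⁻¹ * Pᵀ)) := by
    rw [hPi]
    simp only [transpose_mul, transpose_transpose, hMtilt, hGMit, Matrix.mul_assoc]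
  have hMtilPi : Mtil * Pi = Piᵀ * Mtil := by
    rw [hPit, hPi]
    simp only [Matrix.mul_assoc]
  have hTP : T * P = 0 := by
    rw [hTdef, Matrix.sub_mul, Matrix.one_mul, hPiP, sub_self]
  have hTT : T * T = T := by
    rw [hTdef]
    simp only [Matrix.mul_sub, Matrix.sub_mul, Matrix.one_mul, Matrix.mul_one, hPiPi]
    abel
  have hTt : Tᵀ = 1 - Piᵀ := by rw [hTdef, transpose_sub, transpose_one]
  have hTtTt : Tᵀ * Tᵀ = Tᵀ := by rw [← transpose_mul, hTT]
  have hMtT : Mtil * T = Tᵀ * Mtil := by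
    rw [hTdef, hTt, Matrix.mul_sub, Matrix.sub_mul, Matrix.mul_one, Matrix.one_mul, hMtilPi]
  have hX1eq : X1 = Tᵀ * Mtil := by
    rw [hX1def, Matrix.mul_assoc, hMtT, ← Matrix.mul_assoc, hTtTt]
  have hX1sym : X1ᵀ = X1 := by
    rw [hX1def, transpose_mul, transpose_mul, transpose_transpose, hMtilt, Matrix.mul_assoc]
  have hX1P : X1 * P = 0 := by
    rw [hX1def, Matrix.mul_assoc, Matrix.mul_assoc, hTP, Matrix.mul_zero, Matrix.mul_zero]
  have hX1Mi : ∀ {k : ℕ} (Y : Matrix (Fin n) (Fin k) ℝ), X1 * (Mtil⁻¹ * Y) = Tᵀ * Y := by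
    intro k Y
    rw [hX1eq, Matrix.mul_assoc, cMtilr]
  -- ring identities
  have hd : A * Mbar⁻¹ + Ltt * Rt = 1 := by
    rw [hMbarinv, hLttdef, hRtdef, hNdef]
    simp only [Matrix.mul_add, Matrix.add_mul, Matrix.mul_sub, Matrix.sub_mul, Matrix.mul_one,
      Matrix.one_mul, Matrix.mul_assoc, cMl, cMr, cMTl, cMTr, cAl, cAr, hMr, hMl, hMTr, hMTl,
      hAr, hAl]
    abel
  have step1 : ∀ {k : ℕ} (Y : Matrix (Fin n) (Fin k) ℝ),
      M * (Lt * (Mᵀ⁻¹ * (N * Y))) = N * (Mᵀ⁻¹ * (Rt * (M * Y))) := by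
    intro k Y
    rw [hLtdef, hRtdef, hNdef]
    simp only [Matrix.mul_add, Matrix.add_mul, Matrix.mul_sub, Matrix.sub_mul, Matrix.mul_one,
      Matrix.one_mul, Matrix.mul_assoc, cMl, cMr, cMTl, cMTr, hMr, hMl, hMTr, hMTl]
    abel
  have he : Mtil * (Lt * Mbar⁻¹) = Rt := by
    rw [hMtil, hMbarinv]
    simp only [Matrix.mul_assoc]
    rw [step1 M⁻¹, cNl, cMTr, hMr, Matrix.mul_one]
  have hf : ∀ {k : ℕ} (Y : Matrix (Fin n) (Fin k) ℝ),
      Lt * (L * Y) = Y - Mtil⁻¹ * (A * Y) := by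
    intro k Y
    rw [hLtdef, hLdef, hMtilinv, hNdef]
    simp only [Matrix.mul_add, Matrix.add_mul, Matrix.mul_sub, Matrix.sub_mul, Matrix.mul_one,
      Matrix.one_mul, Matrix.mul_assoc, cMl, cMr, cMTl, cMTr, hMr, hMl, hMTr, hMTl]
    abel
  have hg : ∀ {k : ℕ} (Y : Matrix (Fin n) (Fin k) ℝ),
      A * (L * Y) = Ltt * (A * Y) := by
    intro k Y
    rw [hLdef, hLttdef]
    simp only [Matrix.mul_sub, Matrix.sub_mul, Matrix.mul_one, Matrix.one_mul, Matrix.mul_assoc]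
  have hh : ∀ {k : ℕ} (Y : Matrix (Fin nc) (Fin k) ℝ),
      Piᵀ * (A * (P * (GA⁻¹ * Y))) = Mtil * (P * (GM⁻¹ * Y)) := by
    intro k Y
    rw [hPit]
    simp only [Matrix.mul_assoc]
    rw [hGA' (GA⁻¹ * Y), cGAr]
  -- Mtil = A + Lᵀ Mbar L
  have hMA1 : M - A = N - Mᵀ := by rw [hNdef]; abel
  have hMA2 : Mᵀ - A = N - M := by rw [hNdef]; abel
  have hRtM : Rt * M = M - A := by
    rw [hRtdef]
    simp only [Matrix.sub_mul, Matrix.one_mul, Matrix.mul_assoc, hMl, Matrix.mul_one]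
  have hMTL : Mᵀ * L = Mᵀ - A := by
    rw [hLdef]
    simp only [Matrix.mul_sub, Matrix.mul_one, cMTr]
  have hMtilA : Rt * (Mbar * L) = Mtil - A := by
    have h1 : Rt * (Mbar * L) = (Rt * M) * (N⁻¹ * (Mᵀ * L)) := by
      rw [hMbar]; simp only [Matrix.mul_assoc]
    rw [h1, hRtM, hMTL, hMA1, hMA2, hMtil]
    simp only [Matrix.mul_sub, Matrix.sub_mul, Matrix.mul_assoc, cNr, hNr, hNl, Matrix.mul_one]
    rw [hNdef]
    abel
  -- auxiliary forms
  have hX1Pt : ∀ {k : ℕ} (Y : Matrix (Fin nc) (Fin k) ℝ), X1 * (P * Y) = 0 := fun Y => by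
    rw [← Matrix.mul_assoc, hX1P, Matrix.zero_mul]
  have hPitRt : Piᵀ * Rt = Mtil * (P * (GM⁻¹ * (Pᵀ * Rt))) := by
    rw [hPit]; simp only [Matrix.mul_assoc]
  -- the key representation of BTG
  have hdB : IsUnit BTG.det := hBTG.det_pos.ne'.isUnit
  have hCB : (A + Ltt * (X1 * Lt)) * BTG⁻¹ = 1 := by
    rw [hBTGinv]
    simp only [Matrix.mul_add, Matrix.add_mul, Matrix.mul_assoc]
    rw [hg (P * (GA⁻¹ * (Pᵀ * Rt)))]
    rw [show X1 * (Lt * Mbar⁻¹) = Tᵀ * Rt from by rw [hX1eq, Matrix.mul_assoc, he]]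
    rw [hf (P * (GA⁻¹ * (Pᵀ * Rt)))]
    rw [Matrix.mul_sub X1, hX1Pt, hX1Mi]
    rw [hTt]
    simp only [Matrix.sub_mul, Matrix.one_mul, Matrix.mul_sub, Matrix.mul_zero, Matrix.zero_mul,
      zero_sub, sub_zero, mul_zero, zero_mul]
    rw [hh (Pᵀ * Rt), hPitRt, ← hd]
    simp only [mul_neg, mul_sub]
    abel
  have hB : BTG = A + Ltt * (X1 * Lt) := by
    calc BTG = (A + Ltt * (X1 * Lt)) * BTG⁻¹ * BTG := by rw [hCB, Matrix.one_mul]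
    _ = A + Ltt * (X1 * Lt) := by
        rw [Matrix.mul_assoc, Matrix.nonsing_inv_mul BTG hdB, Matrix.mul_one]
  -- spectral correspondence matrices
  have hAit : (A⁻¹)ᵀ = A⁻¹ := by rw [Matrix.transpose_nonsing_inv, hAt]
  set Wm : Matrix (Fin n) (Fin n) ℝ := T * (A⁻¹ * Tᵀ) with hWdef
  have hWt : Wmᵀ = Wm := by
    rw [hWdef, transpose_mul, transpose_mul, hAit, transpose_transpose, Matrix.mul_assoc]
  have hTW : T * Wm = Wm := by rw [hWdef, ← Matrix.mul_assoc, hTT]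
  set U : Matrix (Fin n) (Fin n) ℝ := A⁻¹ * (Ltt * Tᵀ) with hUdef
  set V : Matrix (Fin n) (Fin n) ℝ := Mtil * (T * Lt) with hVdef
  have hUV : U * V = A⁻¹ * (Ltt * (X1 * Lt)) := by
    rw [hUdef, hVdef, hX1def]; simp only [Matrix.mul_assoc]
  have hj : ∀ {k : ℕ} (Y : Matrix (Fin n) (Fin k) ℝ),
      Lt * (A⁻¹ * (Ltt * Y)) = A⁻¹ * Y - Mtil⁻¹ * Y := by
    intro k Y
    rw [hLtdef, hLttdef, hMtilinv, hNdef]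
    simp only [Matrix.mul_add, Matrix.add_mul, Matrix.mul_sub, Matrix.sub_mul, Matrix.mul_one,
      Matrix.one_mul, Matrix.mul_assoc, cMl, cMr, cMTl, cMTr, cAl, cAr, hMr, hMl, hMTr, hMTl,
      hAr, hAl]
    abel
  have hVU : V * U = Mtil * Wm - Tᵀ := by
    rw [hVdef, hUdef]
    simp only [Matrix.mul_assoc]
    rw [hj Tᵀ, Matrix.mul_sub T, Matrix.mul_sub Mtil, ← hWdef]
    rw [show Mtil * (T * (Mtil⁻¹ * Tᵀ)) = Tᵀ from by
      rw [← Matrix.mul_assoc, hMtT, Matrix.mul_assoc, cMtilr, hTtTt]]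
  -- quadratic form facts
  have hqA : ∀ v : Fin n → ℝ, enorm A v ^ 2 = v ⬝ᵥ A *ᵥ v := fun v =>
    Real.sq_sqrt (aux_qf_nonneg hA.posSemidef v)
  have hqX1 : ∀ v : Fin n → ℝ, enorm Mtil (T *ᵥ v) ^ 2 = v ⬝ᵥ X1 *ᵥ v := fun v => by
    rw [_root_.enorm, Real.sq_sqrt (aux_qf_nonneg hMtilPD.posSemidef _), hX1def, aux_conj_dot]
  have hApos : ∀ v : Fin n → ℝ, v ≠ 0 → 0 < v ⬝ᵥ A *ᵥ v := fun v hv => aux_qf_pos hA hv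
  have hub : ∀ v : Fin n → ℝ, v ≠ 0 → v ⬝ᵥ X1 *ᵥ v ≤ KTG * (v ⬝ᵥ A *ᵥ v) := by
    intro v hv
    have h1 : (enorm Mtil (T *ᵥ v)) ^ 2 / (enorm A v) ^ 2 ≤ KTG := hK.2 ⟨v, hv, rfl⟩
    rw [hqX1, hqA] at h1
    exact (div_le_iff₀ (hApos v hv)).mp h1
  -- K ≥ 1
  have hMtilid : Mtil = A + Rt * (Mbar * L) := by rw [hMtilA]; abel
  have hRtMbarL : Rt * (Mbar * L) = Lᵀ * Mbar * L := by
    rw [hLtrans, Matrix.mul_assoc]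
  have hMtilge : ∀ v : Fin n → ℝ, v ⬝ᵥ A *ᵥ v ≤ v ⬝ᵥ Mtil *ᵥ v := by
    intro v
    have h0 : 0 ≤ v ⬝ᵥ (Rt * (Mbar * L)) *ᵥ v := by
      rw [hRtMbarL, aux_conj_dot]
      exact aux_qf_nonneg hMbarPD.posSemidef _
    have h1 : v ⬝ᵥ Mtil *ᵥ v = v ⬝ᵥ A *ᵥ v + v ⬝ᵥ (Rt * (Mbar * L)) *ᵥ v := by
      conv_lhs => rw [hMtilid]
      rw [Matrix.add_mulVec, dotProduct_add]
    linarith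
  have hv0ex : ∃ v0 : Fin n → ℝ, v0 ≠ 0 ∧ Pi *ᵥ v0 = 0 := by
    obtain ⟨v0, hv0ne, hker⟩ := aux_small_ker hnc (GM⁻¹ * (Pᵀ * Mtil))
    refine ⟨v0, hv0ne, ?_⟩
    rw [hPi, show P * GM⁻¹ * Pᵀ * Mtil = P * (GM⁻¹ * (Pᵀ * Mtil)) from by
      simp only [Matrix.mul_assoc], ← Matrix.mulVec_mulVec, hker, Matrix.mulVec_zero]
  have hK1 : 1 ≤ KTG := by
    obtain ⟨v0, hv0ne, hPiv0⟩ := hv0ex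
    have hT0 : T *ᵥ v0 = v0 := by
      rw [hTdef, Matrix.sub_mulVec, Matrix.one_mulVec, hPiv0, sub_zero]
    have hx : v0 ⬝ᵥ X1 *ᵥ v0 = v0 ⬝ᵥ Mtil *ᵥ v0 := by
      rw [hX1def, aux_conj_dot, hT0]
    have e1 : (enorm Mtil (T *ᵥ v0)) ^ 2 / (enorm A v0) ^ 2 ≤ KTG := hK.2 ⟨v0, hv0ne, rfl⟩
    rw [hqX1, hqA, hx] at e1
    have h2 := hMtilge v0
    have hp := hApos v0 hv0ne
    calc (1:ℝ) = (v0 ⬝ᵥ A *ᵥ v0) / (v0 ⬝ᵥ A *ᵥ v0) := (div_self hp.ne').symm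
    _ ≤ (v0 ⬝ᵥ Mtil *ᵥ v0) / (v0 ⬝ᵥ A *ᵥ v0) := by gcongr
    _ ≤ KTG := e1
  have hKpos : 0 < KTG := zero_lt_one.trans_le hK1
  have hKne : KTG ≠ 0 := hKpos.ne'
  -- correspondence helpers
  have hTfix1 : ∀ (nu : ℝ), nu ≠ 0 → ∀ x : Fin n → ℝ, (Wm * Mtil) *ᵥ x = nu • x →
      T *ᵥ x = x := by
    intro nu hnu x hx
    have h5 : T *ᵥ ((Wm * Mtil) *ᵥ x) = (Wm * Mtil) *ᵥ x := by
      rw [Matrix.mulVec_mulVec, ← Matrix.mul_assoc, hTW]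
    rw [hx, Matrix.mulVec_smul] at h5
    exact smul_right_injective (Fin n → ℝ) hnu h5
  have hTfix2 : ∀ (nu : ℝ), nu ≠ 0 → ∀ x : Fin n → ℝ, (Wm * Mtil - T) *ᵥ x = nu • x →
      (Wm * Mtil) *ᵥ x = (nu + 1) • x := by
    intro nu hnu x hevx
    rw [Matrix.sub_mulVec, sub_eq_iff_eq_add] at hevx
    have h5 : T *ᵥ ((Wm * Mtil) *ᵥ x) = (Wm * Mtil) *ᵥ x := by
      rw [Matrix.mulVec_mulVec, ← Matrix.mul_assoc, hTW]
    rw [hevx, Matrix.mulVec_add, Matrix.mulVec_smul, Matrix.mulVec_mulVec, hTT] at h5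
    have h6 : nu • (T *ᵥ x) = nu • x := add_right_cancel h5
    have hTx : T *ᵥ x = x := smul_right_injective (Fin n → ℝ) hnu h6
    rw [hevx, hTx, add_smul, one_smul]
  have htoB : ∀ (nu : ℝ), nu ≠ 0 → (∃ x : Fin n → ℝ, x ≠ 0 ∧ (Wm * Mtil - T) *ᵥ x = nu • x) →
      ∃ y : Fin n → ℝ, y ≠ 0 ∧ BTG *ᵥ y = (nu + 1) • (A *ᵥ y) := by
    intro nu hnu hex
    have htt : (Wm * Mtil - T)ᵀ = V * U := by
      rw [hVU, transpose_sub, transpose_mul, hWt, hMtilt]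
    have h2 := aux_transpose_ev hex
    rw [htt] at h2
    have h3 := aux_flip hnu h2
    rw [hUV] at h3
    obtain ⟨y, hy, hevy⟩ := h3
    refine ⟨y, hy, ?_⟩
    have h4 : (Ltt * (X1 * Lt)) *ᵥ y = nu • (A *ᵥ y) := by
      calc (Ltt * (X1 * Lt)) *ᵥ y = (A * (A⁻¹ * (Ltt * (X1 * Lt)))) *ᵥ y := by rw [cAr]
      _ = A *ᵥ ((A⁻¹ * (Ltt * (X1 * Lt))) *ᵥ y) := by rw [← Matrix.mulVec_mulVec]
      _ = A *ᵥ (nu • y) := by rw [hevy]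
      _ = nu • (A *ᵥ y) := by rw [Matrix.mulVec_smul]
    rw [hB, Matrix.add_mulVec, h4, add_smul, one_smul, add_comm]
  have hfromB : ∀ (mu : ℝ), mu ≠ 1 → 0 < mu →
      (∃ y : Fin n → ℝ, y ≠ 0 ∧ BTG *ᵥ y = mu • (A *ᵥ y)) →
      ∃ z : Fin n → ℝ, z ≠ 0 ∧ X1 *ᵥ z = mu • (A *ᵥ z) := by
    rintro mu hmu1 hmu0 ⟨y, hy, hBy⟩
    have hev2 : (U * V) *ᵥ y = (mu - 1) • y := by
      rw [hUV]
      have h1 : (Ltt * (X1 * Lt)) *ᵥ y = (mu - 1) • (A *ᵥ y) := by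
        have h0 : (Ltt * (X1 * Lt)) *ᵥ y = BTG *ᵥ y - A *ᵥ y := by
          rw [hB, Matrix.add_mulVec]; abel
        rw [h0, hBy, sub_smul, one_smul]
      rw [← Matrix.mulVec_mulVec, h1, Matrix.mulVec_smul, Matrix.mulVec_mulVec, hAl,
        Matrix.one_mulVec]
    have f1 := aux_flip (sub_ne_zero.mpr hmu1) ⟨y, hy, hev2⟩
    rw [hVU] at f1
    have htt2 : (Mtil * Wm - Tᵀ)ᵀ = Wm * Mtil - T := by
      rw [transpose_sub, transpose_mul, hWt, hMtilt, transpose_transpose]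
    have f2 := aux_transpose_ev f1
    rw [htt2] at f2
    obtain ⟨x, hx, hevx⟩ := f2
    have hWMx := hTfix2 (mu - 1) (sub_ne_zero.mpr hmu1) x hevx
    rw [sub_add_cancel] at hWMx
    have g1 := aux_flip hmu0.ne' ⟨x, hx, hWMx⟩
    rw [show Mtil * Wm = (Mtil * T) * (A⁻¹ * Tᵀ) from by
      rw [hWdef]; simp only [Matrix.mul_assoc]] at g1
    have g2 := aux_flip hmu0.ne' g1
    rw [show (A⁻¹ * Tᵀ) * (Mtil * T) = A⁻¹ * X1 from by
      rw [hX1def]; simp only [Matrix.mul_assoc]] at g2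
    obtain ⟨z, hz, hevz⟩ := g2
    refine ⟨z, hz, ?_⟩
    calc X1 *ᵥ z = (A * (A⁻¹ * X1)) *ᵥ z := by rw [cAr]
    _ = A *ᵥ ((A⁻¹ * X1) *ᵥ z) := by rw [← Matrix.mulVec_mulVec]
    _ = A *ᵥ (mu • z) := by rw [hevz]
    _ = mu • (A *ᵥ z) := by rw [Matrix.mulVec_smul]
  -- membership: an eigenvector with BTG y = KTG (A y)
  have hmem_main : ∃ y : Fin n → ℝ, y ≠ 0 ∧ BTG *ᵥ y = KTG • (A *ᵥ y) := by
    by_cases hKone : KTG = 1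
    · rcases Nat.eq_zero_or_pos nc with h0 | hpos
      · subst h0
        have hPPT : P * GM⁻¹ * Pᵀ = (0 : Matrix (Fin n) (Fin n) ℝ) := by
          ext i j; simp [Matrix.mul_apply]
        have hPimat : Pi = 0 := by rw [hPi, hPPT, Matrix.zero_mul]
        have hT1 : T = 1 := by rw [hTdef, hPimat, sub_zero]
        have hX10 : X1 = Mtil := by
          rw [hX1def, hT1, transpose_one, Matrix.one_mul, Matrix.mul_one]
        have hLv : ∀ v : Fin n → ℝ, L *ᵥ v = 0 := by
          intro v
          by_cases hv : v = 0
          · simp [hv]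
          · have h2 : v ⬝ᵥ Mtil *ᵥ v ≤ v ⬝ᵥ A *ᵥ v := by
              have := hub v hv
              rwa [hX10, hKone, one_mul] at this
            have h1 : v ⬝ᵥ Mtil *ᵥ v = v ⬝ᵥ A *ᵥ v + v ⬝ᵥ (Lᵀ * Mbar * L) *ᵥ v := by
              conv_lhs => rw [hMtilid]
              rw [Matrix.add_mulVec, dotProduct_add, hRtMbarL]
            have h3 : (L *ᵥ v) ⬝ᵥ Mbar *ᵥ (L *ᵥ v) = 0 := by
              have h4 : 0 ≤ (L *ᵥ v) ⬝ᵥ Mbar *ᵥ (L *ᵥ v) :=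
                aux_qf_nonneg hMbarPD.posSemidef _
              rw [← aux_conj_dot] at h4 ⊢
              linarith
            by_contra hne
            exact (aux_qf_pos hMbarPD hne).ne' h3
        have hL0 : (1 : Matrix (Fin n) (Fin n) ℝ) - Mᵀ⁻¹ * A = 0 := by
          rw [← hLdef]
          ext i j
          have := congrFun (hLv (_root_.Pi.single j 1)) i
          simpa [Matrix.mulVec_single] using this
        have hAMT : A = Mᵀ := by
          have h1 : Mᵀ⁻¹ * A = 1 := (sub_eq_zero.mp hL0).symm
          calc A = Mᵀ * (Mᵀ⁻¹ * A) := (cMTr A).symm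
          _ = Mᵀ := by rw [h1, Matrix.mul_one]
        have hMA : M = A := by
          have h2 : M = Aᵀ := by rw [hAMT, transpose_transpose]
          rw [h2, hAt]
        have hLt0 : Lt = 0 := by rw [hLtdef, hMA, hAl, sub_self]
        have hBA : BTG = A := by
          rw [hB, hLt0, Matrix.mul_zero, Matrix.mul_zero, add_zero]
        refine ⟨fun _ => 1, ?_, ?_⟩
        · intro h; exact one_ne_zero (congrFun h ⟨0, hnc⟩)
        · rw [hBA, hKone, one_smul]
      · -- nc > 0 : X1 is singular
        have hPe : P *ᵥ _root_.Pi.single ⟨0, hpos⟩ 1 ≠ 0 :=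
          aux_P_inj hP _ (fun h => by
            have := congrFun h ⟨0, hpos⟩
            simp [_root_.Pi.single_eq_same] at this)
        have hdX1 : X1.det = 0 := by
          rw [← Matrix.exists_mulVec_eq_zero_iff]
          exact ⟨P *ᵥ _root_.Pi.single ⟨0, hpos⟩ 1, hPe, by
            rw [Matrix.mulVec_mulVec, hX1P, Matrix.zero_mulVec]⟩
        have hdBA : (BTG - A).det = 0 := by
          rw [hB, show A + Ltt * (X1 * Lt) - A = Ltt * (X1 * Lt) from by abel,
            Matrix.det_mul, Matrix.det_mul, hdX1]
          ring
        obtain ⟨y, hy, hy0⟩ := (Matrix.exists_mulVec_eq_zero_iff).mpr hdBA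
        refine ⟨y, hy, ?_⟩
        rw [Matrix.sub_mulVec, sub_eq_zero] at hy0
        rw [hy0, hKone, one_smul]
    · -- KTG ≠ 1 : transfer the maximizer through the correspondences
      obtain ⟨vs, hvs, hKr⟩ := hK.1
      have hGH : (KTG • A - X1).IsHermitian := by
        have h1 : (KTG • A - X1)ᵀ = KTG • A - X1 := by
          rw [transpose_sub, transpose_smul, hAt, hX1sym]
        simpa [Matrix.IsHermitian, Matrix.conjTranspose_eq_transpose_of_trivial] using h1
      have hGpsd : (KTG • A - X1).PosSemidef := by
        refine Matrix.posSemidef_iff_dotProduct_mulVec.mpr ⟨hGH, fun x => ?_⟩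
        simp only [star_trivial, Matrix.sub_mulVec, Matrix.smul_mulVec,
          dotProduct_sub, dotProduct_smul, smul_eq_mul]
        by_cases hx : x = 0
        · simp [hx]
        · have := hub x hx
          linarith
      have hKeq : vs ⬝ᵥ X1 *ᵥ vs = KTG * (vs ⬝ᵥ A *ᵥ vs) := by
        have h1 : KTG = (vs ⬝ᵥ X1 *ᵥ vs) / (vs ⬝ᵥ A *ᵥ vs) := by
          rw [hKr, hqX1, hqA]
        rw [h1, div_mul_cancel₀]
        exact (hApos vs hvs).ne'
      have hGv : (KTG • A - X1) *ᵥ vs = 0 := by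
        apply aux_psd_kernel hGpsd
        simp only [Matrix.sub_mulVec, Matrix.smul_mulVec, dotProduct_sub,
          dotProduct_smul, smul_eq_mul]
        rw [hKeq]; ring
      have hX1vs : X1 *ᵥ vs = KTG • (A *ᵥ vs) := by
        rw [Matrix.sub_mulVec, sub_eq_zero] at hGv
        rw [← hGv, Matrix.smul_mulVec]
      have hev0 : ((A⁻¹ * Tᵀ) * (Mtil * T)) *ᵥ vs = KTG • vs := by
        rw [show (A⁻¹ * Tᵀ) * (Mtil * T) = A⁻¹ * X1 from by
          rw [hX1def]; simp only [Matrix.mul_assoc]]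
        rw [← Matrix.mulVec_mulVec, hX1vs, Matrix.mulVec_smul, Matrix.mulVec_mulVec, hAl,
          Matrix.one_mulVec]
      have f1 := aux_flip hKne ⟨vs, hvs, hev0⟩
      rw [show (Mtil * T) * (A⁻¹ * Tᵀ) = Mtil * Wm from by
        rw [hWdef]; simp only [Matrix.mul_assoc]] at f1
      have f2 := aux_flip hKne f1
      obtain ⟨x, hx, hevx⟩ := f2
      have hTx := hTfix1 KTG hKne x hevx
      have hsub : (Wm * Mtil - T) *ᵥ x = (KTG - 1) • x := by
        rw [Matrix.sub_mulVec, hevx, hTx, sub_smul, one_smul]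
      obtain ⟨y, hy, hBy⟩ := htoB (KTG - 1) (sub_ne_zero.mpr hKone) ⟨x, hx, hsub⟩
      rw [sub_add_cancel] at hBy
      exact ⟨y, hy, hBy⟩
  -- upper bound for the spectrum of A⁻¹ BTG
  have hub2 : ∀ mu ∈ spectrum ℝ (A⁻¹ * BTG), mu ≤ KTG := by
    intro mu hmu
    obtain ⟨y, hy, hev⟩ := (aux_spec _ _).mp hmu
    have hBy : BTG *ᵥ y = mu • (A *ᵥ y) := by
      calc BTG *ᵥ y = (A * (A⁻¹ * BTG)) *ᵥ y := by rw [cAr]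
      _ = A *ᵥ ((A⁻¹ * BTG) *ᵥ y) := by rw [← Matrix.mulVec_mulVec]
      _ = A *ᵥ (mu • y) := by rw [hev]
      _ = mu • (A *ᵥ y) := by rw [Matrix.mulVec_smul]
    have hmupos : 0 < mu := by
      have h1 : y ⬝ᵥ BTG *ᵥ y = mu * (y ⬝ᵥ A *ᵥ y) := by
        rw [hBy, dotProduct_smul, smul_eq_mul]
      have h2 := aux_qf_pos hBTG hy
      have h3 := hApos y hy
      nlinarith
    by_cases hmu1 : mu = 1
    · rw [hmu1]; exact hK1
    · obtain ⟨z, hz, hevz⟩ := hfromB mu hmu1 hmupos ⟨y, hy, hBy⟩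
      have h7 : z ⬝ᵥ X1 *ᵥ z = mu * (z ⬝ᵥ A *ᵥ z) := by
        rw [hevz, dotProduct_smul, smul_eq_mul]
      have h8 := hub z hz
      have h9 := hApos z hz
      nlinarith
  -- lower bound for the spectrum of BTG⁻¹ A
  have hlb : ∀ mu ∈ spectrum ℝ (BTG⁻¹ * A), 1 / KTG ≤ mu := by
    intro mu hmu
    obtain ⟨y, hy, hev⟩ := (aux_spec _ _).mp hmu
    have hBr : BTG * BTG⁻¹ = 1 := Matrix.mul_nonsing_inv BTG hdB
    have hAy : A *ᵥ y = mu • (BTG *ᵥ y) := by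
      calc A *ᵥ y = (BTG * (BTG⁻¹ * A)) *ᵥ y := by
            rw [← Matrix.mul_assoc, hBr, Matrix.one_mul]
      _ = BTG *ᵥ ((BTG⁻¹ * A) *ᵥ y) := by rw [← Matrix.mulVec_mulVec]
      _ = BTG *ᵥ (mu • y) := by rw [hev]
      _ = mu • (BTG *ᵥ y) := by rw [Matrix.mulVec_smul]
    have hmupos : 0 < mu := by
      have h1 : y ⬝ᵥ A *ᵥ y = mu * (y ⬝ᵥ BTG *ᵥ y) := by
        rw [hAy, dotProduct_smul, smul_eq_mul]
      have h2 := aux_qf_pos hBTG hy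
      have h3 := hApos y hy
      nlinarith
    have hup : (A⁻¹ * BTG) *ᵥ y = (1 / mu) • y := by
      have hBy2 : BTG *ᵥ y = (1 / mu) • (A *ᵥ y) := by
        rw [hAy, smul_smul, one_div, inv_mul_cancel₀ hmupos.ne', one_smul]
      calc (A⁻¹ * BTG) *ᵥ y = A⁻¹ *ᵥ (BTG *ᵥ y) := by rw [← Matrix.mulVec_mulVec]
      _ = A⁻¹ *ᵥ ((1 / mu) • (A *ᵥ y)) := by rw [hBy2]
      _ = (1 / mu) • (A⁻¹ *ᵥ (A *ᵥ y)) := by rw [Matrix.mulVec_smul]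
      _ = (1 / mu) • y := by rw [Matrix.mulVec_mulVec, hAl, Matrix.one_mulVec]
    have h10 : 1 / mu ≤ KTG := hub2 (1 / mu) ((aux_spec _ _).mpr ⟨y, hy, hup⟩)
    rw [div_le_iff₀ hmupos] at h10
    rw [div_le_iff₀ hKpos]
    linarith
  obtain ⟨y, hy, hBy⟩ := hmem_main
  have hmem1 : KTG ∈ spectrum ℝ (A⁻¹ * BTG) := (aux_spec _ _).mpr ⟨y, hy, by
    calc (A⁻¹ * BTG) *ᵥ y = A⁻¹ *ᵥ (BTG *ᵥ y) := by rw [← Matrix.mulVec_mulVec]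
    _ = A⁻¹ *ᵥ (KTG • (A *ᵥ y)) := by rw [hBy]
    _ = KTG • (A⁻¹ *ᵥ (A *ᵥ y)) := by rw [Matrix.mulVec_smul]
    _ = KTG • y := by rw [Matrix.mulVec_mulVec, hAl, Matrix.one_mulVec]⟩
  have hmem2 : 1 / KTG ∈ spectrum ℝ (BTG⁻¹ * A) := (aux_spec _ _).mpr ⟨y, hy, by
    have hAy2 : A *ᵥ y = (1 / KTG) • (BTG *ᵥ y) := by
      rw [hBy, smul_smul, one_div, inv_mul_cancel₀ hKne, one_smul]
    calc (BTG⁻¹ * A) *ᵥ y = BTG⁻¹ *ᵥ (A *ᵥ y) := by rw [← Matrix.mulVec_mulVec]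
    _ = BTG⁻¹ *ᵥ ((1 / KTG) • (BTG *ᵥ y)) := by rw [hAy2]
    _ = (1 / KTG) • (BTG⁻¹ *ᵥ (BTG *ᵥ y)) := by rw [Matrix.mulVec_smul]
    _ = (1 / KTG) • y := by
        rw [Matrix.mulVec_mulVec, Matrix.nonsing_inv_mul BTG hdB, Matrix.one_mulVec]⟩
  exact ⟨⟨hmem2, hlb⟩, ⟨hmem1, hub2⟩⟩
end

section
/- Let A ∈ ℝ^{n×n} be SPD, M ∈ ℝ^{n×n} nonsingular with M + Mᵀ − A SPD, and P ∈ ℝ^{n×n_c} of full column rank. With M̃ := Mᵀ(M+Mᵀ−A)^{-1}M, Π_M̃ := P(PᵀM̃P)^{-1}PᵀM̃, and K_TG := max_{v≠0} ‖(I−Π_M̃)v‖²_M̃ / ‖v‖²_A, the largest eigenvalue of (A^{-1}M̃ − I)(I − Π_M̃) equals K_TG − 1. -/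
open Matrix

section Aux

lemma real_herm_iff {n : ℕ} {G : Matrix (Fin n) (Fin n) ℝ} : G.IsHermitian ↔ Gᵀ = G := by
  rw [Matrix.IsHermitian, Matrix.conjTranspose_eq_transpose_of_trivial]

lemma dot_shift {m k : Type*} [Fintype m] [Fintype k] (X : Matrix m k ℝ)
    (a : k → ℝ) (b : m → ℝ) : a ⬝ᵥ Xᵀ *ᵥ b = (X *ᵥ a) ⬝ᵥ b := by
  rw [Matrix.dotProduct_mulVec, Matrix.vecMul_transpose]

lemma sym_dot {n : ℕ} {G : Matrix (Fin n) (Fin n) ℝ} (hG : Gᵀ = G)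
    (a b : Fin n → ℝ) : a ⬝ᵥ G *ᵥ b = b ⬝ᵥ G *ᵥ a := by
  conv_lhs => rw [← hG]
  rw [dot_shift, dotProduct_comm]

lemma psd_cs {n : ℕ} {G : Matrix (Fin n) (Fin n) ℝ} (hG : G.PosSemidef)
    (x y : Fin n → ℝ) : (x ⬝ᵥ G *ᵥ y)^2 ≤ (x ⬝ᵥ G *ᵥ x) * (y ⬝ᵥ G *ᵥ y) := by
  have key : discrim (y ⬝ᵥ G *ᵥ y) (2 * (x ⬝ᵥ G *ᵥ y)) (x ⬝ᵥ G *ᵥ x) ≤ 0 := by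
    apply discrim_le_zero
    intro t
    have h0 := hG.dotProduct_mulVec_nonneg (x + t • y)
    simp only [star_trivial] at h0
    have hexp : (x + t • y) ⬝ᵥ G *ᵥ (x + t • y)
        = (y ⬝ᵥ G *ᵥ y) * (t*t) + (2 * (x ⬝ᵥ G *ᵥ y)) * t + x ⬝ᵥ G *ᵥ x := by
      rw [Matrix.mulVec_add, Matrix.mulVec_smul, dotProduct_add, add_dotProduct,
        add_dotProduct, dotProduct_smul, smul_dotProduct, smul_dotProduct,
        sym_dot (real_herm_iff.mp hG.isHermitian) y x]
      simp only [smul_eq_mul, Matrix.smul_mulVec, dotProduct_smul, smul_dotProduct]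
      ring
    rw [hexp] at h0
    exact h0
  rw [discrim] at key
  nlinarith [key]

lemma matrix_mem_spectrum_iff {n : ℕ} (E : Matrix (Fin n) (Fin n) ℝ) (μ : ℝ) :
    μ ∈ spectrum ℝ E ↔ ∃ v : Fin n → ℝ, v ≠ 0 ∧ E *ᵥ v = μ • v := by
  rw [← AlgEquiv.spectrum_eq (Matrix.toLinAlgEquiv' : Matrix (Fin n) (Fin n) ℝ ≃ₐ[ℝ] _) E,
    ← Module.End.hasEigenvalue_iff_mem_spectrum]
  constructor
  · intro h
    obtain ⟨v, hv1, hv2⟩ := h.exists_hasEigenvector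
    exact ⟨v, hv2, by simpa [Matrix.toLinAlgEquiv'_apply] using hv1⟩
  · rintro ⟨v, hv, hEv⟩
    exact Module.End.hasEigenvalue_of_hasEigenvector
      ⟨by simpa [Module.End.mem_eigenspace_iff, Matrix.toLinAlgEquiv'_apply] using hEv, hv⟩

end Aux

set_option maxHeartbeats 2000000 in
theorem stmt_5 {n nc : ℕ} (hnc : nc < n)
    (A M : Matrix (Fin n) (Fin n) ℝ)
    (P : Matrix (Fin n) (Fin nc) ℝ)
    (hA : A.PosDef) (hM : IsUnit M.det)
    (hMMA : (M + Mᵀ - A).PosDef)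
    (hP : P.rank = nc)
    (Mtil : Matrix (Fin n) (Fin n) ℝ)
    (hMtil : Mtil = Mᵀ * (M + Mᵀ - A)⁻¹ * M)
    (Pi : Matrix (Fin n) (Fin n) ℝ) (hPi : Pi = P * (Pᵀ * Mtil * P)⁻¹ * Pᵀ * Mtil)
    (KTG : ℝ)
    (hK : IsGreatest {r : ℝ | ∃ v : Fin n → ℝ, v ≠ 0 ∧
        r = (enorm Mtil ((1 - Pi) *ᵥ v)) ^ 2 / (enorm A v) ^ 2} KTG) :
    IsGreatest (spectrum ℝ ((A⁻¹ * Mtil - 1) * (1 - Pi))) (KTG - 1) := by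
  -- basic notation
  set W := M + Mᵀ - A with hWdef
  have hAs : Aᵀ = A := real_herm_iff.mp hA.isHermitian
  have hAdet : IsUnit A.det := (Matrix.isUnit_iff_isUnit_det A).mp hA.isUnit
  have hWs : Wᵀ = W := real_herm_iff.mp hMMA.isHermitian
  have hWdet : IsUnit W.det := (Matrix.isUnit_iff_isUnit_det W).mp hMMA.isUnit
  have hWinv : (W⁻¹).PosDef := hMMA.inv
  have hWinvs : (W⁻¹)ᵀ = W⁻¹ := real_herm_iff.mp hWinv.isHermitian
  -- Mtil symmetric
  have hMts : Mtilᵀ = Mtil := by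
    rw [hMtil, Matrix.transpose_mul, Matrix.transpose_mul, Matrix.transpose_transpose,
      hWinvs, Matrix.mul_assoc]
  -- M is injective on vectors
  have hMinj : ∀ x : Fin n → ℝ, x ≠ 0 → M *ᵥ x ≠ 0 := by
    intro x hx
    have hinj : Function.Injective M.mulVec :=
      Matrix.mulVec_injective_iff_isUnit.mpr ((Matrix.isUnit_iff_isUnit_det M).mpr hM)
    exact (hinj.ne_iff' (Matrix.mulVec_zero M)).mpr hx
  -- Mtil is PD
  have hMtpd : Mtil.PosDef := by
    refine Matrix.PosDef.of_dotProduct_mulVec_pos (real_herm_iff.mpr hMts) fun x hx => ?_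
    simp only [star_trivial]
    have : x ⬝ᵥ Mtil *ᵥ x = (M *ᵥ x) ⬝ᵥ W⁻¹ *ᵥ (M *ᵥ x) := by
      rw [hMtil, ← Matrix.mulVec_mulVec, ← Matrix.mulVec_mulVec, dot_shift]
    rw [this]
    simpa only [star_trivial] using hWinv.dotProduct_mulVec_pos (hMinj x hx)
  -- P injective
  have hPinj : ∀ x : Fin nc → ℝ, x ≠ 0 → P *ᵥ x ≠ 0 := by
    have hker : LinearMap.ker P.mulVecLin = ⊥ := by
      have hrn := LinearMap.finrank_range_add_finrank_ker P.mulVecLin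
      have hr : Module.finrank ℝ (LinearMap.range P.mulVecLin) = nc := hP
      have hc : Module.finrank ℝ (Fin nc → ℝ) = nc := by
        rw [Module.finrank_pi ℝ, Fintype.card_fin]
      rw [hr, hc] at hrn
      have h0 : Module.finrank ℝ (LinearMap.ker P.mulVecLin) = 0 := by omega
      exact Submodule.finrank_eq_zero.mp h0
    intro x hx hPx
    have hmem : x ∈ LinearMap.ker P.mulVecLin := by
      rw [LinearMap.mem_ker]
      simpa using hPx
    rw [hker, Submodule.mem_bot] at hmem
    exact hx hmem
  -- PᵀMtilP PD and invertible
  have hPMP : (Pᵀ * Mtil * P).PosDef := by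
    refine Matrix.PosDef.of_dotProduct_mulVec_pos (real_herm_iff.mpr ?_) fun x hx => ?_
    · rw [Matrix.transpose_mul, Matrix.transpose_mul, Matrix.transpose_transpose, hMts,
        Matrix.mul_assoc]
    · simp only [star_trivial]
      have : x ⬝ᵥ (Pᵀ * Mtil * P) *ᵥ x = (P *ᵥ x) ⬝ᵥ Mtil *ᵥ (P *ᵥ x) := by
        rw [← Matrix.mulVec_mulVec, ← Matrix.mulVec_mulVec, dot_shift]
      rw [this]
      simpa only [star_trivial] using hMtpd.dotProduct_mulVec_pos (hPinj x hx)
  have hPMPdet : IsUnit (Pᵀ * Mtil * P).det :=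
    (Matrix.isUnit_iff_isUnit_det _).mp hPMP.isUnit
  -- projection identities
  have hcan : ∀ Z : Matrix (Fin nc) (Fin n) ℝ,
      Pᵀ * (Mtil * (P * ((Pᵀ * (Mtil * P))⁻¹ * Z))) = Z := by
    intro Z
    simp only [← Matrix.mul_assoc]
    rw [Matrix.mul_nonsing_inv _ hPMPdet, Matrix.one_mul]
  have hPi2 : Pi * Pi = Pi := by
    rw [hPi]
    simp only [Matrix.mul_assoc]
    rw [hcan (Pᵀ * Mtil)]
  have hPit : Piᵀ * Mtil = Mtil * Pi := by
    have hNs : ((Pᵀ * Mtil * P)⁻¹)ᵀ = (Pᵀ * Mtil * P)⁻¹ := by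
      rw [Matrix.transpose_nonsing_inv, real_herm_iff.mp hPMP.isHermitian]
    rw [hPi]
    simp only [Matrix.transpose_mul, Matrix.transpose_transpose, hNs, hMts]
    simp only [Matrix.mul_assoc]
  have hPiB : Pi * (1 - Pi) = 0 := by rw [Matrix.mul_sub, Matrix.mul_one, hPi2, sub_self]
  have hBB : (1 - Pi) * (1 - Pi) = (1 - Pi) := by
    rw [Matrix.sub_mul, Matrix.one_mul, hPiB, sub_zero]
  have hBtM : (1 - Pi)ᵀ * Mtil = Mtil * (1 - Pi) := by
    rw [Matrix.transpose_sub, Matrix.transpose_one, Matrix.sub_mul, Matrix.one_mul, hPit,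
      Matrix.mul_sub, Matrix.mul_one]
  -- S := Mtil * (1 - Pi)
  have hSs : (Mtil * (1 - Pi))ᵀ = Mtil * (1 - Pi) := by
    rw [Matrix.transpose_mul, hMts, hBtM]
  have hSeq : (1 - Pi)ᵀ * Mtil * (1 - Pi) = Mtil * (1 - Pi) := by
    rw [hBtM, Matrix.mul_assoc, hBB]
  have hSpsd : (Mtil * (1 - Pi)).PosSemidef := by
    rw [← hSeq, ← Matrix.conjTranspose_eq_transpose_of_trivial]
    exact hMtpd.posSemidef.conjTranspose_mul_mul_same (1 - Pi)
  -- quadratic form identities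
  have hqA : ∀ v : Fin n → ℝ, (enorm A v) ^ 2 = v ⬝ᵥ A *ᵥ v := by
    intro v
    rw [_root_.enorm, Real.sq_sqrt]
    simpa only [star_trivial] using hA.posSemidef.dotProduct_mulVec_nonneg v
  have hqS : ∀ v : Fin n → ℝ,
      (enorm Mtil ((1 - Pi) *ᵥ v)) ^ 2 = v ⬝ᵥ (Mtil * (1 - Pi)) *ᵥ v := by
    intro v
    rw [_root_.enorm, Real.sq_sqrt]
    · rw [← dot_shift (1 - Pi) v, Matrix.mulVec_mulVec, Matrix.mulVec_mulVec, hSeq]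
    · simpa only [star_trivial] using hMtpd.posSemidef.dotProduct_mulVec_nonneg ((1 - Pi) *ᵥ v)
  -- KTG is an upper bound of the Rayleigh quotient
  have hKub : ∀ v : Fin n → ℝ, v ⬝ᵥ (Mtil * (1 - Pi)) *ᵥ v ≤ KTG * (v ⬝ᵥ A *ᵥ v) := by
    intro v
    rcases eq_or_ne v 0 with rfl | hv
    · simp
    · have hmem := hK.2 ⟨v, hv, rfl⟩
      have hApos : 0 < v ⬝ᵥ A *ᵥ v := by
        simpa only [star_trivial] using hA.dotProduct_mulVec_pos hv
      rw [hqA, hqS, div_le_iff₀ hApos] at hmem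
      linarith [hmem]
  -- Mtil - A is PSD
  have hMA : (Mtil - A).PosSemidef := by
    have hid : (W - M)ᵀ * W⁻¹ * (W - M) = Mtil - A := by
      have h1 : Mᵀ * W⁻¹ * W = Mᵀ := by
        rw [Matrix.mul_assoc, Matrix.nonsing_inv_mul _ hWdet, Matrix.mul_one]
      rw [Matrix.transpose_sub, hWs, Matrix.sub_mul, Matrix.sub_mul,
        Matrix.mul_nonsing_inv _ hWdet, Matrix.one_mul, Matrix.mul_sub, h1, ← hMtil,
        hWdef]
      abel
    rw [← hid, ← Matrix.conjTranspose_eq_transpose_of_trivial]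
    exact hWinv.posSemidef.conjTranspose_mul_mul_same (W - M)
  -- KTG ≥ 1
  have hK1 : 1 ≤ KTG := by
    obtain ⟨v, hv, hker⟩ : ∃ v : Fin n → ℝ, v ≠ 0 ∧ (Pᵀ * Mtil) *ᵥ v = 0 := by
      have hnotinj : ¬ Function.Injective (Pᵀ * Mtil).mulVecLin := by
        intro hinj
        have := LinearMap.finrank_le_finrank_of_injective hinj
        simp only [Module.finrank_pi ℝ, Fintype.card_fin] at this
        omega
      rw [Function.not_injective_iff] at hnotinj
      obtain ⟨a, b, hab, hne⟩ := hnotinj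
      refine ⟨a - b, sub_ne_zero_of_ne hne, ?_⟩
      have : (Pᵀ * Mtil).mulVecLin (a - b) = 0 := by rw [map_sub, hab, sub_self]
      simpa only [Matrix.mulVecLin_apply] using this
    have hPiv : Pi *ᵥ v = 0 := by
      have : Pi = (P * (Pᵀ * Mtil * P)⁻¹) * (Pᵀ * Mtil) := by
        rw [hPi]; simp only [Matrix.mul_assoc]
      rw [this, ← Matrix.mulVec_mulVec, hker, Matrix.mulVec_zero]
    have hBv : (1 - Pi) *ᵥ v = v := by
      rw [Matrix.sub_mulVec, Matrix.one_mulVec, hPiv, sub_zero]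
    have hApos : 0 < v ⬝ᵥ A *ᵥ v := by simpa only [star_trivial] using hA.dotProduct_mulVec_pos hv
    have hMv : v ⬝ᵥ A *ᵥ v ≤ v ⬝ᵥ Mtil *ᵥ v := by
      have := hMA.dotProduct_mulVec_nonneg v
      simp only [star_trivial, Matrix.sub_mulVec, dotProduct_sub] at this
      linarith
    have hmem := hK.2 ⟨v, hv, rfl⟩
    rw [hqA, hBv] at hmem
    have henorm : (enorm Mtil v) ^ 2 = v ⬝ᵥ Mtil *ᵥ v := by
      rw [_root_.enorm, Real.sq_sqrt]
      simpa only [star_trivial] using hMtpd.posSemidef.dotProduct_mulVec_nonneg v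
    rw [henorm] at hmem
    calc (1 : ℝ) ≤ (v ⬝ᵥ Mtil *ᵥ v) / (v ⬝ᵥ A *ᵥ v) := (one_le_div hApos).mpr hMv
    _ ≤ KTG := hmem
  -- mulVec formula for E
  have hAinvA : A⁻¹ * A = 1 := Matrix.nonsing_inv_mul _ hAdet
  have hAAinv : A * A⁻¹ = 1 := Matrix.mul_nonsing_inv _ hAdet
  have hEv : ∀ u : Fin n → ℝ, ((A⁻¹ * Mtil - 1) * (1 - Pi)) *ᵥ u
      = A⁻¹ *ᵥ (Mtil *ᵥ ((1 - Pi) *ᵥ u)) - (1 - Pi) *ᵥ u := by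
    intro u
    rw [← Matrix.mulVec_mulVec, Matrix.sub_mulVec, Matrix.one_mulVec,
      ← Matrix.mulVec_mulVec]
  constructor
  · -- membership : KTG - 1 is an eigenvalue
    obtain ⟨v₀, hv₀, hKval⟩ := hK.1
    have hApos : 0 < v₀ ⬝ᵥ A *ᵥ v₀ := by simpa only [star_trivial] using hA.dotProduct_mulVec_pos hv₀
    have hSv : v₀ ⬝ᵥ (Mtil * (1 - Pi)) *ᵥ v₀ = KTG * (v₀ ⬝ᵥ A *ᵥ v₀) := by
      rw [hqA, hqS] at hKval
      field_simp at hKval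
      linarith [hKval]
    -- stationarity
    have hstat : (Mtil * (1 - Pi)) *ᵥ v₀ = KTG • (A *ᵥ v₀) := by
      have hQpsd : (KTG • A - Mtil * (1 - Pi)).PosSemidef := by
        refine Matrix.PosSemidef.of_dotProduct_mulVec_nonneg (real_herm_iff.mpr ?_) fun x => ?_
        · rw [Matrix.transpose_sub, Matrix.transpose_smul, hAs, hSs]
        · simp only [star_trivial, Matrix.sub_mulVec, Matrix.smul_mulVec,
            dotProduct_sub, dotProduct_smul, smul_eq_mul]
          linarith [hKub x]
      have hzero : star v₀ ⬝ᵥ (KTG • A - Mtil * (1 - Pi)) *ᵥ v₀ = 0 := by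
        simp only [star_trivial, Matrix.sub_mulVec, Matrix.smul_mulVec,
          dotProduct_sub, dotProduct_smul, smul_eq_mul]
        linarith [hSv]
      have := (hQpsd.dotProduct_mulVec_zero_iff v₀).mp hzero
      rw [Matrix.sub_mulVec, Matrix.smul_mulVec, sub_eq_zero] at this
      exact this.symm
    set w₀ := (1 - Pi) *ᵥ v₀ with hw₀def
    have hMw₀ : Mtil *ᵥ w₀ = KTG • (A *ᵥ v₀) := by
      rw [hw₀def, Matrix.mulVec_mulVec, hstat]
    have hBw₀ : (1 - Pi) *ᵥ w₀ = w₀ := by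
      rw [hw₀def, Matrix.mulVec_mulVec, hBB]
    have hAinvK : A⁻¹ *ᵥ (KTG • (A *ᵥ v₀)) = KTG • v₀ := by
      rw [Matrix.mulVec_smul, Matrix.mulVec_mulVec, hAinvA, Matrix.one_mulVec]
    have hEv₀ : ((A⁻¹ * Mtil - 1) * (1 - Pi)) *ᵥ v₀ = KTG • v₀ - w₀ := by
      rw [hEv, ← hw₀def, hMw₀, hAinvK]
    have hEw₀ : ((A⁻¹ * Mtil - 1) * (1 - Pi)) *ᵥ w₀ = KTG • v₀ - w₀ := by
      rw [hEv, hBw₀, hMw₀, hAinvK]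
    rw [matrix_mem_spectrum_iff]
    rcases eq_or_ne (KTG • v₀ - w₀) 0 with hz | hz
    · -- degenerate case : KTG = 1 and v₀ is an eigenvector for 0
      have hKw : (KTG - 1) • w₀ = 0 := by
        have h1 : (1 - Pi) *ᵥ (KTG • v₀) = (1 - Pi) *ᵥ w₀ := by
          rw [show KTG • v₀ = w₀ from by linear_combination (norm := module) hz]
        rw [Matrix.mulVec_smul, ← hw₀def, hBw₀] at h1
        rw [sub_smul, one_smul, h1, sub_self]
      have hw₀ne : w₀ ≠ 0 := by
        intro h0
        apply hv₀
        have : KTG • v₀ = 0 := by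
          rw [show KTG • v₀ = w₀ from by linear_combination (norm := module) hz, h0]
        exact (smul_eq_zero.mp this).resolve_left (by linarith)
      have hKTG1 : KTG = 1 := by
        rcases smul_eq_zero.mp hKw with h | h
        · linarith [sub_eq_zero.mp (by linarith [h] : KTG - 1 = 0)]
        · exact absurd h hw₀ne
      refine ⟨v₀, hv₀, ?_⟩
      rw [hEv₀, hKTG1]
      simp [show w₀ = KTG • v₀ from by linear_combination (norm := module) - hz, hKTG1]
    · refine ⟨KTG • v₀ - w₀, hz, ?_⟩
      rw [Matrix.mulVec_sub, Matrix.mulVec_smul, hEv₀, hEw₀]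
      module
  · -- upper bound
    intro μ hμ
    rw [matrix_mem_spectrum_iff] at hμ
    obtain ⟨v, hv, hEvμ⟩ := hμ
    rcases eq_or_ne μ 0 with rfl | hμ0
    · linarith
    set w := (1 - Pi) *ᵥ v with hwdef
    have hw : w ≠ 0 := by
      intro h0
      apply hμ0
      have : ((A⁻¹ * Mtil - 1) * (1 - Pi)) *ᵥ v = 0 := by
        rw [hEv, ← hwdef, h0]
        simp
      rw [hEvμ] at this
      rcases smul_eq_zero.mp this with h | h
      · exact h
      · exact absurd h hv
    have hBw : (1 - Pi) *ᵥ w = w := by rw [hwdef, Matrix.mulVec_mulVec, hBB]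
    have hm : 0 < w ⬝ᵥ Mtil *ᵥ w := by simpa only [star_trivial] using hMtpd.dotProduct_mulVec_pos hw
    set u := A⁻¹ *ᵥ (Mtil *ᵥ w) with hudef
    have hAu : A *ᵥ u = Mtil *ᵥ w := by
      rw [hudef, Matrix.mulVec_mulVec, Matrix.mulVec_mulVec, hAAinv, Matrix.one_mul]
    have hSw : (Mtil * (1 - Pi)) *ᵥ w = Mtil *ᵥ w := by
      rw [← Matrix.mulVec_mulVec, hBw]
    -- key scalar identity
    have hkey : u ⬝ᵥ A *ᵥ u - w ⬝ᵥ Mtil *ᵥ w = μ * (w ⬝ᵥ Mtil *ᵥ w) := by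
      have h1 : w ⬝ᵥ Mtil *ᵥ ((1 - Pi) *ᵥ (((A⁻¹ * Mtil - 1) * (1 - Pi)) *ᵥ v))
          = μ * (w ⬝ᵥ Mtil *ᵥ w) := by
        rw [hEvμ, Matrix.mulVec_smul, ← hwdef, Matrix.mulVec_smul, dotProduct_smul,
          smul_eq_mul]
      have h2 : w ⬝ᵥ Mtil *ᵥ ((1 - Pi) *ᵥ (((A⁻¹ * Mtil - 1) * (1 - Pi)) *ᵥ v))
          = u ⬝ᵥ A *ᵥ u - w ⬝ᵥ Mtil *ᵥ w := by
        rw [hEv, ← hwdef, ← hudef, Matrix.mulVec_sub, Matrix.mulVec_sub, hBw,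
          dotProduct_sub]
        congr 1
        -- w ⬝ᵥ Mtil *ᵥ ((1 - Pi) *ᵥ u) = u ⬝ᵥ A *ᵥ u
        rw [Matrix.mulVec_mulVec, sym_dot hSs w u, hSw, hAu]
      rw [← h2, h1]
    -- Cauchy-Schwarz bound
    have halpha : u ⬝ᵥ A *ᵥ u = u ⬝ᵥ (Mtil * (1 - Pi)) *ᵥ w := by rw [hSw, hAu]
    have hcs := psd_cs hSpsd u w
    have hwSw : w ⬝ᵥ (Mtil * (1 - Pi)) *ᵥ w = w ⬝ᵥ Mtil *ᵥ w := by rw [hSw]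
    have hann : 0 ≤ u ⬝ᵥ A *ᵥ u := by simpa only [star_trivial] using hA.posSemidef.dotProduct_mulVec_nonneg u
    rcases eq_or_lt_of_le hann with h0 | hpos
    · -- u ⬝ᵥ A u = 0 : then μ = -1
      have : μ * (w ⬝ᵥ Mtil *ᵥ w) = - (w ⬝ᵥ Mtil *ᵥ w) := by linarith [hkey]
      have hμm : μ = -1 := by
        have h2 : (μ + 1) * (w ⬝ᵥ Mtil *ᵥ w) = 0 := by nlinarith [hkey, this]
        rcases mul_eq_zero.mp h2 with h | h
        · linarith
        · exact absurd h (ne_of_gt hm)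
      linarith
    · have hc : (u ⬝ᵥ A *ᵥ u)^2 ≤ (KTG * (u ⬝ᵥ A *ᵥ u)) * (w ⬝ᵥ Mtil *ᵥ w) := by
        calc (u ⬝ᵥ A *ᵥ u)^2 = (u ⬝ᵥ (Mtil * (1 - Pi)) *ᵥ w)^2 := by rw [halpha]
        _ ≤ (u ⬝ᵥ (Mtil * (1 - Pi)) *ᵥ u) * (w ⬝ᵥ (Mtil * (1 - Pi)) *ᵥ w) := hcs
        _ ≤ (KTG * (u ⬝ᵥ A *ᵥ u)) * (w ⬝ᵥ Mtil *ᵥ w) := by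
            rw [hwSw]
            have h1 := hKub u
            nlinarith [hm, h1, hkey]
      have hle : u ⬝ᵥ A *ᵥ u ≤ KTG * (w ⬝ᵥ Mtil *ᵥ w) := by
        nlinarith [hc, hpos]
      nlinarith [hkey, hm, hle]
end

section
/- Let A ∈ ℝ^{n×n} be SPD and M ∈ ℝ^{n×n} nonsingular with M + Mᵀ − A SPD, and set M̃ := Mᵀ(M+Mᵀ−A)^{-1}M. Then the A-energy operator norm of the two-step smoothing iteration matrix satisfies ‖(I−M^{-T}A)(I−M^{-1}A)‖_A = 1 − λ_min(M̃^{-1}A). -/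
open Matrix

lemma mem_spec_iff {n : ℕ} (P : Matrix (Fin n) (Fin n) ℝ) (μ : ℝ) :
    μ ∈ spectrum ℝ P ↔ ∃ v, v ≠ 0 ∧ P *ᵥ v = μ • v := by
  rw [spectrum.mem_iff, Algebra.algebraMap_eq_smul_one, Matrix.isUnit_iff_isUnit_det,
    isUnit_iff_ne_zero, not_ne_iff, ← Matrix.exists_mulVec_eq_zero_iff]
  constructor
  · rintro ⟨v, hv, h⟩
    refine ⟨v, hv, ?_⟩
    rw [Matrix.sub_mulVec, Matrix.smul_mulVec, Matrix.one_mulVec, sub_eq_zero] at h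
    exact h.symm
  · rintro ⟨v, hv, h⟩
    exact ⟨v, hv, by
      rw [Matrix.sub_mulVec, Matrix.smul_mulVec, Matrix.one_mulVec, h, sub_self]⟩

lemma spec_conj {n : ℕ} {B : Matrix (Fin n) (Fin n) ℝ} (hB : IsUnit B.det)
    (P : Matrix (Fin n) (Fin n) ℝ) (μ : ℝ) :
    μ ∈ spectrum ℝ (B * P * B⁻¹) ↔ μ ∈ spectrum ℝ P := by
  have hBi : B * B⁻¹ = 1 := Matrix.mul_nonsing_inv _ hB
  have hiB : B⁻¹ * B = 1 := Matrix.nonsing_inv_mul _ hB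
  rw [mem_spec_iff, mem_spec_iff]
  constructor
  · rintro ⟨w, hw, h⟩
    refine ⟨B⁻¹ *ᵥ w, fun h0 => hw ?_, ?_⟩
    · have : B *ᵥ (B⁻¹ *ᵥ w) = 0 := by rw [h0, Matrix.mulVec_zero]
      rwa [Matrix.mulVec_mulVec, hBi, Matrix.one_mulVec] at this
    · have h2 := congrArg (fun x => B⁻¹ *ᵥ x) h
      simp only [Matrix.mulVec_mulVec, Matrix.mulVec_smul] at h2 ⊢
      rwa [show B⁻¹ * (B * P * B⁻¹) = P * B⁻¹ by
        rw [← mul_assoc, ← mul_assoc, hiB, one_mul]] at h2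
  · rintro ⟨v, hv, h⟩
    refine ⟨B *ᵥ v, fun h0 => hv ?_, ?_⟩
    · have : B⁻¹ *ᵥ (B *ᵥ v) = 0 := by rw [h0, Matrix.mulVec_zero]
      rwa [Matrix.mulVec_mulVec, hiB, Matrix.one_mulVec] at this
    · rw [Matrix.mulVec_mulVec, mul_assoc, hiB, mul_one, ← Matrix.mulVec_mulVec, h,
        Matrix.mulVec_smul]

lemma spec_mul_comm {n : ℕ} (P Q : Matrix (Fin n) (Fin n) ℝ) (μ : ℝ)
    (h : μ ∈ spectrum ℝ (P * Q)) : μ ∈ spectrum ℝ (Q * P) := by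
  rw [mem_spec_iff] at h ⊢
  obtain ⟨v, hv, hPv⟩ := h
  by_cases hμ : μ = 0
  · subst hμ
    have hdet : (P * Q).det = 0 := by
      rw [← Matrix.exists_mulVec_eq_zero_iff]
      exact ⟨v, hv, by rw [hPv, zero_smul]⟩
    have hdet2 : (Q * P).det = 0 := by
      rw [Matrix.det_mul] at hdet ⊢; rw [mul_comm] at hdet; exact hdet
    obtain ⟨w, hw, hQw⟩ := Matrix.exists_mulVec_eq_zero_iff.mpr hdet2
    exact ⟨w, hw, by rw [hQw, zero_smul]⟩
  · refine ⟨Q *ᵥ v, fun h0 => ?_, ?_⟩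
    · have : (P * Q) *ᵥ v = 0 := by
        rw [← Matrix.mulVec_mulVec, h0, Matrix.mulVec_zero]
      rw [hPv] at this
      exact hv ((smul_eq_zero.mp this).resolve_left hμ)
    · have h2 : (Q * P) *ᵥ (Q *ᵥ v) = Q *ᵥ ((P * Q) *ᵥ v) := by
        rw [Matrix.mulVec_mulVec, Matrix.mulVec_mulVec, mul_assoc]
      rw [h2, hPv, Matrix.mulVec_smul]

theorem stmt_11 {n : ℕ}
    (A M : Matrix (Fin n) (Fin n) ℝ)
    (hA : A.PosDef) (hM : IsUnit M.det)
    (hMMA : (M + Mᵀ - A).PosDef)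
    (Mtil : Matrix (Fin n) (Fin n) ℝ)
    (hMtil : Mtil = Mᵀ * (M + Mᵀ - A)⁻¹ * M)
    (E : Matrix (Fin n) (Fin n) ℝ)
    (hE : E = (1 - Mᵀ⁻¹ * A) * (1 - M⁻¹ * A))
    (normE : ℝ)
    (hnormE : IsGreatest {r : ℝ | ∃ v : Fin n → ℝ, v ≠ 0 ∧
        r = enorm A (E *ᵥ v) / enorm A v} normE)
    (lmin : ℝ) (hlmin : IsLeast (spectrum ℝ (Mtil⁻¹ * A)) lmin) :
    normE = 1 - lmin := by
  -- the square root of A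
  have hBex : ∃ B : Matrix (Fin n) (Fin n) ℝ, B * B = A ∧ B.PosSemidef := by
    open scoped MatrixOrder in
    exact ⟨CFC.sqrt A, CFC.sqrt_mul_sqrt_self A hA.posSemidef.nonneg,
      (CFC.sqrt_nonneg A).posSemidef⟩
  obtain ⟨B, hBBA, hBpsd⟩ := hBex
  have hBsym : Bᵀ = B := by
    rw [← Matrix.conjTranspose_eq_transpose_of_trivial]; exact hBpsd.isHermitian
  have hAdet : A.det ≠ 0 := hA.det_pos.ne'
  have hBdet : IsUnit B.det := by
    rw [isUnit_iff_ne_zero]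
    intro h0
    apply hAdet
    rw [← hBBA, Matrix.det_mul, h0, zero_mul]
  have hBi : B * B⁻¹ = 1 := Matrix.mul_nonsing_inv _ hBdet
  have hiB : B⁻¹ * B = 1 := Matrix.nonsing_inv_mul _ hBdet
  have hMi : M * M⁻¹ = 1 := Matrix.mul_nonsing_inv _ hM
  have hiM : M⁻¹ * M = 1 := Matrix.nonsing_inv_mul _ hM
  have hMtdet : IsUnit Mᵀ.det := by rwa [Matrix.det_transpose]
  have hMti : Mᵀ * Mᵀ⁻¹ = 1 := Matrix.mul_nonsing_inv _ hMtdet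
  have hWdet : IsUnit (M + Mᵀ - A).det := hMMA.det_pos.ne'.isUnit
  -- symmetrized iteration matrix
  set S : Matrix (Fin n) (Fin n) ℝ := 1 - B * M⁻¹ * B with hSdef
  have hSt : Sᵀ = 1 - B * Mᵀ⁻¹ * B := by
    rw [hSdef, Matrix.transpose_sub, Matrix.transpose_one, Matrix.transpose_mul,
      Matrix.transpose_mul, hBsym, Matrix.transpose_nonsing_inv, mul_assoc]
  -- identity 1 : B E = Sᵀ S B
  have hBE0 : B * E = (Sᵀ * S) * B := by
    rw [hE, hSt, hSdef, ← hBBA]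
    noncomm_ring
  have hT1 : B * E * B⁻¹ = Sᵀ * S := by
    rw [hBE0, mul_assoc, hBi, mul_one]
  -- inverse of Mtil
  have hMtilinv : Mtil⁻¹ = M⁻¹ * (M + Mᵀ - A) * Mᵀ⁻¹ := by
    rw [hMtil, Matrix.mul_inv_rev, Matrix.mul_inv_rev,
      Matrix.nonsing_inv_nonsing_inv _ hWdet]
    simp only [mul_assoc]
  -- identity 2 : Mtil⁻¹ A = 1 - (1 - M⁻¹A)(1 - Mᵀ⁻¹A)
  have hFG : Mtil⁻¹ * A = 1 - (1 - M⁻¹ * A) * (1 - Mᵀ⁻¹ * A) := by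
    have e1 : M⁻¹ * (M + Mᵀ - A) = 1 + M⁻¹ * Mᵀ - M⁻¹ * A := by
      rw [mul_sub, mul_add, hiM]
    have e2 : (1 + M⁻¹ * Mᵀ - M⁻¹ * A) * Mᵀ⁻¹ = Mᵀ⁻¹ + M⁻¹ - M⁻¹ * A * Mᵀ⁻¹ := by
      rw [sub_mul, add_mul, one_mul, mul_assoc M⁻¹ Mᵀ Mᵀ⁻¹, hMti, mul_one]
    rw [hMtilinv, e1, e2]
    noncomm_ring
  -- identity 2' : B (Mtil⁻¹ A) B⁻¹ = 1 - S Sᵀ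
  have hU0 : B * (Mtil⁻¹ * A) = (1 - S * Sᵀ) * B := by
    rw [hFG, hSt, hSdef, ← hBBA]
    noncomm_ring
  have hU : B * (Mtil⁻¹ * A) * B⁻¹ = 1 - S * Sᵀ := by
    rw [hU0, mul_assoc, hBi, mul_one]
  -- spectrum correspondence
  have hspec : ∀ μ : ℝ, μ ∈ spectrum ℝ (Mtil⁻¹ * A) ↔ (1 - μ) ∈ spectrum ℝ (S * Sᵀ) := by
    intro μ
    rw [← spec_conj hBdet (Mtil⁻¹ * A) μ, hU, mem_spec_iff, mem_spec_iff]
    constructor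
    · rintro ⟨v, hv, h⟩
      rw [Matrix.sub_mulVec, Matrix.one_mulVec] at h
      refine ⟨v, hv, ?_⟩
      rw [sub_smul, one_smul, ← h]
      abel
    · rintro ⟨v, hv, h⟩
      refine ⟨v, hv, ?_⟩
      rw [Matrix.sub_mulVec, Matrix.one_mulVec, h, sub_smul, one_smul]
      abel
  set c : ℝ := 1 - lmin with hcdef
  have hcspec : c ∈ spectrum ℝ (S * Sᵀ) := (hspec lmin).mp hlmin.1
  -- c ≥ 0
  have hc0 : 0 ≤ c := by
    obtain ⟨w, hw, hww⟩ := (mem_spec_iff _ _).mp hcspec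
    have h1 : w ⬝ᵥ ((S * Sᵀ) *ᵥ w) = (Sᵀ *ᵥ w) ⬝ᵥ (Sᵀ *ᵥ w) := by
      rw [← Matrix.mulVec_mulVec, Matrix.dotProduct_mulVec, ← Matrix.mulVec_transpose]
    have h2 : w ⬝ᵥ ((S * Sᵀ) *ᵥ w) = c * (w ⬝ᵥ w) := by
      rw [hww, dotProduct_smul, smul_eq_mul]
    have h3 : 0 ≤ (Sᵀ *ᵥ w) ⬝ᵥ (Sᵀ *ᵥ w) := Finset.sum_nonneg fun i _ => mul_self_nonneg _
    have h4 : 0 < w ⬝ᵥ w := by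
      rcases lt_or_eq_of_le (Finset.sum_nonneg fun i _ => mul_self_nonneg (w i)) with h | h
      · exact h
      · exact absurd (dotProduct_self_eq_zero.mp h.symm) hw
    nlinarith [h1, h2, h3, h4]
  -- the matrix T = Sᴴ S and its eigenvalues
  have hSHt : Sᴴ = Sᵀ := Matrix.conjTranspose_eq_transpose_of_trivial S
  have hTpsd : (Sᵀ * S).PosSemidef := by rw [← hSHt]; exact Matrix.posSemidef_conjTranspose_mul_self S
  have hTH : (Sᵀ * S).IsHermitian := hTpsd.isHermitian
  set T : Matrix (Fin n) (Fin n) ℝ := Sᵀ * S with hTdef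
  set d : Fin n → ℝ := hTH.eigenvalues with hddef
  have hd0 : ∀ i, 0 ≤ d i := hTpsd.eigenvalues_nonneg
  have hdc : ∀ i, d i ≤ c := by
    intro i
    have h1 : d i ∈ spectrum ℝ T := hTH.eigenvalues_mem_spectrum_real i
    have h2 : d i ∈ spectrum ℝ (S * Sᵀ) := spec_mul_comm _ _ _ h1
    have h3 : (1 - d i) ∈ spectrum ℝ (Mtil⁻¹ * A) := by
      rw [hspec]
      simpa using h2
    have := hlmin.2 h3
    simp only [hcdef]
    linarith
  -- the quadratic bound via the spectral theorem
  have hbound : ∀ w : Fin n → ℝ, (T *ᵥ w) ⬝ᵥ (T *ᵥ w) ≤ c ^ 2 * (w ⬝ᵥ w) := by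
    intro w
    set V : Matrix (Fin n) (Fin n) ℝ := (hTH.eigenvectorUnitary : Matrix (Fin n) (Fin n) ℝ)
      with hVdef
    have hVs : V * star V = 1 := Matrix.mem_unitaryGroup_iff.mp hTH.eigenvectorUnitary.2
    have hsV : star V * V = 1 := Matrix.mem_unitaryGroup_iff'.mp hTH.eigenvectorUnitary.2
    have hspecT : T = V * Matrix.diagonal d * star V := by
      have := hTH.spectral_theorem
      simpa using this
    have hTT : T * T = V * Matrix.diagonal (fun i => d i * d i) * star V := by
      rw [hspecT]
      calc V * Matrix.diagonal d * star V * (V * Matrix.diagonal d * star V)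
          = V * (Matrix.diagonal d * (star V * V) * Matrix.diagonal d) * star V := by
            simp only [mul_assoc]
        _ = V * Matrix.diagonal (fun i => d i * d i) * star V := by
            rw [hsV, mul_one, Matrix.diagonal_mul_diagonal]
    have hPSD : (c ^ 2 • (1 : Matrix (Fin n) (Fin n) ℝ) - T * T).PosSemidef := by
      have heq : c ^ 2 • (1 : Matrix (Fin n) (Fin n) ℝ) - T * T
          = V * Matrix.diagonal (fun i => c ^ 2 - d i * d i) * Vᴴ := by
        rw [hTT, ← Matrix.star_eq_conjTranspose]
        have h1 : c ^ 2 • (1 : Matrix (Fin n) (Fin n) ℝ)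
            = V * Matrix.diagonal (fun _ => c ^ 2) * star V := by
          rw [← Matrix.smul_one_eq_diagonal, Matrix.mul_smul, smul_mul_assoc, mul_one, hVs]
        rw [h1, ← Matrix.diagonal_sub, ← Matrix.sub_mul, ← Matrix.mul_sub]
      rw [heq]
      apply Matrix.PosSemidef.mul_mul_conjTranspose_same
      rw [Matrix.posSemidef_diagonal_iff]
      intro i
      have := hd0 i
      have := hdc i
      nlinarith
    have h2 := hPSD.dotProduct_mulVec_nonneg w
    simp only [Matrix.sub_mulVec, Matrix.smul_mulVec, Matrix.one_mulVec, star_trivial,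
      dotProduct_sub, dotProduct_smul, smul_eq_mul] at h2
    have hTsym : Tᵀ = T := by
      rw [← Matrix.conjTranspose_eq_transpose_of_trivial]; exact hTH
    have h3 : (T *ᵥ w) ⬝ᵥ (T *ᵥ w) = w ⬝ᵥ ((T * T) *ᵥ w) := by
      rw [Matrix.dotProduct_mulVec (T *ᵥ w) T w, ← Matrix.mulVec_transpose, hTsym,
        Matrix.mulVec_mulVec, dotProduct_comm]
    rw [h3]
    linarith
  -- relating enorm to the symmetrized picture
  have henA : ∀ u : Fin n → ℝ, u ⬝ᵥ (A *ᵥ u) = (B *ᵥ u) ⬝ᵥ (B *ᵥ u) := by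
    intro u
    rw [← hBBA, ← Matrix.mulVec_mulVec, Matrix.dotProduct_mulVec u B, ← Matrix.mulVec_transpose,
      hBsym]
  have hBE : B * E = T * B := hBE0
  have hdpos : ∀ u : Fin n → ℝ, u ≠ 0 → 0 < u ⬝ᵥ u := by
    intro u hu
    rcases lt_or_eq_of_le (Finset.sum_nonneg fun i _ => mul_self_nonneg (u i)) with h | h
    · exact h
    · exact absurd (dotProduct_self_eq_zero.mp h.symm) hu
  -- ratio formula
  have hratio : ∀ v : Fin n → ℝ, v ≠ 0 → enorm A (E *ᵥ v) / enorm A v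
      = Real.sqrt ((T *ᵥ (B *ᵥ v)) ⬝ᵥ (T *ᵥ (B *ᵥ v))) / Real.sqrt ((B *ᵥ v) ⬝ᵥ (B *ᵥ v)) := by
    intro v hv
    unfold _root_.enorm
    rw [henA, henA]
    congr 2
    rw [Matrix.mulVec_mulVec, hBE, ← Matrix.mulVec_mulVec]
  -- upper bound : normE ≤ c
  have hub : normE ≤ c := by
    obtain ⟨v, hv, hr⟩ := hnormE.1
    rw [hr, hratio v hv]
    set w := B *ᵥ v with hwdef
    have hw : w ≠ 0 := by
      intro h0
      apply hv
      have : B⁻¹ *ᵥ (B *ᵥ v) = 0 := by rw [← hwdef, h0, Matrix.mulVec_zero]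
      rwa [Matrix.mulVec_mulVec, hiB, Matrix.one_mulVec] at this
    have hwpos : 0 < w ⬝ᵥ w := hdpos w hw
    have hb := hbound w
    have hs1 : Real.sqrt ((T *ᵥ w) ⬝ᵥ (T *ᵥ w)) ≤ c * Real.sqrt (w ⬝ᵥ w) := by
      have : c * Real.sqrt (w ⬝ᵥ w) = Real.sqrt (c ^ 2 * (w ⬝ᵥ w)) := by
        rw [Real.sqrt_mul (sq_nonneg c), Real.sqrt_sq hc0]
      rw [this]
      exact Real.sqrt_le_sqrt hb
    rw [div_le_iff₀ (Real.sqrt_pos.mpr hwpos)]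
    exact hs1
  -- lower bound : c ≤ normE
  have hlb : c ≤ normE := by
    have hcT : c ∈ spectrum ℝ T := spec_mul_comm _ _ _ hcspec
    obtain ⟨u, hu, hTu⟩ := (mem_spec_iff _ _).mp hcT
    have hupos : 0 < u ⬝ᵥ u := hdpos u hu
    set v : Fin n → ℝ := B⁻¹ *ᵥ u with hvdef
    have hBv : B *ᵥ v = u := by
      rw [hvdef, Matrix.mulVec_mulVec, hBi, Matrix.one_mulVec]
    have hv : v ≠ 0 := by
      intro h0
      apply hu
      rw [← hBv, h0, Matrix.mulVec_zero]
    apply hnormE.2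
    refine ⟨v, hv, ?_⟩
    rw [hratio v hv, hBv, hTu]
    have h1 : (c • u) ⬝ᵥ (c • u) = c ^ 2 * (u ⬝ᵥ u) := by
      rw [smul_dotProduct, dotProduct_smul, smul_eq_mul, smul_eq_mul]
      ring
    rw [h1, Real.sqrt_mul (sq_nonneg c), Real.sqrt_sq hc0,
      mul_div_assoc, div_self (Real.sqrt_pos.mpr hupos).ne', mul_one]
  linarith
end

section
/- Let M̃ ∈ ℝ^{n×n} be SPD, P ∈ ℝ^{n×n_c} of full column rank, and S ∈ ℝ^{n×(n−n_c)} of full column rank with PᵀS = 0. Then PᵀM̃^{-1}P = (PᵀP)(PᵀM̃P − PᵀM̃S(SᵀM̃S)^{-1}SᵀM̃P)^{-1}(PᵀP). -/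
open Matrix

lemma aux_posDef_transpose_mul_mul {n m : Type*} [Fintype n] [Fintype m]
    {M : Matrix n n ℝ} (hM : M.PosDef) (B : Matrix n m ℝ)
    (hB : Function.Injective B.mulVec) : (Bᵀ * M * B).PosDef := by
  rw [Matrix.posDef_iff_dotProduct_mulVec]
  constructor
  · simpa [Matrix.conjTranspose_eq_transpose_of_trivial] using
      Matrix.isHermitian_conjTranspose_mul_mul B hM.1
  · intro x hx
    have hBx : B *ᵥ x ≠ 0 := fun h => hx (hB (by simpa using h))
    have := hM.dotProduct_mulVec_pos hBx
    simpa [← Matrix.mulVec_mulVec, Matrix.dotProduct_mulVec, Matrix.vecMul_transpose] using this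

lemma aux_mulVec_injective_of_rank {m k : ℕ} (A : Matrix (Fin m) (Fin k) ℝ)
    (hA : A.rank = k) : Function.Injective A.mulVec := by
  have h := A.mulVecLin.finrank_range_add_finrank_ker
  rw [show (Module.finrank ℝ (LinearMap.range A.mulVecLin)) = A.rank from rfl, hA] at h
  simp [Module.finrank_pi] at h
  have := LinearMap.ker_eq_bot.mp h
  exact this

lemma aux_surj {n nc : ℕ} (hnc : nc ≤ n)
    (P : Matrix (Fin n) (Fin nc) ℝ)
    (S : Matrix (Fin n) (Fin (n - nc)) ℝ)
    (hPS : Pᵀ * S = 0)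
    (hPP : Function.Injective (Pᵀ * P).mulVec)
    (hSS : Function.Injective (Sᵀ * S).mulVec)
    (v : Fin n → ℝ) : ∃ a b, v = S *ᵥ a + P *ᵥ b := by
  let L : ((Fin (n - nc) → ℝ) × (Fin nc → ℝ)) →ₗ[ℝ] (Fin n → ℝ) :=
    S.mulVecLin.comp (LinearMap.fst ℝ _ _) + P.mulVecLin.comp (LinearMap.snd ℝ _ _)
  have hLinj : Function.Injective L := by
    rw [← LinearMap.ker_eq_bot]
    refine (Submodule.eq_bot_iff _).2 ?_
    rintro ⟨a, b⟩ hab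
    have hab' : S *ᵥ a + P *ᵥ b = 0 := hab
    have h1 : (Pᵀ * S) *ᵥ a + (Pᵀ * P) *ᵥ b = 0 := by
      rw [← Matrix.mulVec_mulVec, ← Matrix.mulVec_mulVec, ← Matrix.mulVec_add, hab',
        Matrix.mulVec_zero]
    rw [hPS, Matrix.zero_mulVec, zero_add] at h1
    have hb : b = 0 := hPP (by simpa using h1)
    rw [hb, Matrix.mulVec_zero, add_zero] at hab'
    have h2 : (Sᵀ * S) *ᵥ a = 0 := by
      rw [← Matrix.mulVec_mulVec, hab', Matrix.mulVec_zero]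
    have ha : a = 0 := hSS (by simpa using h2)
    simp [ha, hb, Prod.ext_iff]
  have hfr : Module.finrank ℝ ((Fin (n - nc) → ℝ) × (Fin nc → ℝ)) =
      Module.finrank ℝ (Fin n → ℝ) := by
    simp [Module.finrank_pi, Nat.sub_add_cancel hnc]
  have hLsurj : Function.Surjective L :=
    (LinearMap.injective_iff_surjective_of_finrank_eq_finrank hfr).mp hLinj
  obtain ⟨⟨a, b⟩, hab⟩ := hLsurj v
  exact ⟨a, b, hab.symm⟩

set_option maxHeartbeats 1000000 in
theorem stmt_14 {n nc : ℕ} (hnc : nc < n)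
    (Mtil : Matrix (Fin n) (Fin n) ℝ) (hMtil : Mtil.PosDef)
    (P : Matrix (Fin n) (Fin nc) ℝ) (hP : P.rank = nc)
    (S : Matrix (Fin n) (Fin (n - nc)) ℝ) (hS : S.rank = n - nc)
    (hPS : Pᵀ * S = 0) :
    Pᵀ * Mtil⁻¹ * P =
      (Pᵀ * P) * (Pᵀ * Mtil * P -
        Pᵀ * Mtil * S * (Sᵀ * Mtil * S)⁻¹ * Sᵀ * Mtil * P)⁻¹ * (Pᵀ * P) := by
  have hMs : Mtilᵀ = Mtil := by
    exact Matrix.IsSymm.eq (by simpa [Matrix.conjTranspose_eq_transpose_of_trivial] using hMtil.1)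
  have hPinj := aux_mulVec_injective_of_rank P hP
  have hSinj := aux_mulVec_injective_of_rank S hS
  have hSP : Sᵀ * P = 0 := by
    have := congrArg Matrix.transpose hPS
    simpa using this
  -- basic PosDef facts
  have hGpd : (Sᵀ * Mtil * S).PosDef := aux_posDef_transpose_mul_mul hMtil S hSinj
  have hPPpd : (Pᵀ * P).PosDef := by
    have := aux_posDef_transpose_mul_mul (Matrix.PosDef.one) P hPinj
    simpa using this
  have hSSpd : (Sᵀ * S).PosDef := by
    have := aux_posDef_transpose_mul_mul (Matrix.PosDef.one) S hSinj
    simpa using this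
  set G : Matrix (Fin (n - nc)) (Fin (n - nc)) ℝ := Sᵀ * Mtil * S with hGdef
  set H : Matrix (Fin (n - nc)) (Fin nc) ℝ := Sᵀ * Mtil * P with hHdef
  have hHt : Pᵀ * Mtil * S = Hᵀ := by
    rw [hHdef, Matrix.transpose_mul, Matrix.transpose_mul, Matrix.transpose_transpose, hMs,
      Matrix.mul_assoc]
  have hGdU : IsUnit G.det := (Matrix.isUnit_iff_isUnit_det G).mp hGpd.isUnit
  have cG1 : G * G⁻¹ = 1 := Matrix.mul_nonsing_inv G hGdU
  have cG2 : G⁻¹ * G = 1 := Matrix.nonsing_inv_mul G hGdU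
  have hGsymm : Gᵀ = G := by
    exact Matrix.IsSymm.eq (by simpa [Matrix.conjTranspose_eq_transpose_of_trivial] using hGpd.1)
  have hGinvT : (G⁻¹)ᵀ = G⁻¹ := by rw [Matrix.transpose_nonsing_inv, hGsymm]
  set D : Matrix (Fin nc) (Fin nc) ℝ :=
    Pᵀ * Mtil * P - Pᵀ * Mtil * S * G⁻¹ * Sᵀ * Mtil * P with hDdef
  have rSS : ∀ (p : ℕ) (X : Matrix (Fin (n - nc)) (Fin p) ℝ),
      Sᵀ * (Mtil * (S * X)) = G * X := by
    intro p X
    rw [← Matrix.mul_assoc Mtil S X, ← Matrix.mul_assoc, ← Matrix.mul_assoc, ← hGdef]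
  have rPSx : ∀ (p : ℕ) (X : Matrix (Fin (n - nc)) (Fin p) ℝ),
      Pᵀ * (Mtil * (S * X)) = Hᵀ * X := by
    intro p X
    rw [← Matrix.mul_assoc Mtil S X, ← Matrix.mul_assoc, ← Matrix.mul_assoc, hHt]
  have rSP : Sᵀ * (Mtil * P) = H := by rw [← Matrix.mul_assoc, ← hHdef]
  have rPP : Pᵀ * (Mtil * P) = Pᵀ * Mtil * P := by rw [← Matrix.mul_assoc]
  have rPS : Pᵀ * (Mtil * S) = Hᵀ := by rw [← Matrix.mul_assoc, hHt]
  have cGl : ∀ (p : ℕ) (X : Matrix (Fin (n - nc)) (Fin p) ℝ), G⁻¹ * (G * X) = X := by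
    intro p X; rw [← Matrix.mul_assoc, cG2, Matrix.one_mul]
  have cGr : ∀ (p : ℕ) (X : Matrix (Fin (n - nc)) (Fin p) ℝ), G * (G⁻¹ * X) = X := by
    intro p X; rw [← Matrix.mul_assoc, cG1, Matrix.one_mul]
  have zPSx : ∀ (p : ℕ) (X : Matrix (Fin (n - nc)) (Fin p) ℝ), Pᵀ * (S * X) = 0 := by
    intro p X; rw [← Matrix.mul_assoc, hPS, Matrix.zero_mul]
  have hDeq : D = Pᵀ * Mtil * P - Hᵀ * G⁻¹ * H := by
    rw [hDdef, hHt, hHdef]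
    simp only [Matrix.mul_assoc]
  -- D is positive definite via W = P - S * (G⁻¹ * H)
  set W : Matrix (Fin n) (Fin nc) ℝ := P - S * (G⁻¹ * H) with hWdef
  have hPW : Pᵀ * W = Pᵀ * P := by
    rw [hWdef, Matrix.mul_sub, ← Matrix.mul_assoc, hPS, Matrix.zero_mul, sub_zero]
  have hWinj : Function.Injective W.mulVec := by
    intro x y hxy
    have hPPinj : Function.Injective (Pᵀ * P).mulVec :=
      Matrix.mulVec_injective_iff_isUnit.mpr hPPpd.isUnit
    apply hPPinj
    rw [← hPW, ← Matrix.mulVec_mulVec, ← Matrix.mulVec_mulVec, hxy]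
  have hWT : Wᵀ = Pᵀ - Hᵀ * (G⁻¹ * Sᵀ) := by
    rw [hWdef, Matrix.transpose_sub, Matrix.transpose_mul, Matrix.transpose_mul, hGinvT,
      Matrix.mul_assoc]
  have hWD : Wᵀ * Mtil * W = D := by
    rw [hDeq, hWdef, hWT]
    simp only [Matrix.sub_mul, Matrix.mul_sub, Matrix.mul_assoc, rSS, rSP, rPSx, cGl, cGr]
    abel
  have hDpd : D.PosDef := hWD ▸ aux_posDef_transpose_mul_mul hMtil W hWinj
  have hDdU : IsUnit D.det := (Matrix.isUnit_iff_isUnit_det D).mp hDpd.isUnit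
  have cD1 : D * D⁻¹ = 1 := Matrix.mul_nonsing_inv D hDdU
  have cD2 : D⁻¹ * D = 1 := Matrix.nonsing_inv_mul D hDdU
  have rSSn : Sᵀ * (Mtil * S) = G := by rw [← Matrix.mul_assoc, ← hGdef]
  have hQ : Pᵀ * (Mtil * P) = D + Hᵀ * (G⁻¹ * H) := by
    rw [hDeq]
    simp only [Matrix.mul_assoc]
    abel
  set K : Matrix (Fin n) (Fin n) ℝ :=
    S * ((G⁻¹ + G⁻¹ * (H * (D⁻¹ * (Hᵀ * G⁻¹)))) * Sᵀ) - S * (G⁻¹ * (H * (D⁻¹ * Pᵀ))) -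
      P * (D⁻¹ * (Hᵀ * (G⁻¹ * Sᵀ))) + P * (D⁻¹ * Pᵀ) with hKdef
  have hKS : K * (Mtil * S) = S := by
    rw [hKdef]
    simp only [Matrix.sub_mul, Matrix.add_mul, Matrix.mul_assoc, rSSn, rPS, cG2, cG1,
      Matrix.mul_add, Matrix.mul_one, Matrix.one_mul]
    abel
  have hKP : K * (Mtil * P) = P := by
    rw [hKdef]
    simp only [Matrix.sub_mul, Matrix.add_mul, Matrix.mul_assoc, rSP, hQ, Matrix.mul_add,
      cD2, cG2, cG1, Matrix.mul_one, Matrix.one_mul]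
    abel
  have hPPinj : Function.Injective (Pᵀ * P).mulVec :=
    Matrix.mulVec_injective_iff_isUnit.mpr hPPpd.isUnit
  have hSSinj : Function.Injective (Sᵀ * S).mulVec :=
    Matrix.mulVec_injective_iff_isUnit.mpr hSSpd.isUnit
  have hKM : K * Mtil = 1 := by
    have hz : ∀ v, (K * Mtil) *ᵥ v = v := by
      intro v
      obtain ⟨a, b, rfl⟩ := aux_surj hnc.le P S hPS hPPinj hSSinj v
      rw [Matrix.mulVec_add, Matrix.mulVec_mulVec, Matrix.mulVec_mulVec,
        Matrix.mul_assoc, Matrix.mul_assoc, hKS, hKP]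
    ext i j
    have h := congrFun (hz (Pi.single j 1)) i
    simpa [Matrix.mulVec_single, Matrix.one_apply, Pi.single_apply, eq_comm] using h
  have hMinv : Mtil⁻¹ = K := Matrix.inv_eq_left_inv hKM
  rw [hMinv, hKdef]
  simp only [Matrix.mul_assoc, Matrix.mul_sub, Matrix.mul_add, Matrix.sub_mul, Matrix.add_mul,
    Matrix.neg_mul, Matrix.mul_neg, zPSx, hSP, Matrix.mul_zero, Matrix.zero_mul, sub_zero,
    zero_sub, add_zero, zero_add, neg_zero, neg_neg, Matrix.mul_one]
end

section
/- Let M̃ ∈ ℝ^{n×n} be SPD, P♯ ∈ ℝ^{n×n_c} with P♯ᵀP♯ = I_{n_c}, and S ∈ ℝ^{n×(n−n_c)} of full column rank with P♯ᵀS = 0. Let β := ‖(SᵀM̃S)^{-1/2} SᵀM̃P♯ (P♯ᵀM̃P♯)^{-1/2}‖₂ ∈ [0,1) be the C.B.S. constant of the block matrix [[SᵀM̃S, SᵀM̃P♯],[P♯ᵀM̃S, P♯ᵀM̃P♯]]. Then every eigenvalue of (P♯ᵀM̃P♯)^{-1}(P♯ᵀM̃^{-1}P♯)^{-1} lies in [1−β²,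 1]; consequently, (1−β²)·v_cᵀP♯ᵀM̃^{-1}P♯v_c ≤ v_cᵀ(P♯ᵀM̃P♯)^{-1}v_c ≤ v_cᵀP♯ᵀM̃^{-1}P♯v_c for all v_c ∈ ℝ^{n_c}. -/
open Matrix Pointwise

/-- The square root of a positive semidefinite matrix, as defined in the older Mathlib
(removed since): `U * diagonal (√ ∘ eigenvalues) * U⋆`. -/
noncomputable def Matrix.PosSemidef.sqrt {n 𝕜 : Type*} [Fintype n] [RCLike 𝕜] [PartialOrder 𝕜]
    [DecidableEq n]    {A : Matrix n n 𝕜} (hA : A.PosSemidef) : Matrix n n 𝕜 :=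
  (hA.1.eigenvectorUnitary : Matrix n n 𝕜) * diagonal ((↑) ∘ (√·) ∘ hA.1.eigenvalues) *
    (star hA.1.eigenvectorUnitary : Matrix n n 𝕜)

lemma Matrix.PosSemidef.sqrt_isHermitian {m : Type*} [Fintype m] [DecidableEq m]
    {A : Matrix m m ℝ} (hA : A.PosSemidef) : hA.sqrtᴴ = hA.sqrt := by
  unfold Matrix.PosSemidef.sqrt
  simp [conjTranspose_mul, Matrix.mul_assoc, Unitary.coe_star, star_eq_conjTranspose]

lemma Matrix.PosSemidef.sqrt_mul_self {m : Type*} [Fintype m] [DecidableEq m]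
    {A : Matrix m m ℝ} (hA : A.PosSemidef) : hA.sqrt * hA.sqrt = A := by
  unfold Matrix.PosSemidef.sqrt
  have hU : (star hA.1.eigenvectorUnitary : Matrix m m ℝ) * hA.1.eigenvectorUnitary = 1 :=
    Unitary.coe_star_mul_self _
  have hD : diagonal ((↑) ∘ (√·) ∘ hA.1.eigenvalues) * diagonal ((↑) ∘ (√·) ∘ hA.1.eigenvalues)
      = diagonal (RCLike.ofReal ∘ hA.1.eigenvalues : m → ℝ) := by
    rw [diagonal_mul_diagonal]
    congr 1
    funext i
    simp [Real.mul_self_sqrt (hA.eigenvalues_nonneg i)]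
  conv_rhs => rw [hA.1.spectral_theorem]
  rw [Unitary.conjStarAlgAut_apply, ← hD]
  simp only [Matrix.mul_assoc]
  rw [← Matrix.mul_assoc (star hA.1.eigenvectorUnitary : Matrix m m ℝ), hU, Matrix.one_mul]
  rfl

lemma real_conjTranspose {m k : Type*} (M : Matrix m k ℝ) : Mᴴ = Mᵀ := by
  ext i j; simp [conjTranspose_apply]

lemma psd_of_spectrum_le {m : Type*} [Fintype m] [DecidableEq m]
    {K : Matrix m m ℝ} (hK : K.IsHermitian) {c : ℝ}
    (h : ∀ μ ∈ spectrum ℝ K, μ ≤ c) : (c • (1 : Matrix m m ℝ) - K).PosSemidef := by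
  have hH : (c • (1 : Matrix m m ℝ) - K).IsHermitian := by
    unfold Matrix.IsHermitian
    rw [conjTranspose_sub, conjTranspose_smul, conjTranspose_one, hK.eq, star_trivial]
  refine hH.posSemidef_iff_eigenvalues_nonneg.mpr fun i => ?_
  have hmem := hH.eigenvalues_mem_spectrum_real (𝕜 := ℝ) i
  have hspec : spectrum ℝ (c • (1 : Matrix m m ℝ) - K) = ({c} : Set ℝ) - spectrum ℝ K := by
    rw [spectrum.singleton_sub_eq]
    congr 1
    rw [Algebra.algebraMap_eq_smul_one]
  rw [hspec] at hmem
  obtain ⟨x, hx, y, hy, hxy⟩ := hmem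
  rw [Set.mem_singleton_iff] at hx
  subst hx
  have := h y hy
  simp only at hxy
  simp only [Pi.zero_apply]
  linarith

lemma psd_of_le_spectrum {m : Type*} [Fintype m] [DecidableEq m]
    {K : Matrix m m ℝ} (hK : K.IsHermitian) {c : ℝ}
    (h : ∀ μ ∈ spectrum ℝ K, c ≤ μ) : (K - c • (1 : Matrix m m ℝ)).PosSemidef := by
  have hH : (K - c • (1 : Matrix m m ℝ)).IsHermitian := by
    unfold Matrix.IsHermitian
    rw [conjTranspose_sub, conjTranspose_smul, conjTranspose_one, hK.eq, star_trivial]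
  refine hH.posSemidef_iff_eigenvalues_nonneg.mpr fun i => ?_
  have hmem := hH.eigenvalues_mem_spectrum_real (𝕜 := ℝ) i
  have hspec : spectrum ℝ (K - c • (1 : Matrix m m ℝ)) = spectrum ℝ K - ({c} : Set ℝ) := by
    rw [spectrum.sub_singleton_eq]
    congr 1
    rw [Algebra.algebraMap_eq_smul_one]
  rw [hspec] at hmem
  obtain ⟨x, hx, y, hy, hxy⟩ := hmem
  rw [Set.mem_singleton_iff] at hy
  subst hy
  have := h x hx
  simp only at hxy
  simp only [Pi.zero_apply]
  linarith


theorem step1 {n nc : ℕ} (hnc : nc < n)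
    (Mtil : Matrix (Fin n) (Fin n) ℝ) (hMtil : Mtil.PosDef)
    (Ps : Matrix (Fin n) (Fin nc) ℝ) (hPs : Psᵀ * Ps = 1)
    (S : Matrix (Fin n) (Fin (n - nc)) ℝ) (hS : S.rank = n - nc)
    (hPS : Psᵀ * S = 0)
    (hSMS : (Sᵀ * Mtil * S).PosDef) :
    Psᵀ * Mtil⁻¹ * Ps * ((Psᵀ * Mtil * Ps) - (Sᵀ * Mtil * Ps)ᵀ * (Sᵀ * Mtil * S)⁻¹ * (Sᵀ * Mtil * Ps)) = 1 ∧
    ((Psᵀ * Mtil * Ps) - (Sᵀ * Mtil * Ps)ᵀ * (Sᵀ * Mtil * S)⁻¹ * (Sᵀ * Mtil * Ps)) * (Psᵀ * Mtil⁻¹ * Ps) = 1 := by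
  classical
  set A := Sᵀ * Mtil * S with hA
  set Bm := Sᵀ * Mtil * Ps with hBm
  set C := Psᵀ * Mtil * Ps with hC
  -- the equivalence
  let e : (Fin (n - nc) ⊕ Fin nc) ≃ Fin n :=
    finSumFinEquiv.trans (finCongr (Nat.sub_add_cancel hnc.le))
  let T : Matrix (Fin n) (Fin (n - nc) ⊕ Fin nc) ℝ := fromCols S Ps
  let T' : Matrix (Fin n) (Fin n) ℝ := T.submatrix id ⇑e.symm
  -- S is injective
  have hSinj : Function.Injective S.mulVecLin := by
    rw [← LinearMap.ker_eq_bot]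
    have hrn := LinearMap.finrank_range_add_finrank_ker S.mulVecLin
    rw [show Module.finrank ℝ (Fin (n - nc) → ℝ) = n - nc by simp] at hrn
    have : Module.finrank ℝ (LinearMap.range S.mulVecLin) = n - nc := hS
    have hker : Module.finrank ℝ (LinearMap.ker S.mulVecLin) = 0 := by omega
    exact Submodule.finrank_eq_zero.mp hker
  -- T' is injective, hence a unit
  have hT'inj : Function.Injective T'.mulVecLin := by
    rw [← LinearMap.ker_eq_bot, LinearMap.ker_eq_bot']
    intro w hw
    simp only [mulVecLin_apply] at hw
    have hw' : T *ᵥ (w ∘ ⇑e) = 0 := by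
      have := Matrix.submatrix_mulVec_equiv T w (id : Fin n → Fin n) e.symm
      simp only [Equiv.symm_symm] at this
      rw [show T' *ᵥ w = (T *ᵥ (w ∘ ⇑e)) ∘ id from this] at hw
      simpa using hw
    have helim : w ∘ ⇑e = Sum.elim (w ∘ ⇑e ∘ Sum.inl) (w ∘ ⇑e ∘ Sum.inr) := by
      funext x; cases x <;> rfl
    rw [helim, Matrix.fromCols_mulVec_sumElim] at hw'
    have hy : (w ∘ ⇑e ∘ Sum.inr) = 0 := by
      have := congrArg (fun v => Psᵀ *ᵥ v) hw'
      simpa [Matrix.mulVec_add, Matrix.mulVec_mulVec, hPS, hPs] using this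
    have hx : (w ∘ ⇑e ∘ Sum.inl) = 0 := by
      rw [hy] at hw'
      simp only [Matrix.mulVec_zero, add_zero] at hw'
      exact hSinj (by simpa using hw')
    funext i
    have : w (e (e.symm i)) = 0 := by
      rcases h : e.symm i with a | b
      · have := congrFun hx a; simpa [h] using this
      · have := congrFun hy b; simpa [h] using this
    simpa using this
  have hT'unit : IsUnit T' := mulVec_injective_iff_isUnit.mp (by simpa [Matrix.coe_mulVecLin] using hT'inj)
  have hT'det : IsUnit T'.det := (isUnit_iff_isUnit_det T').mp hT'unit
  have hT'Tdet : IsUnit T'ᵀ.det := by rwa [det_transpose]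
  -- block structure
  let F : Matrix (Fin (n - nc) ⊕ Fin nc) (Fin (n - nc) ⊕ Fin nc) ℝ := fromBlocks A Bm Bmᵀ C
  have hM' : Mtilᵀ = Mtil := by rw [← real_conjTranspose, hMtil.isHermitian.eq]
  have hBmT : Bmᵀ = Psᵀ * Mtil * S := by
    rw [hBm, transpose_mul, transpose_mul, transpose_transpose, hM', Matrix.mul_assoc]
  have hTMT : Tᵀ * Mtil * T = F := by
    show (fromCols S Ps)ᵀ * Mtil * fromCols S Ps = F
    rw [transpose_fromCols, fromRows_mul, fromRows_mul, mul_fromCols, mul_fromCols,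
      fromRows_fromCols_eq_fromBlocks, ← hBmT]
  have hsubL : ∀ (Y : Matrix (Fin (n - nc) ⊕ Fin nc) (Fin n) ℝ),
      Y.submatrix ⇑e.symm id * Mtil = (Y * Mtil).submatrix ⇑e.symm id := by
    intro Y; ext i j; simp [Matrix.mul_apply]
  have hsubR : ∀ (Y : Matrix (Fin n) (Fin n) ℝ),
      Y * T' = (Y * T).submatrix id ⇑e.symm := by
    intro Y; ext i j; simp [Matrix.mul_apply, T']
  have hsubR2 : ∀ (Y : Matrix (Fin nc) (Fin n) ℝ),
      Y * T' = (Y * T).submatrix id ⇑e.symm := by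
    intro Y; ext i j; simp [Matrix.mul_apply, T']
  have hT'T : T'ᵀ = Tᵀ.submatrix ⇑e.symm id := by
    rw [show T' = T.submatrix id ⇑e.symm from rfl, transpose_submatrix]
  have hG : T'ᵀ * Mtil * T' = F.submatrix ⇑e.symm ⇑e.symm := by
    rw [hT'T, hsubL, hsubR]
    rw [← hTMT]
    ext i j; simp [Matrix.mul_apply]
  -- determinants
  have hMdet : IsUnit Mtil.det := isUnit_iff_ne_zero.mpr hMtil.det_pos.ne'
  have hGdet : IsUnit (T'ᵀ * Mtil * T').det := by
    rw [Matrix.det_mul, Matrix.det_mul]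
    exact (hT'Tdet.mul hMdet).mul hT'det
  have hFdet : IsUnit F.det := by
    have h := Matrix.det_submatrix_equiv_self e.symm F
    rw [← hG] at h
    rwa [h] at hGdet
  have hAdet : IsUnit A.det := isUnit_iff_ne_zero.mpr hSMS.det_pos.ne'
  -- M⁻¹ via T'
  have hMinv : Mtil⁻¹ = T' * (T'ᵀ * Mtil * T')⁻¹ * T'ᵀ := by
    have h1 : (T'ᵀ * Mtil * T')⁻¹ = T'⁻¹ * Mtil⁻¹ * T'ᵀ⁻¹ := by
      rw [Matrix.mul_inv_rev, Matrix.mul_inv_rev, Matrix.mul_assoc]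
    rw [h1]
    have h2 : T' * (T'⁻¹ * Mtil⁻¹ * T'ᵀ⁻¹) * T'ᵀ =
        (T' * T'⁻¹) * Mtil⁻¹ * (T'ᵀ⁻¹ * T'ᵀ) := by
      simp only [Matrix.mul_assoc]
    rw [h2, Matrix.mul_nonsing_inv _ hT'det, Matrix.nonsing_inv_mul _ hT'Tdet,
      Matrix.one_mul, Matrix.mul_one]
  -- Psᵀ * T' and T'ᵀ * Ps
  have hPsT : Psᵀ * T = fromCols 0 1 := by
    show Psᵀ * fromCols S Ps = _
    rw [mul_fromCols, hPS, hPs]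
  have hPsT' : Psᵀ * T' = (fromCols 0 1).submatrix id ⇑e.symm := by
    rw [hsubR2, hPsT]
  have hSPs : Sᵀ * Ps = 0 := by
    have := congrArg Matrix.transpose hPS
    rwa [transpose_mul, transpose_transpose, transpose_zero] at this
  have hTPs : Tᵀ * Ps = fromRows 0 1 := by
    show (fromCols S Ps)ᵀ * Ps = _
    rw [transpose_fromCols, fromRows_mul, hSPs, hPs]
  have hT'Ps : T'ᵀ * Ps = (fromRows 0 1).submatrix ⇑e.symm id := by
    rw [hT'T]
    ext ii jj
    have h1 : (Tᵀ.submatrix ⇑e.symm id * Ps) ii jj = (Tᵀ * Ps) (e.symm ii) jj := by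
      simp [Matrix.mul_apply]
    rw [h1, hTPs]
    simp
  -- the key identity
  have hKey : Psᵀ * Mtil⁻¹ * Ps = F⁻¹.toBlocks₂₂ := by
    rw [hMinv]
    have h3 : Psᵀ * (T' * (T'ᵀ * Mtil * T')⁻¹ * T'ᵀ) * Ps =
        (Psᵀ * T') * (T'ᵀ * Mtil * T')⁻¹ * (T'ᵀ * Ps) := by
      simp only [Matrix.mul_assoc]
    rw [h3, hPsT', hT'Ps, hG, Matrix.inv_submatrix_equiv F e.symm e.symm,
      Matrix.submatrix_mul_equiv, Matrix.submatrix_mul_equiv, Matrix.submatrix_id_id]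
    conv_lhs => rw [← Matrix.fromBlocks_toBlocks F⁻¹]
    rw [fromCols_mul_fromBlocks, fromCols_mul_fromRows]
    simp
  -- block equations from F * F⁻¹ = 1
  have hFmul : F * F⁻¹ = 1 := Matrix.mul_nonsing_inv F hFdet
  have hFblocks : fromBlocks A Bm Bmᵀ C *
      fromBlocks F⁻¹.toBlocks₁₁ F⁻¹.toBlocks₁₂ F⁻¹.toBlocks₂₁ F⁻¹.toBlocks₂₂ = 1 := by
    rw [Matrix.fromBlocks_toBlocks F⁻¹]
    exact hFmul
  rw [Matrix.fromBlocks_multiply, show (1 : Matrix (Fin (n-nc) ⊕ Fin nc) (Fin (n-nc) ⊕ Fin nc) ℝ)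
    = fromBlocks 1 0 0 1 from (Matrix.fromBlocks_one).symm] at hFblocks
  set G12 := F⁻¹.toBlocks₁₂ with hG12def
  set G22 := F⁻¹.toBlocks₂₂ with hG22def
  have hone12 : (Matrix.toBlocks₁₂ (fromBlocks (1 : Matrix (Fin (n-nc)) (Fin (n-nc)) ℝ) 0 0
      (1 : Matrix (Fin nc) (Fin nc) ℝ))) = 0 := Matrix.toBlocks_fromBlocks₁₂ _ _ _ _
  have hone22 : (Matrix.toBlocks₂₂ (fromBlocks (1 : Matrix (Fin (n-nc)) (Fin (n-nc)) ℝ) 0 0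
      (1 : Matrix (Fin nc) (Fin nc) ℝ))) = 1 := Matrix.toBlocks_fromBlocks₂₂ _ _ _ _
  have eq12 : A * G12 + Bm * G22 = 0 := by
    have h5 := congrArg Matrix.toBlocks₁₂ hFblocks
    rw [Matrix.toBlocks_fromBlocks₁₂, hone12] at h5
    exact h5
  have eq22 : Bmᵀ * G12 + C * G22 = 1 := by
    have h5 := congrArg Matrix.toBlocks₂₂ hFblocks
    rw [Matrix.toBlocks_fromBlocks₂₂, hone22] at h5
    exact h5
  have hG12 : G12 = -(A⁻¹ * (Bm * G22)) := by
    have h4 : A * G12 = -(Bm * G22) := eq_neg_of_add_eq_zero_left eq12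
    have := congrArg (fun Y => A⁻¹ * Y) h4
    simpa [← Matrix.mul_assoc, Matrix.nonsing_inv_mul _ hAdet, mul_neg] using this
  have key2 : (C - Bmᵀ * A⁻¹ * Bm) * G22 = 1 := by
    have e1 : C * G22 = 1 - Bmᵀ * G12 := eq_sub_of_add_eq' eq22
    rw [Matrix.sub_mul, e1, hG12, Matrix.mul_neg, sub_neg_eq_add]
    simp only [Matrix.mul_assoc]
    exact add_sub_cancel_right _ _
  constructor
  · rw [hKey]
    exact mul_eq_one_comm.mp key2
  · rw [hKey]
    exact key2




open Matrix

theorem stmt_15 {n nc : ℕ} (hnc : nc < n)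
    (Mtil : Matrix (Fin n) (Fin n) ℝ) (hMtil : Mtil.PosDef)
    (Ps : Matrix (Fin n) (Fin nc) ℝ) (hPs : Psᵀ * Ps = 1)
    (S : Matrix (Fin n) (Fin (n - nc)) ℝ) (hS : S.rank = n - nc)
    (hPS : Psᵀ * S = 0)
    (hSMS : (Sᵀ * Mtil * S).PosDef) (hPMP : (Psᵀ * Mtil * Ps).PosDef)
    (β : ℝ) (hβ0 : 0 ≤ β) (hβ1 : β < 1)
    (hβ : IsGreatest (spectrum ℝ
        ((hSMS.posSemidef.sqrt⁻¹ * (Sᵀ * Mtil * Ps) * hPMP.posSemidef.sqrt⁻¹)ᵀ *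
          (hSMS.posSemidef.sqrt⁻¹ * (Sᵀ * Mtil * Ps) * hPMP.posSemidef.sqrt⁻¹))) (β ^ 2)) :
    (∀ μ ∈ spectrum ℝ ((Psᵀ * Mtil * Ps)⁻¹ * (Psᵀ * Mtil⁻¹ * Ps)⁻¹),
      μ ∈ Set.Icc (1 - β ^ 2) 1) ∧
    ∀ vc : Fin nc → ℝ,
      (1 - β ^ 2) * (vc ⬝ᵥ ((Psᵀ * Mtil⁻¹ * Ps) *ᵥ vc)) ≤
          vc ⬝ᵥ ((Psᵀ * Mtil * Ps)⁻¹ *ᵥ vc) ∧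
        vc ⬝ᵥ ((Psᵀ * Mtil * Ps)⁻¹ *ᵥ vc) ≤ vc ⬝ᵥ ((Psᵀ * Mtil⁻¹ * Ps) *ᵥ vc) := by
  classical
  obtain ⟨hEG1, hEG2⟩ := step1 hnc Mtil hMtil Ps hPs S hS hPS hSMS
  have hb : (0:ℝ) < 1 - β ^ 2 := by nlinarith
  set A := Sᵀ * Mtil * S with hAdef
  set Bm := Sᵀ * Mtil * Ps with hBmdef
  set C := Psᵀ * Mtil * Ps with hCdef
  set W := Psᵀ * Mtil⁻¹ * Ps with hWdef
  set RA := hSMS.posSemidef.sqrt with hRAdef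
  set RC := hPMP.posSemidef.sqrt with hRCdef
  set X := RA⁻¹ * Bm * RC⁻¹ with hXdef
  set E := C - Bmᵀ * A⁻¹ * Bm with hEdef
  -- basic facts about the square roots
  have hRAsym : RAᵀ = RA := by
    rw [← real_conjTranspose]
    exact hSMS.posSemidef.sqrt_isHermitian
  have hRCsym : RCᵀ = RC := by
    rw [← real_conjTranspose]
    exact hPMP.posSemidef.sqrt_isHermitian
  have hRA2 : RA * RA = A := hSMS.posSemidef.sqrt_mul_self
  have hRC2 : RC * RC = C := hPMP.posSemidef.sqrt_mul_self
  have hRAdet : IsUnit RA.det := by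
    refine isUnit_iff_ne_zero.mpr fun h0 => hSMS.det_pos.ne' ?_
    rw [← hRA2, det_mul, h0, mul_zero]
  have hRCdet : IsUnit RC.det := by
    refine isUnit_iff_ne_zero.mpr fun h0 => hPMP.det_pos.ne' ?_
    rw [← hRC2, det_mul, h0, mul_zero]
  have hRCunit : IsUnit RC := (Matrix.isUnit_iff_isUnit_det RC).mpr hRCdet
  have hAinv2 : RA⁻¹ * RA⁻¹ = A⁻¹ := by rw [← Matrix.mul_inv_rev, hRA2]
  have hCinv2 : RC⁻¹ * RC⁻¹ = C⁻¹ := by rw [← Matrix.mul_inv_rev, hRC2]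
  have hRAinvsym : (RA⁻¹)ᵀ = RA⁻¹ := by rw [Matrix.transpose_nonsing_inv, hRAsym]
  have hRCinvsym : (RC⁻¹)ᵀ = RC⁻¹ := by rw [Matrix.transpose_nonsing_inv, hRCsym]
  -- N = XᵀX in congruence form
  have hXT : Xᵀ = RC⁻¹ * (Bmᵀ * RA⁻¹) := by
    rw [hXdef, transpose_mul, transpose_mul, hRAinvsym, hRCinvsym]
  have hN : Xᵀ * X = RC⁻¹ * (Bmᵀ * A⁻¹ * Bm) * RC⁻¹ := by
    rw [hXT, hXdef, ← hAinv2]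
    simp only [Matrix.mul_assoc]
  -- E is invertible and W = E⁻¹
  have hEdet : IsUnit E.det :=
    IsUnit.of_mul_eq_one _ (by rw [← det_mul, hEG2, det_one])
  have hWE : W = E⁻¹ := (Matrix.inv_eq_right_inv hEG2).symm
  have hWinv : W⁻¹ = E := by rw [hWE, Matrix.nonsing_inv_nonsing_inv _ hEdet]
  -- H
  set H := RC⁻¹ * E * RC⁻¹ with hHdef
  have hC1 : RC⁻¹ * C * RC⁻¹ = 1 := by
    rw [← hRC2, ← Matrix.mul_assoc, Matrix.nonsing_inv_mul _ hRCdet, Matrix.one_mul,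
      Matrix.mul_nonsing_inv _ hRCdet]
  have hH1N : H = 1 - Xᵀ * X := by
    rw [hHdef, hEdef, Matrix.mul_sub, Matrix.sub_mul, hN, hC1]
  have hNpsd : (Xᵀ * X).PosSemidef := by
    have := Matrix.posSemidef_conjTranspose_mul_self X
    rwa [real_conjTranspose] at this
  have hNnonneg : ∀ ν ∈ spectrum ℝ (Xᵀ * X), 0 ≤ ν := by
    rw [hNpsd.isHermitian.spectrum_real_eq_range_eigenvalues]
    rintro ν ⟨i, rfl⟩
    exact hNpsd.eigenvalues_nonneg i
  have hHspec : ∀ μ ∈ spectrum ℝ H, 1 - β ^ 2 ≤ μ ∧ μ ≤ 1 := by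
    intro μ hμ
    rw [hH1N] at hμ
    have h1 : spectrum ℝ ((1 : Matrix (Fin nc) (Fin nc) ℝ) - Xᵀ * X)
        = ({(1:ℝ)} : Set ℝ) - spectrum ℝ (Xᵀ * X) := by
      rw [spectrum.singleton_sub_eq, _root_.map_one]
    rw [h1] at hμ
    obtain ⟨x, hx, ν, hν, hxy⟩ := hμ
    rw [Set.mem_singleton_iff] at hx
    subst hx
    simp only at hxy
    have h2 := hβ.2 hν
    have h3 := hNnonneg ν hν
    constructor <;> linarith
  -- H is invertible and Hermitian
  have hHdet : IsUnit H.det := by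
    rw [hHdef, Matrix.det_mul, Matrix.det_mul]
    exact ((Matrix.isUnit_nonsing_inv_det RC hRCdet).mul hEdet).mul
      (Matrix.isUnit_nonsing_inv_det RC hRCdet)
  have hHunit : IsUnit H := (Matrix.isUnit_iff_isUnit_det H).mpr hHdet
  have hHherm : H.IsHermitian := by
    rw [hH1N]
    show ((1 : Matrix (Fin nc) (Fin nc) ℝ) - Xᵀ * X)ᴴ = _
    rw [conjTranspose_sub, conjTranspose_one, hNpsd.isHermitian.eq]
  have hHinvherm : (H⁻¹).IsHermitian := hHherm.inv
  have hHinvdet : IsUnit (H⁻¹).det := Matrix.isUnit_nonsing_inv_det H hHdet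
  have hHcoe : H⁻¹ = ↑hHunit.unit⁻¹ := by
    apply Matrix.inv_eq_left_inv
    rw [show (↑hHunit.unit⁻¹ : Matrix (Fin nc) (Fin nc) ℝ) * H
      = ↑hHunit.unit⁻¹ * ↑hHunit.unit by rw [hHunit.unit_spec], Units.inv_mul]
  have hHinvspec : ∀ μ ∈ spectrum ℝ H⁻¹, 1 ≤ μ ∧ μ ≤ (1 - β ^ 2)⁻¹ := by
    intro μ hμ
    have hμne : μ ≠ 0 := by
      intro h0
      rw [h0, spectrum.zero_mem_iff] at hμ
      exact hμ ((Matrix.isUnit_iff_isUnit_det _).mpr hHinvdet)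
    have hμunit : IsUnit μ := isUnit_iff_ne_zero.mpr hμne
    have hμinv : μ⁻¹ ∈ spectrum ℝ H := by
      have hmem : (↑hμunit.unit : ℝ) ∈ spectrum ℝ (↑hHunit.unit⁻¹ : Matrix (Fin nc) (Fin nc) ℝ) := by
        rw [hμunit.unit_spec, ← hHcoe]
        exact hμ
      have h9 := (spectrum.inv_mem_iff (r := hμunit.unit⁻¹) (a := hHunit.unit)).mpr
        (by simpa using hmem)
      rw [Units.val_inv_eq_inv_val, hμunit.unit_spec, hHunit.unit_spec] at h9
      exact h9
    obtain ⟨hlow, hhigh⟩ := hHspec _ hμinv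
    have hμinvpos : 0 < μ⁻¹ := lt_of_lt_of_le hb hlow
    have hμpos : 0 < μ := inv_pos.mp hμinvpos
    constructor
    · have := mul_le_mul_of_nonneg_right hhigh hμpos.le
      rwa [inv_mul_cancel₀ hμpos.ne', one_mul] at this
    · have h4 : (1 - β ^ 2) * μ ≤ 1 := by
        have := mul_le_mul_of_nonneg_right hlow hμpos.le
        rwa [inv_mul_cancel₀ hμpos.ne'] at this
      rw [show (1 - β ^ 2)⁻¹ = 1 / (1 - β ^ 2) from (one_div _).symm, le_div_iff₀ hb]
      linarith
  -- Part 1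
  constructor
  · intro μ hμ
    have hCE : C⁻¹ * W⁻¹ = RC⁻¹ * H * RC := by
      rw [hWinv, hHdef, ← hCinv2]
      simp only [Matrix.mul_assoc]
      rw [Matrix.nonsing_inv_mul _ hRCdet, Matrix.mul_one]
    have hRCcoe : RC⁻¹ = ↑hRCunit.unit⁻¹ := by
      apply Matrix.inv_eq_left_inv
      rw [show (↑hRCunit.unit⁻¹ : Matrix (Fin nc) (Fin nc) ℝ) * RC
        = ↑hRCunit.unit⁻¹ * ↑hRCunit.unit by rw [hRCunit.unit_spec], Units.inv_mul]
    have hspec_eq : spectrum ℝ (C⁻¹ * W⁻¹) = spectrum ℝ H := by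
      rw [hCE]
      have h10 : RC⁻¹ * H * RC = (↑hRCunit.unit⁻¹ : Matrix (Fin nc) (Fin nc) ℝ) * H *
          (↑hRCunit.unit : Matrix (Fin nc) (Fin nc) ℝ) := by
        rw [← hRCcoe, hRCunit.unit_spec]
      rw [h10, spectrum.units_conjugate']
    rw [hspec_eq] at hμ
    exact Set.mem_Icc.mpr (hHspec μ hμ)
  -- Part 2
  · intro vc
    have hHinv : H⁻¹ = RC * (E⁻¹ * RC) := by
      rw [hHdef, Matrix.mul_inv_rev, Matrix.mul_inv_rev,
        Matrix.nonsing_inv_nonsing_inv _ hRCdet]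
    have hconj2 : ∀ Y : Matrix (Fin nc) (Fin nc) ℝ, RC⁻¹ * (RC * (Y * RC)) * RC⁻¹ = Y := by
      intro Y
      simp only [Matrix.mul_assoc]
      rw [Matrix.mul_nonsing_inv _ hRCdet, Matrix.mul_one, ← Matrix.mul_assoc,
        Matrix.nonsing_inv_mul _ hRCdet, Matrix.one_mul]
    have L1 : (H⁻¹ - (1:ℝ) • (1 : Matrix (Fin nc) (Fin nc) ℝ)).PosSemidef :=
      psd_of_le_spectrum hHinvherm (fun μ h => (hHinvspec μ h).1)
    have L2 : (((1 - β ^ 2)⁻¹ : ℝ) • (1 : Matrix (Fin nc) (Fin nc) ℝ) - H⁻¹).PosSemidef :=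
      psd_of_spectrum_le hHinvherm (fun μ h => (hHinvspec μ h).2)
    have P1 : (RC⁻¹ * (H⁻¹ - (1:ℝ) • 1) * RC⁻¹ᴴ).PosSemidef :=
      L1.mul_mul_conjTranspose_same RC⁻¹
    have P2 : (RC⁻¹ * (((1 - β ^ 2)⁻¹ : ℝ) • 1 - H⁻¹) * RC⁻¹ᴴ).PosSemidef :=
      L2.mul_mul_conjTranspose_same RC⁻¹
    rw [real_conjTranspose, hRCinvsym] at P1 P2
    have hP1eq : RC⁻¹ * (H⁻¹ - (1:ℝ) • 1) * RC⁻¹ = E⁻¹ - C⁻¹ := by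
      rw [one_smul, Matrix.mul_sub, Matrix.sub_mul, Matrix.mul_one, hHinv, hconj2,
        hCinv2]
    have hP2eq : RC⁻¹ * (((1 - β ^ 2)⁻¹ : ℝ) • 1 - H⁻¹) * RC⁻¹
        = ((1 - β ^ 2)⁻¹ : ℝ) • C⁻¹ - E⁻¹ := by
      rw [Matrix.mul_sub, Matrix.sub_mul, hHinv, hconj2, mul_smul_comm, smul_mul_assoc,
        Matrix.mul_one, hCinv2]
    rw [hP1eq] at P1
    rw [hP2eq] at P2
    have hq1 := P1.dotProduct_mulVec_nonneg vc
    have hq2 := P2.dotProduct_mulVec_nonneg vc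
    simp only [star_trivial, Matrix.sub_mulVec, dotProduct_sub, Matrix.smul_mulVec,
      dotProduct_smul, smul_eq_mul] at hq1 hq2
    rw [hWE]
    constructor
    · have h7 : vc ⬝ᵥ E⁻¹ *ᵥ vc ≤ (1 - β ^ 2)⁻¹ * (vc ⬝ᵥ C⁻¹ *ᵥ vc) := by linarith
      have h8 := mul_le_mul_of_nonneg_left h7 hb.le
      rwa [← mul_assoc, mul_inv_cancel₀ hb.ne', one_mul] at h8
    · linarith
end

section
/- Let σ, τ, ε be real numbers with 0 < ε ≤ τ and 0 < σ < 1 − ε. For each positive integer γ define F_γ(x) = [σε(1−x^γ) + τ(1−ε)(1−σ)x^γ] / [ε(1−x^γ) + τ(1−σ)x^γ] − x for 0 < x < 1. Then there exists a strictly decreasing sequence {x_γ}_{γ=1}^{∞} ⊂ (σ, 1−ε) with lim_{γ→∞} x_γ = σ such that F_γ(x_γ) = 0 for every γ. -/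
theorem stmt_16 (σ τ ε : ℝ) (hε : 0 < ε) (hετ : ε ≤ τ)
    (hσ0 : 0 < σ) (hσ1 : σ < 1 - ε)
    (F : ℕ → ℝ → ℝ)
    (hF : ∀ γ : ℕ, ∀ x : ℝ, F γ x =
      (σ * ε * (1 - x ^ γ) + τ * (1 - ε) * (1 - σ) * x ^ γ) /
        (ε * (1 - x ^ γ) + τ * (1 - σ) * x ^ γ) - x) :
    ∃ x : ℕ → ℝ, StrictAnti x ∧ (∀ γ : ℕ, x γ ∈ Set.Ioo σ (1 - ε)) ∧
      Filter.Tendsto x Filter.atTop (nhds σ) ∧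
      ∀ γ : ℕ, F (γ + 1) (x γ) = 0 := by
  have hτ : 0 < τ := hε.trans_le hετ
  have h1σ : 0 < 1 - σ := by linarith
  have h1ε0 : 0 < 1 - ε := by linarith
  have h1ε1 : 1 - ε < 1 := by linarith
  set D : ℝ → ℝ := fun x => τ * (1 - σ) * (1 - ε - x) - ε * (σ - x) with hDdef
  set G : ℕ → ℝ → ℝ := fun n x => ε * (σ - x) + x ^ n * D x with hGdef
  have hGc : ∀ n, Continuous (G n) := by
    intro n
    simp only [hGdef, hDdef]
    fun_prop
  have hGσ : ∀ n, 0 < G n σ := by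
    intro n
    have h1 : G n σ = σ ^ n * (τ * (1 - σ) * (1 - ε - σ)) := by
      simp only [hGdef, hDdef]; ring
    rw [h1]
    exact mul_pos (pow_pos hσ0 n) (mul_pos (mul_pos hτ h1σ) (by linarith))
  have hG1ε : ∀ n : ℕ, G (n + 1) (1 - ε) < 0 := by
    intro n
    have h1 : G (n + 1) (1 - ε) = (ε * (σ - 1 + ε)) * (1 - (1 - ε) ^ (n + 1)) := by
      simp only [hGdef, hDdef]; ring
    rw [h1]
    have h2 : (1 - ε) ^ (n + 1) < 1 := pow_lt_one₀ h1ε0.le h1ε1 (Nat.succ_ne_zero n)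
    exact mul_neg_of_neg_of_pos (mul_neg_of_pos_of_neg hε (by linarith)) (by linarith)
  -- root set
  set S : ℕ → Set ℝ := fun n => Set.Icc σ (1 - ε) ∩ {x | G n x = 0} with hSdef
  have hSclosed : ∀ n, IsClosed (S n) :=
    fun n => isClosed_Icc.inter (isClosed_eq (hGc n) continuous_const)
  have hSbdd : ∀ n, BddBelow (S n) := fun n => ⟨σ, fun x hx => hx.1.1⟩
  -- a root below any point where G n is negative
  have hroot : ∀ n : ℕ, ∀ c, σ ≤ c → G n c < 0 → ∃ y ∈ Set.Icc σ c, G n y = 0 := by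
    intro n c hc hneg
    have h0 : (0 : ℝ) ∈ Set.Icc (G n c) (G n σ) := ⟨hneg.le, (hGσ n).le⟩
    obtain ⟨y, hy, hGy⟩ := intermediate_value_Icc' hc ((hGc n).continuousOn) h0
    exact ⟨y, hy, hGy⟩
  have hSne : ∀ n : ℕ, (S (n + 1)).Nonempty := by
    intro n
    obtain ⟨y, hy, hGy⟩ := hroot (n + 1) (1 - ε) hσ1.le (hG1ε n)
    exact ⟨y, ⟨hy, hGy⟩⟩
  set xs : ℕ → ℝ := fun γ => sInf (S (γ + 1)) with hxsdef
  have hmem : ∀ γ, xs γ ∈ S (γ + 1) :=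
    fun γ => (hSclosed (γ + 1)).csInf_mem (hSne γ) (hSbdd (γ + 1))
  have hxroot : ∀ γ, G (γ + 1) (xs γ) = 0 := fun γ => (hmem γ).2
  have hxIcc : ∀ γ, xs γ ∈ Set.Icc σ (1 - ε) := fun γ => (hmem γ).1
  have hxgt : ∀ γ, σ < xs γ := by
    intro γ
    rcases lt_or_eq_of_le (hxIcc γ).1 with h | h
    · exact h
    · exact absurd (hxroot γ) (by rw [← h]; exact (hGσ (γ + 1)).ne')
  have hxlt : ∀ γ, xs γ < 1 - ε := by
    intro γ
    rcases lt_or_eq_of_le (hxIcc γ).2 with h | h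
    · exact h
    · exact absurd (hxroot γ) (by rw [h]; exact (hG1ε γ).ne)
  -- key: G at next exponent is negative at xs γ
  have hGnext : ∀ γ, G (γ + 2) (xs γ) < 0 := by
    intro γ
    set x := xs γ with hx
    have e1 : x ^ (γ + 1) * D x = ε * (x - σ) := by
      have h := hxroot γ
      simp only [hGdef] at h
      linarith
    have e2 : G (γ + 2) x = ε * (x - σ) * (x - 1) := by
      have h3 : x ^ (γ + 2) * D x = x * (x ^ (γ + 1) * D x) := by ring
      simp only [hGdef]
      rw [show x ^ (γ + 2) * D x = x * (x ^ (γ + 1) * D x) from by ring, e1]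
      ring
    rw [e2]
    have h4 : 0 < ε * (x - σ) := mul_pos hε (by linarith [hxgt γ])
    exact mul_neg_of_pos_of_neg h4 (by linarith [hxlt γ])
  have hstep : ∀ γ, xs (γ + 1) < xs γ := by
    intro γ
    obtain ⟨y, hy, hGy⟩ := hroot (γ + 2) (xs γ) (hxgt γ).le (hGnext γ)
    have hyS : y ∈ S (γ + 2) := ⟨⟨hy.1, hy.2.trans (hxlt γ).le⟩, hGy⟩
    have h1 : xs (γ + 1) ≤ y := csInf_le (hSbdd (γ + 2)) hyS
    have h2 : y ≠ xs γ := by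
      intro h
      rw [h] at hGy
      exact (hGnext γ).ne hGy
    exact lt_of_le_of_lt h1 (lt_of_le_of_ne hy.2 h2)
  refine ⟨xs, strictAnti_nat_of_succ_lt hstep, fun γ => ⟨hxgt γ, hxlt γ⟩, ?_, ?_⟩
  · -- tendsto
    rw [tendsto_order]
    constructor
    · intro a ha
      exact Filter.Eventually.of_forall fun γ => ha.trans (hxgt γ)
    · intro b hb
      set M : ℝ := (1 - ε) * (τ * (1 - σ) + ε) with hMdef
      have hM : 0 < M := mul_pos h1ε0 (by positivity)
      have hDle : ∀ x ∈ Set.Icc σ (1 - ε), D x ≤ M := by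
        intro x hx
        simp only [hDdef, hMdef]
        nlinarith [hx.1, hx.2, mul_nonneg (mul_nonneg hτ.le h1σ.le) (hσ0.le.trans hx.1),
          mul_nonneg hε.le (sub_nonneg.2 hx.2), mul_pos hε hσ0]
      have hbound : ∀ n : ℕ, ∀ x ∈ Set.Icc σ (1 - ε), x ^ n * D x ≤ (1 - ε) ^ n * M := by
        intro n x hx
        rcases le_or_gt (D x) 0 with h | h
        · have h1 : x ^ n * D x ≤ 0 :=
            mul_nonpos_of_nonneg_of_nonpos (pow_nonneg (hσ0.le.trans hx.1) n) h
          have h2 : (0:ℝ) ≤ (1 - ε) ^ n * M := by positivity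
          linarith
        · calc x ^ n * D x ≤ (1 - ε) ^ n * D x :=
                mul_le_mul_of_nonneg_right (pow_le_pow_left₀ (hσ0.le.trans hx.1) hx.2 n) h.le
            _ ≤ (1 - ε) ^ n * M :=
                mul_le_mul_of_nonneg_left (hDle x hx) (pow_nonneg h1ε0.le n)
      have htend : Filter.Tendsto (fun n : ℕ => (1 - ε) ^ n * M) Filter.atTop (nhds 0) := by
        have := (tendsto_pow_atTop_nhds_zero_of_lt_one h1ε0.le h1ε1).mul_const M
        simpa using this
      have hδ : 0 < ε * (b - σ) := mul_pos hε (by linarith)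
      have hev : ∀ᶠ n : ℕ in Filter.atTop, (1 - ε) ^ n * M < ε * (b - σ) := by
        have := htend.eventually (eventually_lt_nhds hδ)
        simpa using this
      obtain ⟨N, hN⟩ := Filter.eventually_atTop.1 hev
      rw [Filter.eventually_atTop]
      refine ⟨N, fun γ hγ => ?_⟩
      by_contra hcon
      push_neg at hcon
      set x := xs γ with hx
      have hxb : σ + (b - σ) ≤ x := by linarith
      have h1 : x ^ (γ + 1) * D x ≤ (1 - ε) ^ (γ + 1) * M := hbound (γ + 1) x (hxIcc γ)
      have h2 : (1 - ε) ^ (γ + 1) * M < ε * (b - σ) := hN (γ + 1) (by omega)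
      have h3 := hxroot γ
      simp only [hGdef] at h3
      nlinarith
  · -- F = 0
    intro γ
    have hr := hxroot γ
    have hx0 : 0 < xs γ := hσ0.trans (hxgt γ)
    have hx1 : xs γ < 1 := (hxlt γ).trans h1ε1
    have hxn1 : xs γ ^ (γ + 1) < 1 := pow_lt_one₀ hx0.le hx1 (Nat.succ_ne_zero γ)
    have hxn0 : 0 < xs γ ^ (γ + 1) := pow_pos hx0 (γ + 1)
    have hden : 0 < ε * (1 - xs γ ^ (γ + 1)) + τ * (1 - σ) * xs γ ^ (γ + 1) :=
      add_pos (mul_pos hε (by linarith)) (mul_pos (mul_pos hτ h1σ) hxn0)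
    have key : σ * ε * (1 - xs γ ^ (γ + 1)) + τ * (1 - ε) * (1 - σ) * xs γ ^ (γ + 1) =
        G (γ + 1) (xs γ) +
          xs γ * (ε * (1 - xs γ ^ (γ + 1)) + τ * (1 - σ) * xs γ ^ (γ + 1)) := by
      simp only [hGdef, hDdef]; ring
    rw [hF, key, hr, zero_add, mul_div_assoc, div_self hden.ne', mul_one, sub_self]
end

section
/- Let σ, τ, ε be real numbers with 0 < ε ≤ τ and 0 < σ < 1 − ε, and define F₁(x) = [σε(1−x) + τ(1−ε)(1−σ)x]/[ε(1−x) + τ(1−σ)x] − x for 0 < x < 1. Set μ = 1 + σ − τ(1−ε)(1−σ)/ε and x₁ = 2σ / (μ + sqrt(μ² − 4σ(1 − (τ/ε)(1−σ)))). Then x₁ ∈ (σ, 1−ε) and F₁(x₁) = 0; in particular, when τ(1−σ) = ε one has x₁ = σ/(σ+ε). -/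
set_option maxHeartbeats 800000 in
theorem stmt_17 (σ τ ε : ℝ) (hε : 0 < ε) (hετ : ε ≤ τ)
    (hσ0 : 0 < σ) (hσ1 : σ < 1 - ε)
    (F₁ : ℝ → ℝ)
    (hF₁ : ∀ x : ℝ, F₁ x =
      (σ * ε * (1 - x) + τ * (1 - ε) * (1 - σ) * x) /
        (ε * (1 - x) + τ * (1 - σ) * x) - x)
    (μ : ℝ) (hμ : μ = 1 + σ - τ * (1 - ε) * (1 - σ) / ε)
    (x₁ : ℝ)
    (hx₁ : x₁ = 2 * σ /
      (μ + Real.sqrt (μ ^ 2 - 4 * σ * (1 - τ / ε * (1 - σ))))) :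
    x₁ ∈ Set.Ioo σ (1 - ε) ∧ F₁ x₁ = 0 ∧
      (τ * (1 - σ) = ε → x₁ = σ / (σ + ε)) := by
  have h1ε : (0:ℝ) < 1 - ε := lt_trans hσ0 hσ1
  have hτ : 0 < τ := lt_of_lt_of_le hε hετ
  have h1σ : 0 < 1 - σ := by nlinarith
  have hεσ : 0 < 1 - ε - σ := by linarith
  have hεne : ε ≠ 0 := ne_of_gt hε
  have h1εne : (1:ℝ) - ε ≠ 0 := ne_of_gt h1ε
  set s := Real.sqrt (μ ^ 2 - 4 * σ * (1 - τ / ε * (1 - σ))) with hsdef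
  have hsnn : 0 ≤ s := Real.sqrt_nonneg _
  set c := 2 * σ / (1 - ε) with hc
  have hcpos : 0 < c := by positivity
  have hkey : μ ^ 2 - 4 * σ * (1 - τ / ε * (1 - σ))
      = (c - μ)^2 + 4*σ*ε*(1-ε-σ)/(1-ε)^2 := by
    rw [hμ, hc]; field_simp; ring
  have hpos2 : 0 < 4*σ*ε*(1-ε-σ)/(1-ε)^2 := by positivity
  have hDnn : 0 ≤ μ ^ 2 - 4 * σ * (1 - τ / ε * (1 - σ)) := by nlinarith [sq_nonneg (c - μ)]
  have hs2 : s ^ 2 = μ ^ 2 - 4 * σ * (1 - τ / ε * (1 - σ)) := Real.sq_sqrt hDnn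
  have hcs : c - μ < s := by
    have habs : |c - μ| < s := by
      rw [hsdef, show |c - μ| = Real.sqrt ((c-μ)^2) by rw [Real.sqrt_sq_eq_abs]]
      apply Real.sqrt_lt_sqrt (sq_nonneg _)
      nlinarith
    calc c - μ ≤ |c - μ| := le_abs_self _
    _ < s := habs
  have hμs : 0 < μ + s := by linarith
  have hxs : x₁ * (μ + s) = 2 * σ := by rw [hx₁]; field_simp
  have hμ2 : μ < 2 := by
    have : 0 < τ * (1 - ε) * (1 - σ) / ε := by positivity
    rw [hμ]; nlinarith
  have hDlt : μ ^ 2 - 4 * σ * (1 - τ / ε * (1 - σ)) < (2 - μ)^2 := by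
    have ht : (2 - μ)^2 - (μ ^ 2 - 4 * σ * (1 - τ / ε * (1 - σ)))
        = 4*(τ*(1-σ)/ε)*(1-ε-σ) := by rw [hμ]; field_simp; ring
    have : 0 < 4*(τ*(1-σ)/ε)*(1-ε-σ) := by positivity
    linarith
  have hslt : s < 2 - μ := by
    rw [hsdef]
    exact (Real.sqrt_lt' (by linarith)).2 hDlt
  have hlo : σ < x₁ := by
    rw [hx₁, lt_div_iff₀ hμs]; nlinarith
  have hhi : x₁ < 1 - ε := by
    rw [hx₁, div_lt_iff₀ hμs]
    have h1 : (1-ε)*(c-μ) < (1-ε)*s := mul_lt_mul_of_pos_left hcs h1ε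
    have hcc : (1-ε)*c = 2*σ := by rw [hc]; field_simp
    linarith [hcc, (by ring : (1-ε)*(c-μ) = (1-ε)*c - (1-ε)*μ),
      (by ring : (1-ε)*(μ+s) = (1-ε)*μ + (1-ε)*s)]
  have hx₁pos : 0 < x₁ := lt_trans hσ0 hlo
  have hQ2 : (μ+s)^2 * ((1 - τ/ε*(1-σ))*x₁^2 - μ*x₁ + σ) = 0 := by
    linear_combination ((1 - τ/ε*(1-σ))*(x₁*(μ+s) + 2*σ) - μ*(μ+s)) * hxs + σ * hs2
  have hQ : (1 - τ/ε*(1-σ))*x₁^2 - μ*x₁ + σ = 0 := by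
    have := pow_ne_zero 2 (ne_of_gt hμs)
    rcases mul_eq_zero.1 hQ2 with h | h
    · exact absurd h this
    · exact h
  have hF : F₁ x₁ = 0 := by
    have hden : 0 < ε * (1 - x₁) + τ * (1 - σ) * x₁ := by
      have h1 : 0 < ε * (1 - x₁) := mul_pos hε (by linarith)
      have h2 : 0 < τ * (1 - σ) * x₁ := by positivity
      linarith
    rw [hF₁, sub_eq_zero, div_eq_iff (ne_of_gt hden)]
    rw [hμ] at hQ
    field_simp at hQ
    linear_combination hQ
  refine ⟨⟨hlo, hhi⟩, hF, ?_⟩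
  intro h
  have hμv : μ = σ + ε := by
    rw [hμ, show τ*(1-ε)*(1-σ) = ε*(1-ε) by linear_combination (1-ε)*h]
    field_simp; ring
  have hτε : τ/ε*(1-σ) = 1 := by field_simp; linarith
  have hDv : μ ^ 2 - 4 * σ * (1 - τ / ε * (1 - σ)) = (σ+ε)^2 := by
    rw [hμv, hτε]; ring
  have hsv : s = σ + ε := by rw [hsdef, hDv]; exact Real.sqrt_sq (by positivity)
  rw [hx₁, hsv, hμv]
  have : σ + ε ≠ 0 := by positivity
  field_simp; ring
end

section
/- Let σ, τ, ε be real numbers with 0 < ε ≤ τ and 0 < σ < 1 − ε, let F_γ(x) = [σε(1−x^γ) + τ(1−ε)(1−σ)x^γ]/[ε(1−x^γ) + τ(1−σ)x^γ] − x, and let x₁ ∈ (σ, 1−ε) be a root of F₁. Then there exists a root x₂ ∈ (σ, x₁) of F₂ satisfying x₂ < [σε(1−x₁²) + τ(1−ε)(1−σ)x₁²]/[ε(1−x₁²) + τ(1−σ)x₁²]; moreover, if τ(1−σ) = ε, then x₂ = 2σ/(1 + sqrt(1 − 4σ(1−σ−ε))) is a root of F₂ in (σ, x₁). -/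
set_option maxHeartbeats 2000000 in
theorem stmt_18 (σ τ ε : ℝ) (hε : 0 < ε) (hετ : ε ≤ τ)
    (hσ0 : 0 < σ) (hσ1 : σ < 1 - ε)
    (F : ℕ → ℝ → ℝ)
    (hF : ∀ γ : ℕ, ∀ x : ℝ, F γ x =
      (σ * ε * (1 - x ^ γ) + τ * (1 - ε) * (1 - σ) * x ^ γ) /
        (ε * (1 - x ^ γ) + τ * (1 - σ) * x ^ γ) - x)
    (x₁ : ℝ) (hx₁ : x₁ ∈ Set.Ioo σ (1 - ε)) (hroot₁ : F 1 x₁ = 0) :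
    (∃ x₂ ∈ Set.Ioo σ x₁, F 2 x₂ = 0 ∧
      x₂ < (σ * ε * (1 - x₁ ^ 2) + τ * (1 - ε) * (1 - σ) * x₁ ^ 2) /
        (ε * (1 - x₁ ^ 2) + τ * (1 - σ) * x₁ ^ 2)) ∧
    (τ * (1 - σ) = ε →
      F 2 (2 * σ / (1 + Real.sqrt (1 - 4 * σ * (1 - σ - ε)))) = 0 ∧
        2 * σ / (1 + Real.sqrt (1 - 4 * σ * (1 - σ - ε))) ∈ Set.Ioo σ x₁) := by
  have hτ : 0 < τ := lt_of_lt_of_le hε hετ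
  have h1σ : 0 < 1 - σ := by linarith
  have hA : 0 < τ * (1 - σ) := mul_pos hτ h1σ
  have h1σε : 0 < 1 - σ - ε := by linarith
  have hx₁0 : 0 < x₁ := lt_trans hσ0 hx₁.1
  have hx₁1 : x₁ < 1 := by have := hx₁.2; linarith
  -- denominator positivity
  have hden : ∀ y : ℝ, 0 ≤ y → y ≤ 1 → 0 < ε * (1 - y) + τ * (1 - σ) * y := by
    intro y h0 h1
    rcases eq_or_lt_of_le h1 with rfl | h
    · nlinarith
    · nlinarith [mul_nonneg hA.le h0]
  -- strict monotonicity of G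
  have hmono : ∀ y y' : ℝ, 0 ≤ y → y < y' → y' ≤ 1 →
      (σ * ε * (1 - y) + τ * (1 - ε) * (1 - σ) * y) / (ε * (1 - y) + τ * (1 - σ) * y) <
      (σ * ε * (1 - y') + τ * (1 - ε) * (1 - σ) * y') / (ε * (1 - y') + τ * (1 - σ) * y') := by
    intro y y' h0 hlt h1
    rw [div_lt_div_iff₀ (hden y h0 (by linarith)) (hden y' (by linarith) h1)]
    nlinarith [mul_pos (mul_pos hε (mul_pos hτ h1σ)) (mul_pos (sub_pos.2 hlt) h1σε)]
  -- root equation for x₁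
  have hGx₁ : (σ * ε * (1 - x₁) + τ * (1 - ε) * (1 - σ) * x₁) /
      (ε * (1 - x₁) + τ * (1 - σ) * x₁) = x₁ := by
    have := hF 1 x₁
    rw [hroot₁] at this
    simp only [pow_one] at this
    linarith
  set g : ℝ → ℝ := fun x => (σ * ε * (1 - x ^ 2) + τ * (1 - ε) * (1 - σ) * x ^ 2) /
      (ε * (1 - x ^ 2) + τ * (1 - σ) * x ^ 2) - x with hg
  have hcont : ContinuousOn g (Set.Icc σ x₁) := by
    apply ContinuousOn.sub _ continuousOn_id
    apply ContinuousOn.div (by fun_prop) (by fun_prop)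
    intro x hx
    have hx0 : 0 ≤ x := le_trans hσ0.le hx.1
    have hx1 : x ≤ 1 := le_trans hx.2 (by linarith)
    exact ne_of_gt (hden (x ^ 2) (sq_nonneg x) (by nlinarith))
  have hG0 : (σ * ε * (1 - (0:ℝ)) + τ * (1 - ε) * (1 - σ) * 0) /
      (ε * (1 - (0:ℝ)) + τ * (1 - σ) * 0) = σ := by
    field_simp
    ring
  have hgσ : 0 < g σ := by
    have h1 := hmono 0 (σ ^ 2) le_rfl (by positivity) (by nlinarith)
    rw [hG0] at h1
    simp only [hg]
    linarith
  have hgx₁ : g x₁ < 0 := by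
    have h1 := hmono (x₁ ^ 2) x₁ (sq_nonneg _) (by nlinarith) hx₁1.le
    rw [hGx₁] at h1
    simp only [hg]
    linarith
  obtain ⟨x₂, hx₂mem, hx₂eq⟩ := intermediate_value_Ioo' hx₁.1.le hcont
    (Set.mem_Ioo.2 ⟨hgx₁, hgσ⟩ : (0:ℝ) ∈ Set.Ioo (g x₁) (g σ))
  constructor
  · refine ⟨x₂, hx₂mem, ?_, ?_⟩
    · rw [hF 2 x₂]; simpa [hg] using hx₂eq
    · have h1 := hmono (x₂ ^ 2) (x₁ ^ 2) (sq_nonneg _)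
        (by nlinarith [hx₂mem.1, hx₂mem.2]) (by nlinarith)
      simp only [hg] at hx₂eq
      linarith
  · intro h
    set s := Real.sqrt (1 - 4 * σ * (1 - σ - ε)) with hs
    have hdisc : 0 ≤ 1 - 4 * σ * (1 - σ - ε) := by nlinarith [sq_nonneg (σ - (1 - σ - ε))]
    have hs2 : s ^ 2 = 1 - 4 * σ * (1 - σ - ε) := Real.sq_sqrt hdisc
    have hs0 : 0 ≤ s := Real.sqrt_nonneg _
    have hs1 : s < 1 := by nlinarith [mul_pos hσ0 h1σε]
    have h1s : (0:ℝ) < 1 + s := by linarith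
    set x := 2 * σ / (1 + s) with hx
    have hxval : x * (1 + s) = 2 * σ := by
      rw [hx]; exact div_mul_cancel₀ _ (ne_of_gt h1s)
    -- x₁ = σ / (σ + ε)
    have hx₁val : σ = (σ + ε) * x₁ := by
      have hd : ε * (1 - x₁) + τ * (1 - σ) * x₁ = ε := by rw [h]; ring
      have hn : σ * ε * (1 - x₁) + τ * (1 - ε) * (1 - σ) * x₁ = x₁ * ε := by
        have := hGx₁
        rw [hd] at this
        field_simp at this
        linarith
      have hτε : τ * (1 - ε) * (1 - σ) = (1 - ε) * ε := by
        rw [← h]; ring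
      rw [hτε] at hn
      nlinarith
    constructor
    · rw [hF 2 x]
      have hd : ε * (1 - x ^ 2) + τ * (1 - σ) * x ^ 2 = ε := by rw [h]; ring
      have hτε : τ * (1 - ε) * (1 - σ) = (1 - ε) * ε := by rw [← h]; ring
      rw [hd, hτε]
      rw [sub_eq_zero, div_eq_iff (ne_of_gt hε)]
      have key2 : (σ + (1 - σ - ε) * x ^ 2 - x) * (1 + s) ^ 2 = 0 := by
        linear_combination ((1 - σ - ε) * (1 + s) * x - (1 + s) + 2 * σ * (1 - σ - ε)) * hxval
          + σ * hs2
      have key : σ + (1 - σ - ε) * x ^ 2 - x = 0 :=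
        (mul_eq_zero.mp key2).resolve_right (pow_ne_zero _ (ne_of_gt h1s))
      linear_combination ε * key
    · refine Set.mem_Ioo.mpr ⟨?_, ?_⟩
      · rw [hx, lt_div_iff₀ h1s]
        nlinarith
      · rw [hx, div_lt_iff₀ h1s]
        have hst : 2 * σ + 2 * ε - 1 < s := by
          nlinarith [hs2, hs0, mul_pos hε h1σε]
        have h2 : 0 < 1 + s - 2 * (σ + ε) := by linarith
        nlinarith [mul_pos hx₁0 h2, hx₁val]
end
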